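/- arXiv:1703.08592 — 5 statements merged into one kernel-verified Lean document; each statement's English description precedes it below -/
import Mathlib

section
/- For every t > 0 one has (ℓ−2)·φ(t) ≤ t·φ′(t) ≤ (m−2)·φ(t). -/
open Filter Set

/-- For every `t > 0` one has `(ℓ−2)·φ(t) ≤ t·φ′(t) ≤ (m−2)·φ(t)`. -/
theorem stmt_0 (φ : ℝ → ℝ) (ℓ m : ℝ)
    (hφ_pos : ∀ t > 0, 0 < φ t)
    (hφ_C2 : ContDiffOn ℝ 2 φ (Set.Ioi 0))
    (hℓ : 1 < ℓ) (hℓm : ℓ ≤ m)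
    (hφ1₀ : Tendsto (fun t => t * φ t) (nhdsWithin 0 (Set.Ioi 0)) (nhds 0))
    (hφ1top : Tendsto (fun t => t * φ t) atTop atTop)
    (hφ2 : StrictMonoOn (fun t => t * φ t) (Set.Ioi 0))
    (hφ3 : ∀ t > 0,
      (ℓ - 2) * deriv (fun s => s * φ s) t ≤ t * deriv (deriv (fun s => s * φ s)) t ∧
      t * deriv (deriv (fun s => s * φ s)) t ≤ (m - 2) * deriv (fun s => s * φ s) t) :
    ∀ t > 0, (ℓ - 2) * φ t ≤ t * deriv φ t ∧ t * deriv φ t ≤ (m - 2) * φ t := by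
  set ψ : ℝ → ℝ := fun s => s * φ s with hψdef
  have hm : 1 < m := lt_of_lt_of_le hℓ hℓm
  -- basic differentiability facts
  have hφdiff : ∀ t ∈ Ioi (0:ℝ), DifferentiableAt ℝ φ t := fun t ht =>
    (hφ_C2.contDiffAt (isOpen_Ioi.mem_nhds ht)).differentiableAt (by norm_num)
  have hψC2 : ContDiffOn ℝ 2 ψ (Ioi 0) := (contDiff_id.contDiffOn).mul hφ_C2
  have hψ't : ∀ t ∈ Ioi (0:ℝ), HasDerivAt ψ (φ t + t * deriv φ t) t := by
    intro t ht
    have h1 : HasDerivAt φ (deriv φ t) t := (hφdiff t ht).hasDerivAt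
    have := (hasDerivAt_id' t).mul h1
    exact this.congr_deriv (by ring)
  have hψderiv : ∀ t ∈ Ioi (0:ℝ), deriv ψ t = φ t + t * deriv φ t :=
    fun t ht => (hψ't t ht).deriv
  have hψ'C1 : ContDiffOn ℝ 1 (deriv ψ) (Ioi 0) :=
    hψC2.deriv_of_isOpen isOpen_Ioi (by norm_num)
  have hψ'diff : ∀ t ∈ Ioi (0:ℝ), DifferentiableAt ℝ (deriv ψ) t := fun t ht =>
    (hψ'C1.contDiffAt (isOpen_Ioi.mem_nhds ht)).differentiableAt one_ne_zero
  have hψpos : ∀ t ∈ Ioi (0:ℝ), 0 < ψ t := fun t ht => mul_pos ht (hφ_pos t ht)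
  -- deriv ψ is nonnegative on Ioi 0, since ψ is strictly monotone there
  have hψ'nonneg : ∀ t ∈ Ioi (0:ℝ), 0 ≤ deriv ψ t := by
    intro t ht
    have hd : HasDerivWithinAt ψ (deriv ψ t) (Ioi t) t := by
      have := (hψ't t ht).hasDerivWithinAt (s := Ioi t)
      rwa [hψderiv t ht]
    rw [hasDerivWithinAt_iff_tendsto_slope] at hd
    rw [Set.diff_singleton_eq_self (by simp)] at hd
    refine ge_of_tendsto hd ?_
    filter_upwards [self_mem_nhdsWithin] with s hs
    have hst : t < s := hs
    have hs0 : s ∈ Ioi (0:ℝ) := lt_trans ht hst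
    have : ψ t < ψ s := hφ2 ht hs0 hst
    have hpos : (0:ℝ) < s - t := sub_pos.mpr hst
    rw [slope_def_field]
    exact div_nonneg (by linarith) (le_of_lt hpos)
  -- the two auxiliary functions
  set g : ℝ → ℝ := fun s => s * deriv ψ s - (ℓ - 1) * ψ s with hgdef
  set k : ℝ → ℝ := fun s => (m - 1) * ψ s - s * deriv ψ s with hkdef
  have hg't : ∀ t ∈ Ioi (0:ℝ),
      HasDerivAt g (t * deriv (deriv ψ) t - (ℓ - 2) * deriv ψ t) t := by
    intro t ht
    have h1 : HasDerivAt (fun s => s * deriv ψ s)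
        (1 * deriv ψ t + t * deriv (deriv ψ) t) t :=
      (hasDerivAt_id t).mul (hψ'diff t ht).hasDerivAt
    have h2 : HasDerivAt (fun s => (ℓ - 1) * ψ s) ((ℓ - 1) * (φ t + t * deriv φ t)) t :=
      (hψ't t ht).const_mul (ℓ - 1)
    have := h1.sub h2
    exact this.congr_deriv (by rw [hψderiv t ht]; ring)
  have hk't : ∀ t ∈ Ioi (0:ℝ),
      HasDerivAt k ((m - 2) * deriv ψ t - t * deriv (deriv ψ) t) t := by
    intro t ht
    have h1 : HasDerivAt (fun s => s * deriv ψ s)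
        (1 * deriv ψ t + t * deriv (deriv ψ) t) t :=
      (hasDerivAt_id t).mul (hψ'diff t ht).hasDerivAt
    have h2 : HasDerivAt (fun s => (m - 1) * ψ s) ((m - 1) * (φ t + t * deriv φ t)) t :=
      (hψ't t ht).const_mul (m - 1)
    have := h2.sub h1
    exact this.congr_deriv (by rw [hψderiv t ht]; ring)
  have hgmono : MonotoneOn g (Ioi 0) := by
    refine monotoneOn_of_deriv_nonneg (convex_Ioi 0)
      (fun x hx => ((hg't x hx).differentiableAt.continuousAt).continuousWithinAt)
      (fun x hx => ((hg't x (by rwa [interior_Ioi] at hx)).differentiableAt).differentiableWithinAt)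
      ?_
    intro x hx
    rw [interior_Ioi] at hx
    rw [(hg't x hx).deriv]
    have := (hφ3 x hx).1
    linarith
  have hkmono : MonotoneOn k (Ioi 0) := by
    refine monotoneOn_of_deriv_nonneg (convex_Ioi 0)
      (fun x hx => ((hk't x hx).differentiableAt.continuousAt).continuousWithinAt)
      (fun x hx => ((hk't x (by rwa [interior_Ioi] at hx)).differentiableAt).differentiableWithinAt)
      ?_
    intro x hx
    rw [interior_Ioi] at hx
    rw [(hk't x hx).deriv]
    have := (hφ3 x hx).2
    linarith
  -- lower bound: 0 ≤ g t for all t > 0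
  have hg_nonneg : ∀ t ∈ Ioi (0:ℝ), 0 ≤ g t := by
    intro t ht
    have hlim : Tendsto (fun s => -((ℓ - 1) * ψ s)) (nhdsWithin 0 (Ioi 0)) (nhds 0) := by
      have := (hφ1₀.const_mul (ℓ - 1)).neg
      simpa using this
    refine le_of_tendsto hlim ?_
    have hmem : Ioo (0:ℝ) t ∈ nhdsWithin (0:ℝ) (Ioi 0) :=
      Ioo_mem_nhdsGT_of_mem ⟨le_refl 0, ht⟩
    filter_upwards [hmem] with s hs
    have hs0 : s ∈ Ioi (0:ℝ) := hs.1
    have hgs : g s ≤ g t := hgmono hs0 ht (le_of_lt hs.2)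
    have : -((ℓ - 1) * ψ s) ≤ g s := by
      have h1 : 0 ≤ s * deriv ψ s := mul_nonneg (le_of_lt hs.1) (hψ'nonneg s hs0)
      simp only [hgdef]; linarith
    linarith
  -- upper bound: 0 ≤ k t for all t > 0
  have hk_nonneg : ∀ t ∈ Ioi (0:ℝ), 0 ≤ k t := by
    intro t ht
    by_contra hneg
    push_neg at hneg
    set c : ℝ := -k t with hcdef
    have hc : 0 < c := by simp [hcdef]; linarith
    -- on (0, t], s * deriv ψ s ≥ c
    have hkey : ∀ s ∈ Ioc (0:ℝ) t, c ≤ s * deriv ψ s := by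
      intro s hs
      have hks : k s ≤ k t := hkmono hs.1 ht hs.2
      have hψs : 0 < ψ s := hψpos s hs.1
      have hm1 : 0 ≤ (m - 1) * ψ s := mul_nonneg (by linarith) (le_of_lt hψs)
      simp only [hkdef] at hks
      simp only [hcdef, hkdef]
      linarith
    -- G s := ψ s - c * log s is monotone on (0, t]
    set G : ℝ → ℝ := fun s => ψ s - c * Real.log s with hGdef
    have hG't : ∀ s ∈ Ioo (0:ℝ) t, HasDerivAt G (deriv ψ s - c * s⁻¹) s := by
      intro s hs
      have h1 : HasDerivAt ψ (deriv ψ s) s := by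
        have := hψ't s hs.1
        rwa [← hψderiv s hs.1] at this
      exact h1.sub ((Real.hasDerivAt_log (ne_of_gt hs.1)).const_mul c)
    have hGcont : ContinuousOn G (Ioc 0 t) := by
      refine ContinuousOn.sub ?_ ?_
      · intro x hx
        exact (((hψ't x hx.1).differentiableAt).continuousAt).continuousWithinAt
      · exact (continuousOn_const.mul (Real.continuousOn_log.mono (by
          intro x hx; exact ne_of_gt hx.1)))
    have hGmono : MonotoneOn G (Ioc 0 t) := by
      have hint : interior (Ioc (0:ℝ) t) = Ioo 0 t := interior_Ioc
      refine monotoneOn_of_deriv_nonneg (convex_Ioc 0 t) hGcont ?_ ?_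
      · rw [hint]
        exact fun x hx => ((hG't x hx).differentiableAt).differentiableWithinAt
      · rw [hint]
        intro x hx
        rw [(hG't x hx).deriv]
        have h1 : c ≤ x * deriv ψ x := hkey x ⟨hx.1, le_of_lt hx.2⟩
        have h2 : c * x⁻¹ ≤ deriv ψ x := by
          rw [mul_inv_le_iff₀ hx.1]
          linarith [h1]
        linarith
    -- choose ε small enough to get a contradiction
    set ε : ℝ := t * Real.exp (-(ψ t) / c - 1) with hεdef
    have htpos : (0:ℝ) < t := ht
    have hεpos : 0 < ε := mul_pos htpos (Real.exp_pos _)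
    have hεlt : ε ≤ t := by
      have : Real.exp (-(ψ t) / c - 1) ≤ 1 := by
        rw [Real.exp_le_one_iff]
        have : 0 < ψ t := hψpos t ht
        have : 0 < ψ t / c := div_pos this hc
        have hh : -(ψ t) / c = -(ψ t / c) := by ring
        rw [hh]; linarith
      nlinarith
    have hGle : G ε ≤ G t := hGmono ⟨hεpos, hεlt⟩ ⟨htpos, le_refl t⟩ hεlt
    have hlogε : Real.log ε = Real.log t + (-(ψ t) / c - 1) := by
      rw [hεdef, Real.log_mul (ne_of_gt htpos) (ne_of_gt (Real.exp_pos _)), Real.log_exp]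
    have hψε : 0 < ψ ε := hψpos ε hεpos
    simp only [hGdef] at hGle
    rw [hlogε] at hGle
    have hfin : ψ ε ≤ ψ t + c * (-(ψ t) / c - 1) := by linarith
    have : c * (-(ψ t) / c - 1) = -(ψ t) - c := by field_simp
    rw [this] at hfin
    linarith
  -- conclude
  intro t ht
  have hg := hg_nonneg t ht
  have hk := hk_nonneg t ht
  simp only [hgdef, hkdef] at hg hk
  rw [hψderiv t ht] at hg hk
  have hψt : ψ t = t * φ t := rfl
  rw [hψt] at hg hk
  constructor
  · nlinarith [ht, hg]
  · nlinarith [ht, hk]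
end

section
/- Let ℓ* be a real number with m < ℓ*. Then the function Ψ(t) = Φ(t) − (1/ℓ*)·t²·φ(t) is convex on (0,∞); more precisely, for every t > 0 its second derivative satisfies Ψ″(t) ≥ (1 − m/ℓ*)·(tφ(t))′ > 0. -/
open Filter Set MeasureTheory

/-- The N-function `Φ(t) = ∫₀ᵗ s·φ(s) ds`. -/
noncomputable def Phi (φ : ℝ → ℝ) (t : ℝ) : ℝ := ∫ s in (0:ℝ)..t, s * φ s

section Aux

variable {φ : ℝ → ℝ}

/-- Nonnegativity of the derivative of a strictly monotone function on `Ioi 0`. -/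
lemma aux_deriv_nonneg {g : ℝ → ℝ} {t : ℝ} (ht : 0 < t)
    (hmono : StrictMonoOn g (Set.Ioi 0)) (hd : HasDerivAt g (deriv g t) t) :
    0 ≤ deriv g t := by
  have htend : Tendsto (slope g t) (nhdsWithin t (Set.Ioi t)) (nhds (deriv g t)) :=
    (hasDerivAt_iff_tendsto_slope.mp hd).mono_left
      (nhdsWithin_mono _ (fun x hx => ne_of_gt hx))
  refine ge_of_tendsto htend ?_
  filter_upwards [self_mem_nhdsWithin] with x hx
  have hx' : t < x := hx
  have hgx : g t < g x := hmono ht (lt_trans ht hx') hx'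
  have : (0:ℝ) ≤ (g x - g t) / (x - t) :=
    div_nonneg (by linarith) (by linarith)
  simpa [slope_def_field, div_eq_iff, sub_ne_zero] using this

end Aux

/-- for `m < ℓ*`, the function `Ψ(t) = Φ(t) − (1/ℓ*)·t²·φ(t)` is convex on
`(0,∞)` and its second derivative satisfies `Ψ″(t) ≥ (1 − m/ℓ*)·(tφ(t))′ > 0` for `t > 0`. -/
theorem stmt_5 (φ : ℝ → ℝ) (ℓ m : ℝ)
    (hφ_pos : ∀ t > 0, 0 < φ t)
    (hφ_C2 : ContDiffOn ℝ 2 φ (Set.Ioi 0))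
    (hℓ : 1 < ℓ) (hℓm : ℓ ≤ m)
    (hφ1₀ : Tendsto (fun t => t * φ t) (nhdsWithin 0 (Set.Ioi 0)) (nhds 0))
    (hφ1top : Tendsto (fun t => t * φ t) atTop atTop)
    (hφ2 : StrictMonoOn (fun t => t * φ t) (Set.Ioi 0))
    (hφ3 : ∀ t > 0,
      (ℓ - 2) * deriv (fun s => s * φ s) t ≤ t * deriv (deriv (fun s => s * φ s)) t ∧
      t * deriv (deriv (fun s => s * φ s)) t ≤ (m - 2) * deriv (fun s => s * φ s) t)
    (lstar : ℝ) (hlstar : m < lstar) :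
    ConvexOn ℝ (Set.Ioi 0) (fun t => Phi φ t - (1 / lstar) * t ^ 2 * φ t) ∧
    ∀ t > 0,
      (1 - m / lstar) * deriv (fun s => s * φ s) t ≤
        deriv (deriv (fun t => Phi φ t - (1 / lstar) * t ^ 2 * φ t)) t ∧
      0 < (1 - m / lstar) * deriv (fun s => s * φ s) t := by
  have hlpos : (0:ℝ) < lstar := by linarith
  set g : ℝ → ℝ := fun s => s * φ s with hg_def
  set h : ℝ → ℝ := deriv g with hh_def
  have hopen : IsOpen (Set.Ioi (0:ℝ)) := isOpen_Ioi
  -- g is C² on Ioi 0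
  have hgC2 : ContDiffOn ℝ 2 g (Set.Ioi 0) := (contDiff_id.contDiffOn).mul hφ_C2
  have hgd : ∀ t ∈ Set.Ioi (0:ℝ), HasDerivAt g (h t) t := by
    intro t ht
    have : DifferentiableAt ℝ g t :=
      ((hgC2.contDiffAt (hopen.mem_nhds ht)).differentiableAt (by norm_num))
    exact this.hasDerivAt
  have hhC1 : ContDiffOn ℝ 1 h (Set.Ioi 0) :=
    hgC2.deriv_of_isOpen hopen (by norm_num)
  have hhd : ∀ t ∈ Set.Ioi (0:ℝ), HasDerivAt h (deriv h t) t := by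
    intro t ht
    exact ((hhC1.contDiffAt (hopen.mem_nhds ht)).differentiableAt (by norm_num)).hasDerivAt
  -- h ≥ 0 on Ioi 0
  have hh0 : ∀ t ∈ Set.Ioi (0:ℝ), 0 ≤ h t := fun t ht =>
    aux_deriv_nonneg ht hφ2 (hgd t ht)
  -- g is positive on Ioi 0
  have hgpos : ∀ t ∈ Set.Ioi (0:ℝ), 0 < g t := fun t ht =>
    mul_pos ht (hφ_pos t ht)
  -- g continuous on Ioi 0
  have hgcont : ContinuousOn g (Set.Ioi 0) := hgC2.continuousOn
  -- h > 0 on Ioi 0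
  have hhpos : ∀ t ∈ Set.Ioi (0:ℝ), 0 < h t := by
    intro t₀ ht₀
    rcases lt_or_eq_of_le (hh0 t₀ ht₀) with hpos | heq
    · exact hpos
    have h0 : h t₀ = 0 := heq.symm
    exfalso
    set C : ℝ := max 0 ((m - 2) / t₀) with hC_def
    have hC0 : 0 ≤ C := le_max_left _ _
    set F : ℝ → ℝ := fun t => Real.exp (-C * t) * h t with hF_def
    have hFd : ∀ t ∈ Set.Ioi (0:ℝ),
        HasDerivAt F (Real.exp (-C * t) * -C * h t + Real.exp (-C * t) * deriv h t) t := by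
      intro t ht
      have he0 : HasDerivAt (fun t : ℝ => -C * t) (-C) t := by
        simpa using (hasDerivAt_id t).const_mul (-C)
      have he := he0.exp
      exact he.mul (hhd t ht)
    -- derivative of F nonpositive on [t₀, t₀+1]
    have hIio : Set.Icc t₀ (t₀ + 1) ⊆ Set.Ioi 0 := by
      intro x hx; exact lt_of_lt_of_le ht₀ hx.1
    have hFanti : AntitoneOn F (Set.Icc t₀ (t₀ + 1)) := by
      apply antitoneOn_of_deriv_nonpos (convex_Icc _ _)
      · intro x hx
        exact ((hFd x (hIio hx)).continuousAt).continuousWithinAt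
      · intro x hx
        rw [interior_Icc] at hx
        exact ((hFd x (hIio (Set.Ioo_subset_Icc_self hx))).differentiableAt).differentiableWithinAt
      · intro x hx
        rw [interior_Icc] at hx
        have hx0 : x ∈ Set.Ioi (0:ℝ) := hIio (Set.Ioo_subset_Icc_self hx)
        rw [(hFd x hx0).deriv]
        have hx0' : (0:ℝ) < x := hx0
        have hineq : x * deriv h x ≤ (m - 2) * h x := (hφ3 x hx0').2
        have hhx : 0 ≤ h x := hh0 x hx0
        have h1 : deriv h x ≤ (m - 2) / x * h x := by
          rw [div_mul_eq_mul_div, le_div_iff₀ hx0']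
          nlinarith [hineq]
        have h2 : (m - 2) / x ≤ C := by
          rcases le_or_gt 2 m with hm | hm
          · refine le_trans ?_ (le_max_right _ _)
            apply div_le_div_of_nonneg_left (by linarith) ht₀ hx.1.le
          · refine le_trans ?_ hC0
            apply div_nonpos_of_nonpos_of_nonneg (by linarith) hx0'.le
        have h3 : deriv h x ≤ C * h x :=
          le_trans h1 (mul_le_mul_of_nonneg_right h2 hhx)
        have hexp : 0 < Real.exp (-C * x) := Real.exp_pos _
        nlinarith [hexp, h3, hhx]
    -- hence h = 0 on [t₀, t₀+1]
    have hzero : ∀ x ∈ Set.Icc t₀ (t₀ + 1), h x = 0 := by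
      intro x hx
      have hle : F x ≤ F t₀ := hFanti (Set.left_mem_Icc.mpr (by linarith)) hx hx.1
      have hF0 : F t₀ = 0 := by simp [hF_def, h0]
      have hge : 0 ≤ F x :=
        mul_nonneg (Real.exp_pos _).le (hh0 x (hIio hx))
      have hFx : F x = 0 := le_antisymm (hF0 ▸ hle) hge
      have := Real.exp_pos (-C * x)
      have : Real.exp (-C * x) * h x = 0 := hFx
      rcases mul_eq_zero.mp this with h' | h'
      · exact absurd h' (Real.exp_pos _).ne'
      · exact h'
    -- contradiction with strict monotonicity via MVT
    have hlt : t₀ < t₀ + 1 := by linarith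
    obtain ⟨c, hc, hceq⟩ := exists_hasDerivAt_eq_slope g h hlt
      (hgcont.mono hIio) (fun x hx => hgd x (hIio (Set.Ioo_subset_Icc_self hx)))
    have hgc : g t₀ < g (t₀ + 1) := hφ2 ht₀ (Set.mem_Ioi.mpr (by have := Set.mem_Ioi.mp ht₀; linarith)) hlt
    have hc0 : h c = 0 := hzero c (Set.Ioo_subset_Icc_self hc)
    have hpos' : (0:ℝ) < (g (t₀ + 1) - g t₀) / (t₀ + 1 - t₀) :=
      div_pos (by linarith) (by linarith)
    rw [hc0] at hceq
    linarith
  -- derivative of Φ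
  have hPhi : ∀ t ∈ Set.Ioi (0:ℝ), HasDerivAt (Phi φ) (g t) t := by
    intro t ht
    have hInt : IntervalIntegrable g volume 0 t := by
      rw [intervalIntegrable_iff_integrableOn_Ioc_of_le (le_of_lt ht)]
      have hmeas : AEStronglyMeasurable g (volume.restrict (Set.Ioc 0 t)) :=
        (hgcont.mono Set.Ioc_subset_Ioi_self).aestronglyMeasurable measurableSet_Ioc
      refine Integrable.mono' (integrable_const (g t)) hmeas ?_
      rw [ae_restrict_iff' measurableSet_Ioc]
      refine Filter.Eventually.of_forall (fun x hx => ?_)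
      have hx0 : 0 < x := hx.1
      have hgx : 0 < g x := hgpos x hx0
      have hle : g x ≤ g t := by
        rcases lt_or_eq_of_le hx.2 with h' | h'
        · exact (hφ2 hx0 ht h').le
        · rw [h']
      rw [Real.norm_eq_abs, abs_of_pos hgx]
      exact hle
    have hmeasAt : StronglyMeasurableAtFilter g (nhds t) volume :=
      hgcont.stronglyMeasurableAtFilter hopen t ht
    have hcont : ContinuousAt g t := hgcont.continuousAt (hopen.mem_nhds ht)
    exact intervalIntegral.integral_hasDerivAt_right hInt hmeasAt hcont
  -- Ψ and its derivatives
  set Ψ : ℝ → ℝ := fun t => Phi φ t - (1 / lstar) * t ^ 2 * φ t with hΨ_def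
  set Ψ1 : ℝ → ℝ := fun t => g t - 1 / lstar * (g t + t * h t) with hΨ1_def
  have hΨd : ∀ t ∈ Set.Ioi (0:ℝ), HasDerivAt Ψ (Ψ1 t) t := by
    intro t ht
    have h1 : HasDerivAt (fun u => u * g u) (g t + t * h t) t := by
      exact ((hasDerivAt_id' t).mul (hgd t ht)).congr_deriv (by ring)
    have h2 : HasDerivAt (fun u => 1 / lstar * (u * g u)) (1 / lstar * (g t + t * h t)) t :=
      h1.const_mul _
    have h3 := (hPhi t ht).sub h2
    have heq : Ψ = fun u => Phi φ u - 1 / lstar * (u * g u) := by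
      funext u; simp only [hΨ_def, hg_def]; ring
    rw [heq]
    exact h3
  have hΨderiv : Set.EqOn (deriv Ψ) Ψ1 (Set.Ioi 0) := fun t ht => (hΨd t ht).deriv
  have hΨ1d : ∀ t ∈ Set.Ioi (0:ℝ),
      HasDerivAt Ψ1 (h t - 1 / lstar * (2 * h t + t * deriv h t)) t := by
    intro t ht
    have h1 : HasDerivAt (fun u => u * h u) (h t + t * deriv h t) t := by
      exact ((hasDerivAt_id' t).mul (hhd t ht)).congr_deriv (by ring)
    have h2 : HasDerivAt (fun u => g u + u * h u) (h t + (h t + t * deriv h t)) t :=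
      (hgd t ht).add h1
    have h3 := (hgd t ht).sub (h2.const_mul (1 / lstar))
    have : h t - 1 / lstar * (h t + (h t + t * deriv h t))
        = h t - 1 / lstar * (2 * h t + t * deriv h t) := by ring
    rw [this] at h3
    exact h3
  have hderiv2 : ∀ t ∈ Set.Ioi (0:ℝ),
      deriv (deriv Ψ) t = h t - 1 / lstar * (2 * h t + t * deriv h t) := by
    intro t ht
    have hev : deriv Ψ =ᶠ[nhds t] Ψ1 := Filter.eventuallyEq_of_mem (hopen.mem_nhds ht) hΨderiv
    rw [hev.deriv_eq]
    exact (hΨ1d t ht).deriv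
  -- main inequality
  have hineq : ∀ t ∈ Set.Ioi (0:ℝ),
      (1 - m / lstar) * h t ≤ deriv (deriv Ψ) t := by
    intro t ht
    rw [hderiv2 t ht]
    have hφ3t := (hφ3 t ht).2
    have hb : 2 * h t + t * deriv h t ≤ m * h t := by
      have := hh0 t ht; nlinarith [hφ3t]
    have : 1 / lstar * (2 * h t + t * deriv h t) ≤ 1 / lstar * (m * h t) :=
      mul_le_mul_of_nonneg_left hb (by positivity)
    have heq2 : (1 - m / lstar) * h t = h t - 1 / lstar * (m * h t) := by
      field_simp
    rw [heq2]
    linarith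
  have hposfac : 0 < 1 - m / lstar := by
    rw [sub_pos, div_lt_one hlpos]; exact hlstar
  constructor
  · -- convexity
    apply convexOn_of_deriv2_nonneg (convex_Ioi 0)
    · intro t ht
      exact (hΨd t ht).continuousAt.continuousWithinAt
    · rw [interior_Ioi]
      intro t ht
      exact (hΨd t ht).differentiableAt.differentiableWithinAt
    · rw [interior_Ioi]
      intro t ht
      have hev : deriv Ψ =ᶠ[nhds t] Ψ1 := Filter.eventuallyEq_of_mem (hopen.mem_nhds ht) hΨderiv
      exact (hev.differentiableAt_iff.mpr (hΨ1d t ht).differentiableAt).differentiableWithinAt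
    · rw [interior_Ioi]
      intro t ht
      have h1 : (0:ℝ) ≤ (1 - m / lstar) * h t :=
        mul_nonneg hposfac.le (hh0 t ht)
      calc (0:ℝ) ≤ (1 - m / lstar) * h t := h1
        _ ≤ deriv (deriv Ψ) t := hineq t ht
  · intro t ht
    exact ⟨hineq t ht, mul_pos hposfac (hhpos t ht)⟩
end

section
/- For every t > 0 the integral ∫_Ω φ(t h) h² dμ is finite, and there exists a unique t̃ > 0 such that the function m_h(t) = t·∫_Ω φ(t h) h² dμ − t^{ℓ*−1}·B is strictly increasing on (0, t̃] and strictly decreasing on [t̃, ∞). Moreover m_h(t̃) > 0, m_h(t) → 0 as t → 0⁺, and m_h(t) → −∞ as t → ∞. -/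
open Filter Set MeasureTheory

/-- `m_h(t) = t·∫_Ω φ(t h) h² dμ − t^{ℓ*−1}·B`, interpreting the integrand as `0`
where `h = 0`. -/
noncomputable def mh (φ : ℝ → ℝ) {Ω : Type*} [MeasurableSpace Ω] (μ : Measure Ω)
    (h : Ω → ℝ) (lstar B t : ℝ) : ℝ :=
  t * (∫ x, (if h x = 0 then 0 else φ (t * h x) * h x ^ 2) ∂μ) - t ^ (lstar - 1) * B

private lemma stmt9_rpow_tendsto_zero {c : ℝ} (hc : 0 < c) :
    Tendsto (fun t : ℝ => t ^ c) (nhdsWithin 0 (Set.Ioi 0)) (nhds 0) := by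
  have h0 : ((0:ℝ) ^ c) = 0 := Real.zero_rpow hc.ne'
  have := (Real.continuousAt_rpow_const 0 c (Or.inr hc.le)).tendsto
  rw [h0] at this
  exact this.mono_left nhdsWithin_le_nhds

private lemma stmt9_rpow_split {t : ℝ} (ht : 0 < t) (c d : ℝ) (e : ℝ) (he : e = c + d) :
    t ^ e = t ^ c * t ^ d := by rw [he, Real.rpow_add ht]

private lemma stmt9_cross_up {f : ℝ → ℝ} {c : ℝ}
    (hdiff : ∀ t > 0, DifferentiableAt ℝ f t)
    (hineq : ∀ t > 0, t * deriv f t ≤ c * f t) :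
    ∀ a b : ℝ, 0 < a → a ≤ b → f b * a ^ c ≤ f a * b ^ c := by
  have hder : ∀ t : ℝ, 0 < t →
      HasDerivAt (fun t => f t * t ^ (-c))
        (deriv f t * t ^ (-c) + f t * (-c * t ^ (-c - 1))) t := by
    intro t ht
    exact ((hdiff t ht).hasDerivAt).mul (Real.hasDerivAt_rpow_const (Or.inl ht.ne'))
  have key : AntitoneOn (fun t => f t * t ^ (-c)) (Set.Ioi 0) := by
    apply antitoneOn_of_deriv_nonpos (convex_Ioi 0)
    · intro t ht
      exact (hder t ht).differentiableAt.continuousAt.continuousWithinAt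
    · rw [interior_Ioi]
      intro t ht
      exact (hder t ht).differentiableAt.differentiableWithinAt
    · rw [interior_Ioi]
      intro t ht
      rw [(hder t ht).deriv]
      have hsplit : (t:ℝ) ^ (-c) = t ^ (-c - 1) * t ^ (1:ℝ) :=
        stmt9_rpow_split ht _ _ _ (by ring)
      rw [Real.rpow_one] at hsplit
      have heq : deriv f t * t ^ (-c) + f t * (-c * t ^ (-c - 1))
          = t ^ (-c - 1) * (t * deriv f t - c * f t) := by
        rw [hsplit]; ring
      rw [heq]
      have h1 : (0:ℝ) ≤ t ^ (-c - 1) := Real.rpow_nonneg ht.le _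
      have h2 : t * deriv f t - c * f t ≤ 0 := by linarith [hineq t ht]
      nlinarith
  intro a b ha hab
  have hb : 0 < b := lt_of_lt_of_le ha hab
  have h2 : f b * b ^ (-c) ≤ f a * a ^ (-c) := key (mem_Ioi.mpr ha) (mem_Ioi.mpr hb) hab
  rw [Real.rpow_neg hb.le, Real.rpow_neg ha.le, ← div_eq_mul_inv, ← div_eq_mul_inv,
    div_le_div_iff₀ (Real.rpow_pos_of_pos hb c) (Real.rpow_pos_of_pos ha c)] at h2
  exact h2

private lemma stmt9_cross_down {f : ℝ → ℝ} {c : ℝ}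
    (hdiff : ∀ t > 0, DifferentiableAt ℝ f t)
    (hineq : ∀ t > 0, c * f t ≤ t * deriv f t) :
    ∀ a b : ℝ, 0 < a → a ≤ b → f a * b ^ c ≤ f b * a ^ c := by
  intro a b ha hab
  have h := stmt9_cross_up (f := fun t => -f t) (c := c)
    (fun t ht => (hdiff t ht).neg)
    (fun t ht => by
      rw [deriv.fun_neg]
      show t * -(deriv f t) ≤ c * (-f t)
      have := hineq t ht; linarith)
    a b ha hab
  simp only [neg_mul] at h
  linarith

private lemma stmt9_meas_indicator {f : ℝ → ℝ} (hf : ContinuousOn f (Set.Ioi 0)) :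
    Measurable (Set.indicator (Set.Ioi (0:ℝ)) f) := by
  classical
  have hp : Measurable (Set.piecewise (Set.Ioi (0:ℝ)) f (fun _ => 0)) :=
    hf.measurable_piecewise continuousOn_const measurableSet_Ioi
  have he : Set.indicator (Set.Ioi (0:ℝ)) f = Set.piecewise (Set.Ioi (0:ℝ)) f (fun _ => 0) := by
    funext s
    by_cases hs : s ∈ Set.Ioi (0:ℝ) <;> simp [Set.indicator, Set.piecewise, hs]
  rw [he]; exact hp

/-- pointwise cross inequality transported to integrand level -/
private lemma stmt9_pt_cross {g gi : ℝ → ℝ} {c : ℝ}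
    (hcross : ∀ a b : ℝ, 0 < a → a ≤ b → (b * g b) * a ^ c ≤ (a * g a) * b ^ c)
    (hgi : ∀ s : ℝ, 0 < s → gi s = g s)
    {s t u : ℝ} (hs : 0 < s) (hst : s ≤ t) (hu : 0 ≤ u) :
    ((t * u) * gi (t * u) * u) * s ^ c ≤ ((s * u) * gi (s * u) * u) * t ^ c := by
  have ht : 0 < t := lt_of_lt_of_le hs hst
  rcases eq_or_lt_of_le hu with hu0 | hupos
  · rw [← hu0]; simp
  · have h1 := hcross (s*u) (t*u) (mul_pos hs hupos)
      (mul_le_mul_of_nonneg_right hst hupos.le)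
    rw [hgi _ (mul_pos ht hupos), hgi _ (mul_pos hs hupos)]
    rw [Real.mul_rpow hs.le hupos.le, Real.mul_rpow ht.le hupos.le] at h1
    have hup : (0:ℝ) < u ^ c := Real.rpow_pos_of_pos hupos _
    have h2 : ((t * u) * g (t*u) * u * s ^ c) * u ^ c
        ≤ ((s * u) * g (s*u) * u * t ^ c) * u ^ c := by
      have h2' := mul_le_mul_of_nonneg_right h1 hupos.le
      calc ((t * u) * g (t*u) * u * s ^ c) * u ^ c
          = (t * u * g (t*u)) * (s ^ c * u ^ c) * u := by ring
        _ ≤ (s * u * g (s*u)) * (t ^ c * u ^ c) * u := h2'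
        _ = ((s * u) * g (s*u) * u * t ^ c) * u ^ c := by ring
    exact le_of_mul_le_mul_right h2 hup

private lemma stmt9_pt_cross_down {g gi : ℝ → ℝ} {c : ℝ}
    (hcross : ∀ a b : ℝ, 0 < a → a ≤ b → (a * g a) * b ^ c ≤ (b * g b) * a ^ c)
    (hgi : ∀ s : ℝ, 0 < s → gi s = g s)
    {s t u : ℝ} (hs : 0 < s) (hst : s ≤ t) (hu : 0 ≤ u) :
    ((s * u) * gi (s * u) * u) * t ^ c ≤ ((t * u) * gi (t * u) * u) * s ^ c := by
  have ht : 0 < t := lt_of_lt_of_le hs hst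
  rcases eq_or_lt_of_le hu with hu0 | hupos
  · rw [← hu0]; simp
  · have h1 := hcross (s*u) (t*u) (mul_pos hs hupos)
      (mul_le_mul_of_nonneg_right hst hupos.le)
    rw [hgi _ (mul_pos ht hupos), hgi _ (mul_pos hs hupos)]
    rw [Real.mul_rpow hs.le hupos.le, Real.mul_rpow ht.le hupos.le] at h1
    have hup : (0:ℝ) < u ^ c := Real.rpow_pos_of_pos hupos _
    have h2 : ((s * u) * g (s*u) * u * t ^ c) * u ^ c
        ≤ ((t * u) * g (t*u) * u * s ^ c) * u ^ c := by
      have h2' := mul_le_mul_of_nonneg_right h1 hupos.le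
      calc ((s * u) * g (s*u) * u * t ^ c) * u ^ c
          = (s * u * g (s*u)) * (t ^ c * u ^ c) * u := by ring
        _ ≤ (t * u * g (t*u)) * (s ^ c * u ^ c) * u := h2'
        _ = ((t * u) * g (t*u) * u * s ^ c) * u ^ c := by ring
    exact le_of_mul_le_mul_right h2 hup


set_option maxHeartbeats 4000000 in
/-- all the integrals `∫_Ω φ(t h) h² dμ` (for `t > 0`) are finite, and there is
a unique `t̃ > 0` such that `m_h` is strictly increasing on `(0, t̃]` and strictly
decreasing on `[t̃, ∞)`; moreover `m_h(t̃) > 0`, `m_h(t) → 0` as `t → 0⁺`, and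
`m_h(t) → −∞` as `t → ∞`. -/
theorem stmt_9 (φ : ℝ → ℝ) (ℓ m : ℝ)
    (hφ_pos : ∀ t > 0, 0 < φ t)
    (hφ_C2 : ContDiffOn ℝ 2 φ (Set.Ioi 0))
    (hℓ : 1 < ℓ) (hℓm : ℓ ≤ m)
    (hφ1₀ : Tendsto (fun t => t * φ t) (nhdsWithin 0 (Set.Ioi 0)) (nhds 0))
    (hφ1top : Tendsto (fun t => t * φ t) atTop atTop)
    (hφ2 : StrictMonoOn (fun t => t * φ t) (Set.Ioi 0))
    (hφ3 : ∀ t > 0,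
      (ℓ - 2) * deriv (fun s => s * φ s) t ≤ t * deriv (deriv (fun s => s * φ s)) t ∧
      t * deriv (deriv (fun s => s * φ s)) t ≤ (m - 2) * deriv (fun s => s * φ s) t)
    (lstar : ℝ) (hlstar : m < lstar)
    {Ω : Type*} [MeasurableSpace Ω] (μ : Measure Ω) (h : Ω → ℝ)
    (h_meas : Measurable h) (h_nonneg : ∀ x, 0 ≤ h x)
    (h_int : Integrable (fun x => if h x = 0 then 0 else φ (h x) * h x ^ 2) μ)
    (h_pos : 0 < ∫ x, (if h x = 0 then 0 else φ (h x) * h x ^ 2) ∂μ)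
    (B : ℝ) (hB : 0 < B) :
    (∀ t > 0, Integrable (fun x => if h x = 0 then 0 else φ (t * h x) * h x ^ 2) μ) ∧
    (∃! ttil : ℝ, 0 < ttil ∧
      StrictMonoOn (mh φ μ h lstar B) (Set.Ioc 0 ttil) ∧
      StrictAntiOn (mh φ μ h lstar B) (Set.Ici ttil) ∧
      0 < mh φ μ h lstar B ttil) ∧
    Tendsto (mh φ μ h lstar B) (nhdsWithin 0 (Set.Ioi 0)) (nhds 0) ∧
    Tendsto (mh φ μ h lstar B) atTop atBot := by
  classical
  have hm1 : (1:ℝ) < m := lt_of_lt_of_le hℓ hℓm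
  have hℓ1 : (0:ℝ) < ℓ - 1 := by linarith
  have hm1' : (0:ℝ) < m - 1 := by linarith
  have hls : (0:ℝ) < lstar - 1 := by linarith
  have hlsm : (0:ℝ) < lstar - m := by linarith
  -- smoothness
  have hΦC2 : ContDiffOn ℝ 2 (fun s : ℝ => s * φ s) (Set.Ioi 0) := contDiffOn_id.mul hφ_C2
  have hΦdiff : ∀ t > (0:ℝ), DifferentiableAt ℝ (fun s : ℝ => s * φ s) t := fun t ht =>
    (hΦC2.differentiableOn (by norm_num)).differentiableAt (Ioi_mem_nhds ht)
  set dΦ := deriv (fun s : ℝ => s * φ s) with hdΦdef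
  have hdΦC1 : ContDiffOn ℝ 1 dΦ (Set.Ioi 0) :=
    hΦC2.deriv_of_isOpen isOpen_Ioi (by norm_num)
  have hdΦdiff : ∀ t > (0:ℝ), DifferentiableAt ℝ dΦ t := fun t ht =>
    (hdΦC1.differentiableOn (by norm_num)).differentiableAt (Ioi_mem_nhds ht)
  have hΦhas : ∀ t : ℝ, 0 < t → HasDerivAt (fun s : ℝ => s * φ s) (dΦ t) t := fun t ht =>
    (hΦdiff t ht).hasDerivAt
  -- cross inequalities for dΦ
  have C1 : ∀ a b : ℝ, 0 < a → a ≤ b → dΦ b * a ^ (m-2) ≤ dΦ a * b ^ (m-2) :=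
    stmt9_cross_up hdΦdiff (fun t ht => (hφ3 t ht).2)
  have C2 : ∀ a b : ℝ, 0 < a → a ≤ b → dΦ a * b ^ (ℓ-2) ≤ dΦ b * a ^ (ℓ-2) :=
    stmt9_cross_down hdΦdiff (fun t ht => (hφ3 t ht).1)
  -- derivative of s * dΦ s
  have htΦ'has : ∀ t : ℝ, 0 < t →
      HasDerivAt (fun s => s * dΦ s) (1 * dΦ t + t * deriv dΦ t) t := by
    intro t ht
    exact (hasDerivAt_id t).mul ((hdΦdiff t ht).hasDerivAt)
  -- limit of t * dΦ t at 0⁺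
  have hlim1 : Tendsto (fun t : ℝ => t * dΦ t) (nhdsWithin 0 (Set.Ioi 0)) (nhds 0) := by
    have hlo : ∀ᶠ t in nhdsWithin 0 (Set.Ioi 0), dΦ 1 * t ^ (m-1) ≤ t * dΦ t := by
      filter_upwards [Ioo_mem_nhdsGT_of_mem (⟨le_refl (0:ℝ), zero_lt_one⟩ : (0:ℝ) ∈ Ico (0:ℝ) 1)]
        with t ht
      have h1 := C1 t 1 ht.1 ht.2.le
      rw [Real.one_rpow, mul_one] at h1
      have h2 := mul_le_mul_of_nonneg_left h1 ht.1.le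
      have h4 : t ^ (m-1) = t ^ (m-2) * t := by
        have := stmt9_rpow_split ht.1 (m-2) 1 (m-1) (by ring)
        rwa [Real.rpow_one] at this
      calc dΦ 1 * t ^ (m-1) = t * (dΦ 1 * t ^ (m-2)) := by rw [h4]; ring
        _ ≤ t * dΦ t := h2
    have hhi : ∀ᶠ t in nhdsWithin 0 (Set.Ioi 0), t * dΦ t ≤ dΦ 1 * t ^ (ℓ-1) := by
      filter_upwards [Ioo_mem_nhdsGT_of_mem (⟨le_refl (0:ℝ), zero_lt_one⟩ : (0:ℝ) ∈ Ico (0:ℝ) 1)]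
        with t ht
      have h1 := C2 t 1 ht.1 ht.2.le
      rw [Real.one_rpow, mul_one] at h1
      have h2 := mul_le_mul_of_nonneg_left h1 ht.1.le
      have h4 : t ^ (ℓ-1) = t ^ (ℓ-2) * t := by
        have := stmt9_rpow_split ht.1 (ℓ-2) 1 (ℓ-1) (by ring)
        rwa [Real.rpow_one] at this
      calc t * dΦ t ≤ t * (dΦ 1 * t ^ (ℓ-2)) := h2
        _ = dΦ 1 * t ^ (ℓ-1) := by rw [h4]; ring
    have t1 : Tendsto (fun t : ℝ => dΦ 1 * t ^ (m-1)) (nhdsWithin 0 (Set.Ioi 0)) (nhds 0) := by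
      simpa using (stmt9_rpow_tendsto_zero hm1').const_mul (dΦ 1)
    have t2 : Tendsto (fun t : ℝ => dΦ 1 * t ^ (ℓ-1)) (nhdsWithin 0 (Set.Ioi 0)) (nhds 0) := by
      simpa using (stmt9_rpow_tendsto_zero hℓ1).const_mul (dΦ 1)
    exact tendsto_of_tendsto_of_tendsto_of_le_of_le' t1 t2 hlo hhi
  -- the fundamental two-sided estimate : (ℓ-1) Φ ≤ t Φ' ≤ (m-1) Φ
  have rUP : ∀ t : ℝ, 0 < t → t * dΦ t ≤ (m-1) * (t * φ t) := by
    have hr_has : ∀ t : ℝ, 0 < t →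
        HasDerivAt (fun s => s * dΦ s - (m-1) * (s * φ s))
          (1 * dΦ t + t * deriv dΦ t - (m-1) * dΦ t) t := fun t ht =>
      (htΦ'has t ht).sub ((hΦhas t ht).const_mul (m-1))
    have hr_anti : AntitoneOn (fun s => s * dΦ s - (m-1) * (s * φ s)) (Set.Ioi 0) := by
      apply antitoneOn_of_deriv_nonpos (convex_Ioi 0)
      · intro t ht
        exact (hr_has t ht).differentiableAt.continuousAt.continuousWithinAt
      · rw [interior_Ioi]; intro t ht
        exact (hr_has t ht).differentiableAt.differentiableWithinAt
      · rw [interior_Ioi]; intro t ht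
        rw [(hr_has t ht).deriv]
        have := (hφ3 t ht).2
        linarith
    have hr_tend : Tendsto (fun s : ℝ => s * dΦ s - (m-1) * (s * φ s))
        (nhdsWithin 0 (Set.Ioi 0)) (nhds 0) := by
      simpa using hlim1.sub (hφ1₀.const_mul (m-1))
    intro t ht
    have hev : ∀ᶠ s in nhdsWithin 0 (Set.Ioi 0),
        t * dΦ t - (m-1) * (t * φ t) ≤ s * dΦ s - (m-1) * (s * φ s) := by
      filter_upwards [Ioo_mem_nhdsGT_of_mem (⟨le_refl (0:ℝ), ht⟩ : (0:ℝ) ∈ Ico (0:ℝ) t)]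
        with s hs
      exact hr_anti (mem_Ioi.mpr hs.1) (mem_Ioi.mpr ht) hs.2.le
    have := ge_of_tendsto hr_tend hev
    linarith
  have rDOWN : ∀ t : ℝ, 0 < t → (ℓ-1) * (t * φ t) ≤ t * dΦ t := by
    have hr_has : ∀ t : ℝ, 0 < t →
        HasDerivAt (fun s => s * dΦ s - (ℓ-1) * (s * φ s))
          (1 * dΦ t + t * deriv dΦ t - (ℓ-1) * dΦ t) t := fun t ht =>
      (htΦ'has t ht).sub ((hΦhas t ht).const_mul (ℓ-1))
    have hr_mono : MonotoneOn (fun s => s * dΦ s - (ℓ-1) * (s * φ s)) (Set.Ioi 0) := by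
      apply monotoneOn_of_deriv_nonneg (convex_Ioi 0)
      · intro t ht
        exact (hr_has t ht).differentiableAt.continuousAt.continuousWithinAt
      · rw [interior_Ioi]; intro t ht
        exact (hr_has t ht).differentiableAt.differentiableWithinAt
      · rw [interior_Ioi]; intro t ht
        rw [(hr_has t ht).deriv]
        have := (hφ3 t ht).1
        linarith
    have hr_tend : Tendsto (fun s : ℝ => s * dΦ s - (ℓ-1) * (s * φ s))
        (nhdsWithin 0 (Set.Ioi 0)) (nhds 0) := by
      simpa using hlim1.sub (hφ1₀.const_mul (ℓ-1))
    intro t ht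
    have hev : ∀ᶠ s in nhdsWithin 0 (Set.Ioi 0),
        s * dΦ s - (ℓ-1) * (s * φ s) ≤ t * dΦ t - (ℓ-1) * (t * φ t) := by
      filter_upwards [Ioo_mem_nhdsGT_of_mem (⟨le_refl (0:ℝ), ht⟩ : (0:ℝ) ∈ Ico (0:ℝ) t)]
        with s hs
      exact hr_mono (mem_Ioi.mpr hs.1) (mem_Ioi.mpr ht) hs.2.le
    have := le_of_tendsto hr_tend hev
    linarith
  have hΦpos : ∀ t : ℝ, 0 < t → 0 < t * φ t := fun t ht => mul_pos ht (hφ_pos t ht)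
  have hdΦpos : ∀ t : ℝ, 0 < t → 0 < dΦ t := by
    intro t ht
    have h1 := rDOWN t ht
    have h2 := hΦpos t ht
    nlinarith
  -- cross inequalities for Φ and for t ↦ t * dΦ t
  have CΦup : ∀ a b : ℝ, 0 < a → a ≤ b → (b * φ b) * a ^ (m-1) ≤ (a * φ a) * b ^ (m-1) := by
    apply stmt9_cross_up hΦdiff
    intro t ht
    exact rUP t ht
  have CΦdown : ∀ a b : ℝ, 0 < a → a ≤ b → (a * φ a) * b ^ (ℓ-1) ≤ (b * φ b) * a ^ (ℓ-1) := by
    apply stmt9_cross_down hΦdiff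
    intro t ht
    exact rDOWN t ht
  have CPup : ∀ a b : ℝ, 0 < a → a ≤ b → (b * dΦ b) * a ^ (m-1) ≤ (a * dΦ a) * b ^ (m-1) := by
    apply stmt9_cross_up (f := fun s => s * dΦ s)
      (fun t ht => (htΦ'has t ht).differentiableAt)
    intro t ht
    rw [(htΦ'has t ht).deriv]
    show t * (1 * dΦ t + t * deriv dΦ t) ≤ (m-1) * (t * dΦ t)
    have h3 := (hφ3 t ht).2
    nlinarith [mul_le_mul_of_nonneg_left h3 ht.le]
  -- indicator versions
  set ψ := Set.indicator (Set.Ioi (0:ℝ)) φ with hψdef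
  set dΦi := Set.indicator (Set.Ioi (0:ℝ)) dΦ with hdΦidef
  have hψ_of_pos : ∀ s : ℝ, 0 < s → ψ s = φ s := fun s hs => Set.indicator_of_mem hs φ
  have hdΦi_of_pos : ∀ s : ℝ, 0 < s → dΦi s = dΦ s := fun s hs => Set.indicator_of_mem hs dΦ
  have hψ_nonneg : ∀ s : ℝ, 0 ≤ ψ s := by
    intro s
    by_cases hs : s ∈ Set.Ioi (0:ℝ)
    · rw [hψdef, Set.indicator_of_mem hs]; exact (hφ_pos s hs).le
    · rw [hψdef, Set.indicator_of_notMem hs]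
  have hdΦi_nonneg : ∀ s : ℝ, 0 ≤ dΦi s := by
    intro s
    by_cases hs : s ∈ Set.Ioi (0:ℝ)
    · rw [hdΦidef, Set.indicator_of_mem hs]; exact (hdΦpos s hs).le
    · rw [hdΦidef, Set.indicator_of_notMem hs]
  have hψmeas : Measurable ψ := stmt9_meas_indicator hφ_C2.continuousOn
  have hdΦimeas : Measurable dΦi := stmt9_meas_indicator hdΦC1.continuousOn
  -- key rewriting of the statement's integrand
  have hkey : ∀ t : ℝ, 0 < t → ∀ x,
      (if h x = 0 then 0 else φ (t * h x) * h x ^ 2) = ψ (t * h x) * h x ^ 2 := by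
    intro t ht x
    by_cases hx : h x = 0
    · simp [hx]
    · have hxpos : 0 < h x := lt_of_le_of_ne (h_nonneg x) (Ne.symm hx)
      rw [if_neg hx, hψ_of_pos _ (mul_pos ht hxpos)]
  -- measurability of integrands
  have hmeasN : ∀ t : ℝ, Measurable (fun x => (t * h x) * ψ (t * h x) * h x) := fun t =>
    (((h_meas.const_mul t).mul (hψmeas.comp (h_meas.const_mul t))).mul h_meas)
  have hmeasQ : ∀ t : ℝ, Measurable (fun x => (t * h x) * dΦi (t * h x) * h x) := fun t =>
    (((h_meas.const_mul t).mul (hdΦimeas.comp (h_meas.const_mul t))).mul h_meas)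
  have hmeasND : ∀ t : ℝ, Measurable (fun x => dΦi (t * h x) * h x ^ 2) := fun t =>
    ((hdΦimeas.comp (h_meas.const_mul t)).mul (h_meas.pow_const 2))
  -- nonnegativity of integrands
  have hNnn : ∀ t : ℝ, 0 < t → ∀ x, 0 ≤ (t * h x) * ψ (t * h x) * h x := fun t ht x =>
    mul_nonneg (mul_nonneg (mul_nonneg ht.le (h_nonneg x)) (hψ_nonneg _)) (h_nonneg x)
  have hQnn : ∀ t : ℝ, 0 < t → ∀ x, 0 ≤ (t * h x) * dΦi (t * h x) * h x := fun t ht x =>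
    mul_nonneg (mul_nonneg (mul_nonneg ht.le (h_nonneg x)) (hdΦi_nonneg _)) (h_nonneg x)
  have hNDnn : ∀ t : ℝ, ∀ x, 0 ≤ dΦi (t * h x) * h x ^ 2 := fun t x =>
    mul_nonneg (hdΦi_nonneg _) (sq_nonneg _)
  -- base integrable function
  have h_int' : Integrable (fun x => ψ (h x) * h x ^ 2) μ := by
    refine h_int.congr (ae_of_all _ fun x => ?_)
    have := hkey 1 one_pos x
    simpa [one_mul] using this
  have hbase : Integrable (fun x => ((1:ℝ) * h x) * ψ ((1:ℝ) * h x) * h x) μ := by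
    refine h_int'.congr (ae_of_all _ fun x => ?_)
    simp only [one_mul]
    ring
  -- integrability of the N-integrand for all t > 0
  have hNint : ∀ t : ℝ, 0 < t →
      Integrable (fun x => (t * h x) * ψ (t * h x) * h x) μ := by
    intro t ht
    rcases le_total t 1 with h1 | h1
    · refine Integrable.mono' (hbase.const_mul (t ^ (ℓ-1))) (hmeasN t).aestronglyMeasurable
        (ae_of_all _ fun x => ?_)
      rw [Real.norm_eq_abs, abs_of_nonneg (hNnn t ht x)]
      have := stmt9_pt_cross_down CΦdown hψ_of_pos ht h1 (h_nonneg x)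
      rw [Real.one_rpow, mul_one] at this
      linarith
    · refine Integrable.mono' (hbase.const_mul (t ^ (m-1))) (hmeasN t).aestronglyMeasurable
        (ae_of_all _ fun x => ?_)
      rw [Real.norm_eq_abs, abs_of_nonneg (hNnn t ht x)]
      have := stmt9_pt_cross CΦup hψ_of_pos one_pos h1 (h_nonneg x)
      rw [Real.one_rpow, mul_one] at this
      linarith
  -- pointwise comparison between the Q-integrand and the N-integrand
  have hQNpt : ∀ t : ℝ, 0 < t → ∀ x,
      (ℓ-1) * ((t * h x) * ψ (t * h x) * h x) ≤ (t * h x) * dΦi (t * h x) * h x ∧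
      (t * h x) * dΦi (t * h x) * h x ≤ (m-1) * ((t * h x) * ψ (t * h x) * h x) := by
    intro t ht x
    rcases eq_or_lt_of_le (h_nonneg x) with hx0 | hx
    · constructor <;> rw [← hx0] <;> simp
    · have hpos := mul_pos ht hx
      rw [hψ_of_pos _ hpos, hdΦi_of_pos _ hpos]
      have h1 := rDOWN (t * h x) hpos
      have h2 := rUP (t * h x) hpos
      constructor
      · nlinarith [mul_le_mul_of_nonneg_right h1 hx.le]
      · nlinarith [mul_le_mul_of_nonneg_right h2 hx.le]
  have hQint : ∀ t : ℝ, 0 < t →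
      Integrable (fun x => (t * h x) * dΦi (t * h x) * h x) μ := by
    intro t ht
    refine Integrable.mono' ((hNint t ht).const_mul (m-1)) (hmeasQ t).aestronglyMeasurable
      (ae_of_all _ fun x => ?_)
    rw [Real.norm_eq_abs, abs_of_nonneg (hQnn t ht x)]
    exact (hQNpt t ht x).2
  have hNDint : ∀ t : ℝ, 0 < t →
      Integrable (fun x => dΦi (t * h x) * h x ^ 2) μ := by
    intro t ht
    refine ((hQint t ht).const_mul t⁻¹).congr (ae_of_all _ fun x => ?_)
    field_simp
  -- the integral functions
  set N : ℝ → ℝ := fun t => ∫ x, (t * h x) * ψ (t * h x) * h x ∂μ with hNdef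
  set NQ : ℝ → ℝ := fun t => ∫ x, (t * h x) * dΦi (t * h x) * h x ∂μ with hNQdef
  set ND : ℝ → ℝ := fun t => ∫ x, dΦi (t * h x) * h x ^ 2 ∂μ with hNDdef
  have hNG : ∀ t : ℝ, 0 < t → t * (∫ x, ψ (t * h x) * h x ^ 2 ∂μ) = N t := by
    intro t ht
    rw [hNdef]
    simp only
    rw [← MeasureTheory.integral_const_mul]
    exact integral_congr_ae (ae_of_all _ fun x => by ring)
  have hQeq : ∀ t : ℝ, 0 < t → NQ t = t * ND t := by
    intro t ht
    rw [hNQdef, hNDdef]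
    simp only
    rw [← MeasureTheory.integral_const_mul]
    exact integral_congr_ae (ae_of_all _ fun x => by ring)
  -- cross inequalities at integral level
  have hNcrossUP : ∀ s t : ℝ, 0 < s → s ≤ t → N t * s ^ (m-1) ≤ N s * t ^ (m-1) := by
    intro s t hs hst
    have ht : 0 < t := lt_of_lt_of_le hs hst
    rw [hNdef]; simp only
    rw [← MeasureTheory.integral_mul_const, ← MeasureTheory.integral_mul_const]
    exact integral_mono ((hNint t ht).mul_const _) ((hNint s hs).mul_const _)
      (fun x => stmt9_pt_cross CΦup hψ_of_pos hs hst (h_nonneg x))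
  have hNcrossDOWN : ∀ s t : ℝ, 0 < s → s ≤ t → N s * t ^ (ℓ-1) ≤ N t * s ^ (ℓ-1) := by
    intro s t hs hst
    have ht : 0 < t := lt_of_lt_of_le hs hst
    rw [hNdef]; simp only
    rw [← MeasureTheory.integral_mul_const, ← MeasureTheory.integral_mul_const]
    exact integral_mono ((hNint s hs).mul_const _) ((hNint t ht).mul_const _)
      (fun x => stmt9_pt_cross_down CΦdown hψ_of_pos hs hst (h_nonneg x))
  have hQcrossUP : ∀ s t : ℝ, 0 < s → s ≤ t → NQ t * s ^ (m-1) ≤ NQ s * t ^ (m-1) := by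
    intro s t hs hst
    have ht : 0 < t := lt_of_lt_of_le hs hst
    rw [hNQdef]; simp only
    rw [← MeasureTheory.integral_mul_const, ← MeasureTheory.integral_mul_const]
    exact integral_mono ((hQint t ht).mul_const _) ((hQint s hs).mul_const _)
      (fun x => stmt9_pt_cross CPup hdΦi_of_pos hs hst (h_nonneg x))
  -- positivity
  have hN1pos : 0 < N 1 := by
    have he : N 1 = 1 * ∫ x, ψ ((1:ℝ) * h x) * h x ^ 2 ∂μ := (hNG 1 one_pos).symm
    rw [he, one_mul]
    have : (∫ x, ψ ((1:ℝ) * h x) * h x ^ 2 ∂μ)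
        = ∫ x, (if h x = 0 then 0 else φ (h x) * h x ^ 2) ∂μ := by
      refine integral_congr_ae (ae_of_all _ fun x => ?_)
      show ψ (1 * h x) * h x ^ 2 = (if h x = 0 then 0 else φ (h x) * h x ^ 2)
      have hk := hkey 1 one_pos x
      simp only [one_mul] at hk
      simpa using hk.symm
    rw [this]
    exact h_pos
  have hNpos : ∀ t : ℝ, 0 < t → 0 < N t := by
    intro t ht
    rcases le_total t 1 with h1 | h1
    · have := hNcrossUP t 1 ht h1
      rw [Real.one_rpow, mul_one] at this
      have h2 : 0 < N 1 * t ^ (m-1) := mul_pos hN1pos (Real.rpow_pos_of_pos ht _)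
      linarith
    · have := hNcrossDOWN 1 t one_pos h1
      rw [Real.one_rpow, mul_one] at this
      have h2 : 0 < N 1 * t ^ (ℓ-1) := mul_pos hN1pos (Real.rpow_pos_of_pos ht _)
      linarith
  have hQlow : ∀ t : ℝ, 0 < t → (ℓ-1) * N t ≤ NQ t := by
    intro t ht
    rw [hNdef, hNQdef]; simp only
    rw [← MeasureTheory.integral_const_mul]
    exact integral_mono ((hNint t ht).const_mul _) (hQint t ht)
      (fun x => (hQNpt t ht x).1)
  have hQup : ∀ t : ℝ, 0 < t → NQ t ≤ (m-1) * N t := by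
    intro t ht
    rw [hNdef, hNQdef]; simp only
    rw [← MeasureTheory.integral_const_mul]
    exact integral_mono (hQint t ht) ((hNint t ht).const_mul _)
      (fun x => (hQNpt t ht x).2)
  have hQpos : ∀ t : ℝ, 0 < t → 0 < NQ t := by
    intro t ht
    have h1 := hQlow t ht
    have h2 := hNpos t ht
    nlinarith
  -- differentiation under the integral sign
  have hND_deriv : ∀ t₀ : ℝ, 0 < t₀ → HasDerivAt N (ND t₀) t₀ := by
    intro t₀ ht₀
    set K := max ((1/2:ℝ) ^ (ℓ-2)) 1 + max 1 ((3/2:ℝ) ^ (m-2)) with hKdef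
    have hK1 : (0:ℝ) ≤ max ((1/2:ℝ) ^ (ℓ-2)) 1 := le_trans zero_le_one (le_max_right _ _)
    have hK2 : (0:ℝ) ≤ max 1 ((3/2:ℝ) ^ (m-2)) := le_trans zero_le_one (le_max_left _ _)
    have hKbound : ∀ t : ℝ, t₀/2 ≤ t → t ≤ 3*t₀/2 → ∀ u : ℝ, 0 < u →
        dΦ (t*u) ≤ K * dΦ (t₀*u) := by
      intro t htl htu u hu
      have ht : 0 < t := lt_of_lt_of_le (by linarith) htl
      have hd0 := hdΦpos (t₀*u) (mul_pos ht₀ hu)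
      have hupow : ∀ c : ℝ, (0:ℝ) < u ^ c := fun c => Real.rpow_pos_of_pos hu _
      rcases le_total t t₀ with hc | hc
      · have h1 := C2 (t*u) (t₀*u) (mul_pos ht hu) (mul_le_mul_of_nonneg_right hc hu.le)
        rw [Real.mul_rpow ht.le hu.le, Real.mul_rpow ht₀.le hu.le] at h1
        have h2 : dΦ (t*u) * t₀ ^ (ℓ-2) ≤ dΦ (t₀*u) * t ^ (ℓ-2) := by
          refine le_of_mul_le_mul_right ?_ (hupow (ℓ-2))
          calc dΦ (t*u) * t₀ ^ (ℓ-2) * u ^ (ℓ-2)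
              = dΦ (t*u) * (t₀ ^ (ℓ-2) * u ^ (ℓ-2)) := by ring
            _ ≤ dΦ (t₀*u) * (t ^ (ℓ-2) * u ^ (ℓ-2)) := h1
            _ = dΦ (t₀*u) * t ^ (ℓ-2) * u ^ (ℓ-2) := by ring
        have h3 : t ^ (ℓ-2) ≤ (max ((1/2:ℝ) ^ (ℓ-2)) 1) * t₀ ^ (ℓ-2) := by
          have h4 : (0:ℝ) ≤ t₀ ^ (ℓ-2) := Real.rpow_nonneg ht₀.le _
          rcases le_total 0 (ℓ-2) with he | he
          · have h5 : t ^ (ℓ-2) ≤ t₀ ^ (ℓ-2) := Real.rpow_le_rpow ht.le hc he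
            nlinarith [le_max_right ((1/2:ℝ) ^ (ℓ-2)) (1:ℝ)]
          · have h5 : t ^ (ℓ-2) ≤ (t₀/2) ^ (ℓ-2) :=
              Real.rpow_le_rpow_of_nonpos (by linarith) htl he
            have h6 : ((t₀:ℝ)/2) = (1/2) * t₀ := by ring
            rw [h6, Real.mul_rpow (by norm_num) ht₀.le] at h5
            nlinarith [le_max_left ((1/2:ℝ) ^ (ℓ-2)) (1:ℝ)]
        have htp : (0:ℝ) < t₀ ^ (ℓ-2) := Real.rpow_pos_of_pos ht₀ _
        have h7 : dΦ (t*u) ≤ (max ((1/2:ℝ) ^ (ℓ-2)) 1) * dΦ (t₀*u) := by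
          refine le_of_mul_le_mul_right ?_ htp
          calc dΦ (t*u) * t₀ ^ (ℓ-2) ≤ dΦ (t₀*u) * t ^ (ℓ-2) := h2
            _ ≤ dΦ (t₀*u) * ((max ((1/2:ℝ) ^ (ℓ-2)) 1) * t₀ ^ (ℓ-2)) :=
                mul_le_mul_of_nonneg_left h3 hd0.le
            _ = (max ((1/2:ℝ) ^ (ℓ-2)) 1) * dΦ (t₀*u) * t₀ ^ (ℓ-2) := by ring
        have hmK : max ((1/2:ℝ) ^ (ℓ-2)) 1 ≤ K := by rw [hKdef]; linarith
        exact le_trans h7 (mul_le_mul_of_nonneg_right hmK hd0.le)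
      · have h1 := C1 (t₀*u) (t*u) (mul_pos ht₀ hu) (mul_le_mul_of_nonneg_right hc hu.le)
        rw [Real.mul_rpow ht.le hu.le, Real.mul_rpow ht₀.le hu.le] at h1
        have h2 : dΦ (t*u) * t₀ ^ (m-2) ≤ dΦ (t₀*u) * t ^ (m-2) := by
          refine le_of_mul_le_mul_right ?_ (hupow (m-2))
          calc dΦ (t*u) * t₀ ^ (m-2) * u ^ (m-2)
              = dΦ (t*u) * (t₀ ^ (m-2) * u ^ (m-2)) := by ring
            _ ≤ dΦ (t₀*u) * (t ^ (m-2) * u ^ (m-2)) := h1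
            _ = dΦ (t₀*u) * t ^ (m-2) * u ^ (m-2) := by ring
        have h3 : t ^ (m-2) ≤ (max 1 ((3/2:ℝ) ^ (m-2))) * t₀ ^ (m-2) := by
          have h4 : (0:ℝ) ≤ t₀ ^ (m-2) := Real.rpow_nonneg ht₀.le _
          rcases le_total 0 (m-2) with he | he
          · have h5 : t ^ (m-2) ≤ (3*t₀/2) ^ (m-2) :=
              Real.rpow_le_rpow ht.le htu he
            have h6 : ((3:ℝ)*t₀/2) = (3/2) * t₀ := by ring
            rw [h6, Real.mul_rpow (by norm_num) ht₀.le] at h5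
            nlinarith [le_max_right (1:ℝ) ((3/2:ℝ) ^ (m-2))]
          · have h5 : t ^ (m-2) ≤ t₀ ^ (m-2) :=
              Real.rpow_le_rpow_of_nonpos ht₀ hc he
            nlinarith [le_max_left (1:ℝ) ((3/2:ℝ) ^ (m-2))]
        have htp : (0:ℝ) < t₀ ^ (m-2) := Real.rpow_pos_of_pos ht₀ _
        have h7 : dΦ (t*u) ≤ (max 1 ((3/2:ℝ) ^ (m-2))) * dΦ (t₀*u) := by
          refine le_of_mul_le_mul_right ?_ htp
          calc dΦ (t*u) * t₀ ^ (m-2) ≤ dΦ (t₀*u) * t ^ (m-2) := h2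
            _ ≤ dΦ (t₀*u) * ((max 1 ((3/2:ℝ) ^ (m-2))) * t₀ ^ (m-2)) :=
                mul_le_mul_of_nonneg_left h3 hd0.le
            _ = (max 1 ((3/2:ℝ) ^ (m-2))) * dΦ (t₀*u) * t₀ ^ (m-2) := by ring
        have hmK : max 1 ((3/2:ℝ) ^ (m-2)) ≤ K := by rw [hKdef]; linarith
        exact le_trans h7 (mul_le_mul_of_nonneg_right hmK hd0.le)
    have h_bound : ∀ᵐ x ∂μ, ∀ t ∈ Metric.ball t₀ (t₀/2),
        ‖dΦi (t * h x) * h x ^ 2‖ ≤ K * (dΦi (t₀ * h x) * h x ^ 2) := by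
      refine ae_of_all _ fun x t htball => ?_
      rw [Metric.mem_ball, Real.dist_eq, abs_sub_lt_iff] at htball
      have htl : t₀/2 ≤ t := by linarith [htball.2]
      have htu : t ≤ 3*t₀/2 := by linarith [htball.1]
      have ht : 0 < t := lt_of_lt_of_le (by linarith) htl
      rcases eq_or_lt_of_le (h_nonneg x) with hx0 | hx
      · rw [← hx0]
        simp
      · rw [hdΦi_of_pos _ (mul_pos ht hx), hdΦi_of_pos _ (mul_pos ht₀ hx)]
        have h1 := hKbound t htl htu (h x) hx
        have hnn : 0 ≤ dΦ (t * h x) * h x ^ 2 :=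
          mul_nonneg (hdΦpos _ (mul_pos ht hx)).le (sq_nonneg _)
        rw [Real.norm_eq_abs, abs_of_nonneg hnn]
        calc dΦ (t * h x) * h x ^ 2 ≤ (K * dΦ (t₀ * h x)) * h x ^ 2 :=
              mul_le_mul_of_nonneg_right h1 (sq_nonneg _)
          _ = K * (dΦ (t₀ * h x) * h x ^ 2) := by ring
    have h_diff : ∀ᵐ x ∂μ, ∀ t ∈ Metric.ball t₀ (t₀/2),
        HasDerivAt (fun t => (t * h x) * ψ (t * h x) * h x) (dΦi (t * h x) * h x ^ 2) t := by
      refine ae_of_all _ fun x t htball => ?_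
      rw [Metric.mem_ball, Real.dist_eq, abs_sub_lt_iff] at htball
      have htl : t₀/2 ≤ t := by linarith [htball.2]
      have ht : 0 < t := lt_of_lt_of_le (by linarith) htl
      rcases eq_or_lt_of_le (h_nonneg x) with hx0 | hx
      · have hfun : (fun t : ℝ => (t * h x) * ψ (t * h x) * h x) = fun _ => 0 := by
          funext s; rw [← hx0]; ring
        rw [hfun, ← hx0]
        simpa using hasDerivAt_const t (0:ℝ)
      · have hinner : HasDerivAt (fun s : ℝ => s * h x) (h x) t := hasDerivAt_mul_const (h x)
        have houter : HasDerivAt (fun s : ℝ => s * φ s) (dΦ (t * h x)) (t * h x) :=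
          hΦhas _ (mul_pos ht hx)
        have hsm : HasDerivAt (fun s : ℝ => ((s * h x) * φ (s * h x)) * h x)
            ((dΦ (t * h x) * h x) * h x) t := by
            have := (houter.comp t hinner).mul_const (h x); exact this
        have hval : (dΦ (t * h x) * h x) * h x = dΦi (t * h x) * h x ^ 2 := by
          rw [hdΦi_of_pos _ (mul_pos ht hx)]; ring
        rw [← hval]
        refine hsm.congr_of_eventuallyEq ?_
        filter_upwards [Ioi_mem_nhds ht] with s hs
        rw [hψ_of_pos _ (mul_pos hs hx)]
    have hdom := hasDerivAt_integral_of_dominated_loc_of_deriv_le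
      (F := fun t x => (t * h x) * ψ (t * h x) * h x)
      (F' := fun t x => dΦi (t * h x) * h x ^ 2)
      (μ := μ) (x₀ := t₀) (s := Metric.ball t₀ (t₀/2))
      (bound := fun x => K * (dΦi (t₀ * h x) * h x ^ 2))
      (Metric.ball_mem_nhds _ (by positivity))
      (Eventually.of_forall fun t => (hmeasN t).aestronglyMeasurable)
      (hNint t₀ ht₀)
      ((hmeasND t₀).aestronglyMeasurable)
      h_bound
      ((hNDint t₀ ht₀).const_mul K)
      h_diff
    simp only [hNdef, hNDdef]
    exact hdom.2
  -- relating mh to N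
  have hmh_eq : ∀ t : ℝ, 0 < t → mh φ μ h lstar B t = N t - t ^ (lstar-1) * B := by
    intro t ht
    show t * (∫ x, (if h x = 0 then 0 else φ (t * h x) * h x ^ 2) ∂μ) - t ^ (lstar-1) * B
        = N t - t ^ (lstar-1) * B
    congr 1
    rw [integral_congr_ae (ae_of_all _ (hkey t ht))]
    exact hNG t ht
  have hmh_deriv : ∀ t : ℝ, 0 < t →
      HasDerivAt (mh φ μ h lstar B) (ND t - (lstar-1) * t ^ (lstar-2) * B) t := by
    intro t ht
    have h2 := (Real.hasDerivAt_rpow_const (x := t) (p := lstar-1) (Or.inl ht.ne')).mul_const B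
    have h3 := (hND_deriv t ht).sub h2
    rw [show lstar-1-1 = lstar-2 from by ring] at h3
    refine HasDerivAt.congr_of_eventuallyEq h3 ?_
    filter_upwards [Ioi_mem_nhds ht] with s hs
    exact hmh_eq s hs
  -- the critical threshold
  set c₀ := (lstar-1) * B with hc₀def
  have hc₀pos : 0 < c₀ := mul_pos hls hB
  set S := {t : ℝ | 0 < t ∧ c₀ * t ^ (lstar-1) ≤ NQ t} with hSdef
  have hQ1pos : 0 < NQ 1 := hQpos 1 one_pos
  -- S is nonempty
  have hSne : S.Nonempty := by
    have htendS : Tendsto (fun t : ℝ => c₀ * t ^ (lstar-m)) (nhdsWithin 0 (Set.Ioi 0))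
        (nhds 0) := by
      simpa using (stmt9_rpow_tendsto_zero hlsm).const_mul c₀
    have hev1 : ∀ᶠ t in nhdsWithin 0 (Set.Ioi 0), c₀ * t ^ (lstar-m) < NQ 1 :=
      htendS.eventually (gt_mem_nhds hQ1pos)
    have hev2 : ∀ᶠ t in nhdsWithin 0 (Set.Ioi 0), t ∈ Ioc (0:ℝ) 1 :=
      eventually_of_mem (Ioc_mem_nhdsGT_of_mem
        (⟨le_refl (0:ℝ), zero_lt_one⟩ : (0:ℝ) ∈ Ico (0:ℝ) 1)) (fun t ht => ht)
    obtain ⟨t₁, ht₁, ht₁'⟩ := (hev1.and hev2).exists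
    refine ⟨t₁, ht₁'.1, ?_⟩
    have hcross := hQcrossUP t₁ 1 ht₁'.1 ht₁'.2
    rw [Real.one_rpow, mul_one] at hcross
    have hsplit : t₁ ^ (lstar-1) = t₁ ^ (lstar-m) * t₁ ^ (m-1) :=
      stmt9_rpow_split ht₁'.1 _ _ _ (by ring)
    calc c₀ * t₁ ^ (lstar-1) = (c₀ * t₁ ^ (lstar-m)) * t₁ ^ (m-1) := by rw [hsplit]; ring
      _ ≤ NQ 1 * t₁ ^ (m-1) :=
          mul_le_mul_of_nonneg_right ht₁.le (Real.rpow_nonneg ht₁'.1.le _)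
      _ ≤ NQ t₁ := hcross
  -- S is bounded above
  have hbddS : BddAbove S := by
    have htend : Tendsto (fun t : ℝ => c₀ * t ^ (lstar-m)) atTop atTop :=
      (tendsto_rpow_atTop hlsm).const_mul_atTop hc₀pos
    have hev : ∀ᶠ t in atTop, NQ 1 < c₀ * t ^ (lstar-m) ∧ (1:ℝ) ≤ t :=
      (htend.eventually_gt_atTop (NQ 1)).and (eventually_ge_atTop 1)
    obtain ⟨T, hT⟩ := eventually_atTop.mp hev
    refine ⟨T, fun t htS => ?_⟩
    by_contra hnot
    push_neg at hnot
    obtain ⟨hlt, h1t⟩ := hT t hnot.le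
    have hcross := hQcrossUP 1 t one_pos h1t
    rw [Real.one_rpow, mul_one] at hcross
    have hsplit : t ^ (lstar-1) = t ^ (lstar-m) * t ^ (m-1) :=
      stmt9_rpow_split (lt_of_lt_of_le one_pos h1t) _ _ _ (by ring)
    have hQt : NQ t < c₀ * t ^ (lstar-1) := by
      calc NQ t ≤ NQ 1 * t ^ (m-1) := hcross
        _ < (c₀ * t ^ (lstar-m)) * t ^ (m-1) :=
            mul_lt_mul_of_pos_right hlt
              (Real.rpow_pos_of_pos (lt_of_lt_of_le one_pos h1t) _)
        _ = c₀ * t ^ (lstar-1) := by rw [hsplit]; ring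
    exact absurd htS.2 (not_le.mpr hQt)
  set tt := sSup S with httdef
  obtain ⟨t₁, ht₁S⟩ := hSne
  have httpos : 0 < tt := lt_of_lt_of_le ht₁S.1 (le_csSup hbddS ht₁S)
  have hup : ∀ t : ℝ, tt < t → NQ t < c₀ * t ^ (lstar-1) := by
    intro t htgt
    have htpos : 0 < t := lt_trans httpos htgt
    by_contra hnot
    push_neg at hnot
    have : t ∈ S := ⟨htpos, hnot⟩
    exact absurd (le_csSup hbddS this) (not_le.mpr htgt)
  have hdown : ∀ t : ℝ, 0 < t → t < tt → c₀ * t ^ (lstar-1) < NQ t := by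
    intro t ht htlt
    obtain ⟨s, hsS, hts⟩ := exists_lt_of_lt_csSup ⟨t₁, ht₁S⟩ htlt
    -- strict cross inequality : NQ s * t^λ < NQ t * s^λ
    have hscross := hQcrossUP t s ht hts.le
    have hQt := hQpos t ht
    have hsplitT : t ^ (lstar-1) = t ^ (m-1) * t ^ (lstar-m) :=
      stmt9_rpow_split ht _ _ _ (by ring)
    have hsplitS : s ^ (lstar-1) = s ^ (m-1) * s ^ (lstar-m) :=
      stmt9_rpow_split hsS.1 _ _ _ (by ring)
    have hstrict : NQ s * t ^ (lstar-1) < NQ t * s ^ (lstar-1) := by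
      calc NQ s * t ^ (lstar-1) = (NQ s * t ^ (m-1)) * t ^ (lstar-m) := by
            rw [hsplitT]; ring
        _ ≤ (NQ t * s ^ (m-1)) * t ^ (lstar-m) :=
            mul_le_mul_of_nonneg_right hscross (Real.rpow_nonneg ht.le _)
        _ < (NQ t * s ^ (m-1)) * s ^ (lstar-m) := by
            refine mul_lt_mul_of_pos_left ?_ (mul_pos hQt (Real.rpow_pos_of_pos hsS.1 _))
            exact Real.rpow_lt_rpow ht.le hts hlsm
        _ = NQ t * s ^ (lstar-1) := by rw [hsplitS]; ring
    have hmem := hsS.2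
    have hspow : (0:ℝ) < s ^ (lstar-1) := Real.rpow_pos_of_pos hsS.1 _
    have h1 : (c₀ * t ^ (lstar-1)) * s ^ (lstar-1) < NQ t * s ^ (lstar-1) := by
      calc (c₀ * t ^ (lstar-1)) * s ^ (lstar-1) = (c₀ * s ^ (lstar-1)) * t ^ (lstar-1) := by
            ring
        _ ≤ NQ s * t ^ (lstar-1) :=
            mul_le_mul_of_nonneg_right hmem (Real.rpow_nonneg ht.le _)
        _ < NQ t * s ^ (lstar-1) := hstrict
    exact lt_of_mul_lt_mul_right h1 hspow.le
  -- sign of the derivative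
  have hder_pos : ∀ t : ℝ, 0 < t → t < tt → 0 < ND t - (lstar-1) * t ^ (lstar-2) * B := by
    intro t ht htlt
    have h1 := hdown t ht htlt
    rw [hQeq t ht] at h1
    have hsplit : t ^ (lstar-1) = t ^ (lstar-2) * t := by
      have := stmt9_rpow_split ht (lstar-2) 1 (lstar-1) (by ring)
      rwa [Real.rpow_one] at this
    have h3 : t * ((lstar-1) * t ^ (lstar-2) * B) < t * ND t := by
      calc t * ((lstar-1) * t ^ (lstar-2) * B) = c₀ * (t ^ (lstar-2) * t) := by
            rw [hc₀def]; ring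
        _ = c₀ * t ^ (lstar-1) := by rw [← hsplit]
        _ < t * ND t := h1
    have h4 := lt_of_mul_lt_mul_left h3 ht.le
    linarith
  have hder_neg : ∀ t : ℝ, tt < t → ND t - (lstar-1) * t ^ (lstar-2) * B < 0 := by
    intro t htlt
    have ht : 0 < t := lt_trans httpos htlt
    have h1 := hup t htlt
    rw [hQeq t ht] at h1
    have hsplit : t ^ (lstar-1) = t ^ (lstar-2) * t := by
      have := stmt9_rpow_split ht (lstar-2) 1 (lstar-1) (by ring)
      rwa [Real.rpow_one] at this
    have h3 : t * ND t < t * ((lstar-1) * t ^ (lstar-2) * B) := by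
      calc t * ND t < c₀ * t ^ (lstar-1) := h1
        _ = c₀ * (t ^ (lstar-2) * t) := by rw [← hsplit]
        _ = t * ((lstar-1) * t ^ (lstar-2) * B) := by rw [hc₀def]; ring
    have h4 := lt_of_mul_lt_mul_left h3 ht.le
    linarith
  -- monotonicity
  have hmono : StrictMonoOn (mh φ μ h lstar B) (Set.Ioc 0 tt) := by
    apply strictMonoOn_of_deriv_pos (convex_Ioc 0 tt)
    · intro t htmem
      exact (hmh_deriv t htmem.1).differentiableAt.continuousAt.continuousWithinAt
    · rw [interior_Ioc]
      intro t htmem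
      rw [(hmh_deriv t htmem.1).deriv]
      exact hder_pos t htmem.1 htmem.2
  have hanti : StrictAntiOn (mh φ μ h lstar B) (Set.Ici tt) := by
    apply strictAntiOn_of_deriv_neg (convex_Ici tt)
    · intro t htmem
      exact (hmh_deriv t (lt_of_lt_of_le httpos htmem)).differentiableAt.continuousAt.continuousWithinAt
    · rw [interior_Ici]
      intro t htmem
      rw [(hmh_deriv t (lt_trans httpos htmem)).deriv]
      exact hder_neg t htmem
  -- positivity of mh at tt
  have hmhpos_below : ∀ t : ℝ, 0 < t → t < tt → 0 < mh φ μ h lstar B t := by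
    intro t ht htlt
    have h1 := hdown t ht htlt
    have h2 := hQup t ht
    have h3 := hNpos t ht
    have h4 : (lstar-1) * (B * t ^ (lstar-1)) < (lstar-1) * N t := by
      rw [hc₀def] at h1
      nlinarith
    have h5 : B * t ^ (lstar-1) < N t := lt_of_mul_lt_mul_left h4 (by linarith)
    rw [hmh_eq t ht]
    have : t ^ (lstar-1) * B = B * t ^ (lstar-1) := mul_comm _ _
    linarith
  have hmhtt : 0 < mh φ μ h lstar B tt := by
    have hhalf : 0 < tt/2 := by linarith
    have hhalf2 : tt/2 < tt := by linarith
    have h1 := hmhpos_below (tt/2) hhalf hhalf2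
    have h2 := hmono ⟨hhalf, hhalf2.le⟩ ⟨httpos, le_refl tt⟩ hhalf2
    linarith
  -- limit at 0⁺
  have hlim0 : Tendsto (mh φ μ h lstar B) (nhdsWithin 0 (Set.Ioi 0)) (nhds 0) := by
    have hminus : Tendsto (fun t : ℝ => -(t ^ (lstar-1) * B)) (nhdsWithin 0 (Set.Ioi 0))
        (nhds 0) := by
      simpa using ((stmt9_rpow_tendsto_zero hls).mul_const B).neg
    have hplus : Tendsto (fun t : ℝ => N 1 * t ^ (ℓ-1)) (nhdsWithin 0 (Set.Ioi 0))
        (nhds 0) := by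
      simpa using (stmt9_rpow_tendsto_zero hℓ1).const_mul (N 1)
    apply tendsto_of_tendsto_of_tendsto_of_le_of_le' hminus hplus
    · filter_upwards [self_mem_nhdsWithin] with t ht
      rw [hmh_eq t ht]
      have hN0 : 0 ≤ N t := (hNpos t ht).le
      linarith
    · filter_upwards [Ioc_mem_nhdsGT_of_mem
        (⟨le_refl (0:ℝ), zero_lt_one⟩ : (0:ℝ) ∈ Ico (0:ℝ) 1)] with t ht
      rw [hmh_eq t ht.1]
      have h1 := hNcrossDOWN t 1 ht.1 ht.2
      rw [Real.one_rpow, mul_one] at h1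
      have h2 : 0 ≤ t ^ (lstar-1) * B :=
        mul_nonneg (Real.rpow_nonneg ht.1.le _) hB.le
      linarith
  -- limit at ∞
  have hlimtop : Tendsto (mh φ μ h lstar B) atTop atBot := by
    have h1 : Tendsto (fun t : ℝ => N 1 * t ^ (m-lstar) - B) atTop (nhds (-B)) := by
      have h0 : Tendsto (fun t : ℝ => t ^ (m-lstar)) atTop (nhds 0) := by
        rw [show m - lstar = -(lstar-m) from by ring]
        exact tendsto_rpow_neg_atTop hlsm
      have := (h0.const_mul (N 1)).sub_const B
      simpa using this
    have h2 : Tendsto (fun t : ℝ => t ^ (lstar-1)) atTop atTop := tendsto_rpow_atTop hls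
    have h3 : Tendsto (fun t : ℝ => (N 1 * t ^ (m-lstar) - B) * t ^ (lstar-1)) atTop atBot :=
      Filter.Tendsto.neg_mul_atTop (by linarith) h1 h2
    have hg : Tendsto (fun t : ℝ => N 1 * t ^ (m-1) - t ^ (lstar-1) * B) atTop atBot := by
      refine h3.congr' ?_
      filter_upwards [eventually_gt_atTop (0:ℝ)] with t ht
      rw [stmt9_rpow_split ht (m-lstar) (lstar-1) (m-1) (by ring)]
      ring
    refine tendsto_atBot_mono' atTop ?_ hg
    filter_upwards [eventually_ge_atTop (1:ℝ)] with t ht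
    have htpos : (0:ℝ) < t := lt_of_lt_of_le one_pos ht
    rw [hmh_eq t htpos]
    have hc := hNcrossUP 1 t one_pos ht
    rw [Real.one_rpow, mul_one] at hc
    linarith
  -- assemble
  refine ⟨?_, ⟨tt, ⟨httpos, hmono, hanti, hmhtt⟩, ?_⟩, hlim0, hlimtop⟩
  · intro t ht
    have hFψint : Integrable (fun x => ψ (t * h x) * h x ^ 2) μ := by
      refine ((hNint t ht).const_mul t⁻¹).congr (ae_of_all _ fun x => ?_)
      field_simp
    exact hFψint.congr (ae_of_all _ fun x => (hkey t ht x).symm)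
  · rintro t' ⟨ht'pos, hmono', hanti', _⟩
    by_contra hne
    rcases lt_or_gt_of_ne hne with hlt | hgt
    · have h1 := hmono ⟨ht'pos, hlt.le⟩ ⟨httpos, le_refl tt⟩ hlt
      have h2 := hanti' (self_mem_Ici) (mem_Ici.mpr hlt.le) hlt
      linarith
    · have h1 := hanti (self_mem_Ici) (mem_Ici.mpr hgt.le) hgt
      have h2 := hmono' ⟨httpos, hgt.le⟩ ⟨ht'pos, le_refl t'⟩ hgt
      linarith
end

section
/- Let t̃ > 0 be the unique global maximum point of m_h on (0,∞) and let c ∈ ℝ. If c ≤ 0, then the equation m_h(t) = c has exactly one solution t₁ in (0,∞), and t₁ > t̃. If 0 < c < m_h(t̃), then m_h(t) = c has exactly two solutions t₁ < t₂ in (0,∞), and t₁ < t̃ < t₂. -/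
open Filter Set MeasureTheory

section gLemmas

variable {φ : ℝ → ℝ} {ℓ m : ℝ}

lemma g_contDiff (hφ_C2 : ContDiffOn ℝ 2 φ (Set.Ioi 0)) :
    ContDiffOn ℝ 2 (fun t : ℝ => t * φ t) (Set.Ioi 0) :=
  contDiffOn_id.mul hφ_C2

lemma hasDerivAt_g (hφ_C2 : ContDiffOn ℝ 2 φ (Set.Ioi 0)) {t : ℝ} (ht : 0 < t) :
    HasDerivAt (fun s => s * φ s) (deriv (fun s => s * φ s) t) t := by
  have := ((g_contDiff hφ_C2).differentiableOn (by norm_num)).differentiableAt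
    (Ioi_mem_nhds ht)
  exact this.hasDerivAt

lemma hasDerivAt_dg (hφ_C2 : ContDiffOn ℝ 2 φ (Set.Ioi 0)) {t : ℝ} (ht : 0 < t) :
    HasDerivAt (deriv (fun s => s * φ s)) (deriv (deriv (fun s => s * φ s)) t) t := by
  have h1 : ContDiffOn ℝ 1 (deriv (fun s => s * φ s)) (Set.Ioi 0) :=
    (g_contDiff hφ_C2).deriv_of_isOpen isOpen_Ioi (by norm_num)
  exact ((h1.differentiableOn (by norm_num)).differentiableAt (Ioi_mem_nhds ht)).hasDerivAt

/-- `w_a(t) = t g'(t) - a g(t)` is monotone when `t g'' ≥ (a-1) g'` on `(0,∞)`. -/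
lemma w_mono (hφ_C2 : ContDiffOn ℝ 2 φ (Set.Ioi 0)) {a : ℝ}
    (hia : ∀ t > 0, (a - 1) * deriv (fun s => s * φ s) t ≤
      t * deriv (deriv (fun s => s * φ s)) t) :
    MonotoneOn (fun t => t * deriv (fun s => s * φ s) t - a * (t * φ t)) (Set.Ioi 0) := by
  have key : ∀ t ∈ Set.Ioi (0:ℝ), HasDerivAt
      (fun t => t * deriv (fun s => s * φ s) t - a * (t * φ t))
      (deriv (fun s => s * φ s) t + t * deriv (deriv (fun s => s * φ s)) t
        - a * deriv (fun s => s * φ s) t) t := by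
    intro t ht
    have h1 := (hasDerivAt_id t).mul (hasDerivAt_dg hφ_C2 ht)
    have h2 := (hasDerivAt_g hφ_C2 ht).const_mul a
    exact (h1.sub h2).congr_deriv (by simp)
  apply monotoneOn_of_deriv_nonneg (convex_Ioi 0)
  · exact fun t ht => (key t ht).continuousAt.continuousWithinAt
  · intro t ht
    rw [interior_Ioi] at ht
    exact (key t ht).differentiableAt.differentiableWithinAt
  · intro t ht
    rw [interior_Ioi] at ht
    rw [(key t ht).deriv]
    have := hia t ht
    nlinarith [this]

end gLemmas

section gLemmas2
variable {φ : ℝ → ℝ} {ℓ m : ℝ}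

lemma tendsto_rpow_zero' {p : ℝ} (hp : 0 < p) :
    Tendsto (fun t : ℝ => t ^ p) (nhdsWithin 0 (Set.Ioi 0)) (nhds 0) := by
  have := (Real.continuousAt_rpow_const 0 p (Or.inr hp.le)).tendsto
  rw [Real.zero_rpow hp.ne'] at this
  exact this.mono_left nhdsWithin_le_nhds

lemma w_mono' (hφ_C2 : ContDiffOn ℝ 2 φ (Set.Ioi 0)) {a : ℝ}
    (hia : ∀ t > 0, t * deriv (deriv (fun s => s * φ s)) t ≤
      (a - 1) * deriv (fun s => s * φ s) t) :
    MonotoneOn (fun t => a * (t * φ t) - t * deriv (fun s => s * φ s) t) (Set.Ioi 0) := by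
  have key : ∀ t ∈ Set.Ioi (0:ℝ), HasDerivAt
      (fun t => a * (t * φ t) - t * deriv (fun s => s * φ s) t)
      (a * deriv (fun s => s * φ s) t -
        (deriv (fun s => s * φ s) t + t * deriv (deriv (fun s => s * φ s)) t)) t := by
    intro t ht
    have h1 := (hasDerivAt_id t).mul (hasDerivAt_dg hφ_C2 ht)
    have h2 := (hasDerivAt_g hφ_C2 ht).const_mul a
    exact (h2.sub h1).congr_deriv (by simp)
  apply monotoneOn_of_deriv_nonneg (convex_Ioi 0)
  · exact fun t ht => (key t ht).continuousAt.continuousWithinAt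
  · intro t ht
    rw [interior_Ioi] at ht
    exact (key t ht).differentiableAt.differentiableWithinAt
  · intro t ht
    rw [interior_Ioi] at ht
    rw [(key t ht).deriv]
    have := hia t ht
    nlinarith [this]

/-- Upper first-order bound: `t g'(t) ≤ (m-1) g(t)`. -/
lemma dg_upper (hφ_pos : ∀ t > 0, 0 < φ t) (hφ_C2 : ContDiffOn ℝ 2 φ (Set.Ioi 0))
    (hm : 1 < m)
    (hφ3u : ∀ t > 0, t * deriv (deriv (fun s => s * φ s)) t ≤
      (m - 2) * deriv (fun s => s * φ s) t) :
    ∀ t > 0, t * deriv (fun s => s * φ s) t ≤ (m - 1) * (t * φ t) := by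
  by_contra hcon
  push_neg at hcon
  obtain ⟨t₀, ht₀, hval⟩ := hcon
  set g' := deriv (fun s : ℝ => s * φ s) with hg'
  have hw : MonotoneOn (fun t => (m-1) * (t * φ t) - t * g' t) (Set.Ioi 0) := by
    have := w_mono' (a := m - 1) hφ_C2 (by
      intro t ht
      have h2 : (m - 1 - 1) * deriv (fun s => s * φ s) t
          = (m - 2) * deriv (fun s => s * φ s) t := by ring
      rw [h2]; exact hφ3u t ht)
    simpa using this
  set C : ℝ := -((m-1) * (t₀ * φ t₀) - t₀ * g' t₀) / (m - 1) with hC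
  have hCpos : 0 < C := by
    apply div_pos (by linarith) (by linarith)
  -- F₂ is monotone on Ioc 0 t₀
  set F₂ : ℝ → ℝ := fun t => (t * φ t + C) * t ^ (1 - m) with hF₂
  have hd : ∀ t ∈ Set.Ioo (0:ℝ) t₀, HasDerivAt F₂
      (g' t * t ^ (1-m) + (t * φ t + C) * ((1-m) * t ^ (1-m-1))) t := by
    intro t ht
    exact ((hasDerivAt_g hφ_C2 ht.1).add_const C).mul
      (Real.hasDerivAt_rpow_const (Or.inl ht.1.ne'))
  have hmono : MonotoneOn F₂ (Set.Ioc 0 t₀) := by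
    apply monotoneOn_of_deriv_nonneg (convex_Ioc 0 t₀)
    · intro t ht
      have ht1 : 0 < t := ht.1
      exact (((hasDerivAt_g hφ_C2 ht1).add_const C).mul
        (Real.hasDerivAt_rpow_const (Or.inl ht1.ne'))).continuousAt.continuousWithinAt
    · intro t ht
      rw [interior_Ioc] at ht
      exact (hd t ht).differentiableAt.differentiableWithinAt
    · intro t ht
      rw [interior_Ioc] at ht
      rw [(hd t ht).deriv]
      have h1 : (0:ℝ) < t := ht.1
      have e1 : t ^ (1-m-1) * t = t ^ (1-m) := by
        have e := Real.rpow_add h1 (1-m-1) 1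
        rw [Real.rpow_one] at e
        rw [← e]; ring_nf
      have e2 : (0:ℝ) < t ^ (1-m-1) := Real.rpow_pos_of_pos h1 _
      -- key linear inequality
      have hwle : (m-1) * (t * φ t) - t * g' t ≤ (m-1) * (t₀ * φ t₀) - t₀ * g' t₀ :=
        hw ht.1 ht₀ ht.2.le
      have hCalt : (m-1) * C = t₀ * g' t₀ - (m-1) * (t₀ * φ t₀) := by
        rw [hC]; field_simp
        rw [mul_div_cancel_left₀ _ (by linarith : m - 1 ≠ 0)]; ring
      have key : 0 ≤ t * g' t + (t * φ t + C) * (1 - m) := by nlinarith [hwle, hCalt]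
      have expand : g' t * t ^ (1-m) + (t * φ t + C) * ((1-m) * t ^ (1-m-1))
          = t ^ (1-m-1) * (t * g' t + (t * φ t + C) * (1 - m)) := by
        rw [← e1]; ring
      rw [expand]
      exact mul_nonneg e2.le key
  -- consequence : for t in Ioc 0 t₀, C < F₂ t₀ * t ^ (m-1)
  set K : ℝ := F₂ t₀ with hK
  have hineq : ∀ t ∈ Set.Ioc (0:ℝ) t₀, C < K * t ^ (m-1) := by
    intro t ht
    have h1 : 0 < t := ht.1
    have h2 : F₂ t ≤ K := hmono ht (by exact ⟨ht₀, le_refl _⟩) ht.2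
    have e1 : t ^ (1-m) * t ^ (m-1) = 1 := by
      rw [← Real.rpow_add h1]; norm_num
    have e2 : (0:ℝ) < t ^ (m-1) := Real.rpow_pos_of_pos h1 _
    have hgpos : 0 < t * φ t := mul_pos h1 (hφ_pos t h1)
    have h3 : t * φ t + C = F₂ t * t ^ (m-1) := by
      show t * φ t + C = ((t * φ t + C) * t ^ (1-m)) * t ^ (m-1)
      rw [mul_assoc, e1, mul_one]
    have := mul_le_mul_of_nonneg_right h2 e2.le
    linarith
  -- contradiction as t → 0⁺
  have htend : Tendsto (fun t : ℝ => K * t ^ (m-1)) (nhdsWithin 0 (Set.Ioi 0)) (nhds 0) := by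
    simpa using (tendsto_rpow_zero' (by linarith : (0:ℝ) < m - 1)).const_mul K
  have hev : ∀ᶠ t in nhdsWithin 0 (Set.Ioi 0), K * t ^ (m-1) < C :=
    htend.eventually_lt_const hCpos
  have hmem : Set.Ioc (0:ℝ) t₀ ∈ nhdsWithin 0 (Set.Ioi 0) := Ioc_mem_nhdsGT_of_mem ⟨le_refl _, ht₀⟩
  obtain ⟨t, ht1, ht2⟩ := (hev.and (eventually_mem_set.2 hmem)).exists
  exact absurd (hineq t ht2) (not_lt.2 ht1.le)

end gLemmas2

section gLemmas3
variable {φ : ℝ → ℝ} {ℓ m : ℝ}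

/-- Lower first-order bound: `(ℓ-1) g(t) ≤ t g'(t)`. -/
lemma dg_lower (hφ_pos : ∀ t > 0, 0 < φ t) (hφ_C2 : ContDiffOn ℝ 2 φ (Set.Ioi 0))
    (hℓ : 1 < ℓ)
    (hφ1₀ : Tendsto (fun t => t * φ t) (nhdsWithin 0 (Set.Ioi 0)) (nhds 0))
    (hφ3l : ∀ t > 0, (ℓ - 2) * deriv (fun s => s * φ s) t ≤
      t * deriv (deriv (fun s => s * φ s)) t) :
    ∀ t > 0, (ℓ - 1) * (t * φ t) ≤ t * deriv (fun s => s * φ s) t := by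
  by_contra hcon
  push_neg at hcon
  obtain ⟨t₀, ht₀, hval⟩ := hcon
  set g' := deriv (fun s : ℝ => s * φ s) with hg'
  have hw : MonotoneOn (fun t => t * g' t - (ℓ-1) * (t * φ t)) (Set.Ioi 0) := by
    have := w_mono (a := ℓ - 1) hφ_C2 (by
      intro t ht
      have h2 : (ℓ - 1 - 1) * deriv (fun s => s * φ s) t
          = (ℓ - 2) * deriv (fun s => s * φ s) t := by ring
      rw [h2]; exact hφ3l t ht)
    simpa using this
  set C : ℝ := -(t₀ * g' t₀ - (ℓ-1) * (t₀ * φ t₀)) / (ℓ - 1) with hC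
  have hCpos : 0 < C := by
    apply div_pos (by linarith) (by linarith)
  have hCalt : (ℓ-1) * C = (ℓ-1) * (t₀ * φ t₀) - t₀ * g' t₀ := by
    rw [hC]; field_simp
    rw [mul_div_cancel_left₀ _ (by linarith : ℓ - 1 ≠ 0)]; ring
  set F₁ : ℝ → ℝ := fun t => (t * φ t - C) * t ^ (1 - ℓ) with hF₁
  have hanti : AntitoneOn F₁ (Set.Ioc 0 t₀) := by
    apply antitoneOn_of_deriv_nonpos (convex_Ioc 0 t₀)
    · intro t ht
      exact (((hasDerivAt_g hφ_C2 ht.1).sub_const C).mul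
        (Real.hasDerivAt_rpow_const (Or.inl ht.1.ne'))).continuousAt.continuousWithinAt
    · intro t ht
      rw [interior_Ioc] at ht
      exact (((hasDerivAt_g hφ_C2 ht.1).sub_const C).mul
        (Real.hasDerivAt_rpow_const (Or.inl ht.1.ne'))).differentiableAt.differentiableWithinAt
    · intro t ht
      rw [interior_Ioc] at ht
      have h1 : (0:ℝ) < t := ht.1
      rw [(show HasDerivAt F₁ _ t from ((hasDerivAt_g hφ_C2 h1).sub_const C).mul
        (Real.hasDerivAt_rpow_const (Or.inl h1.ne'))).deriv]
      have e1 : t ^ (1-ℓ-1) * t = t ^ (1-ℓ) := by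
        have e := Real.rpow_add h1 (1-ℓ-1) 1
        rw [Real.rpow_one] at e
        rw [← e]; ring_nf
      have e2 : (0:ℝ) < t ^ (1-ℓ-1) := Real.rpow_pos_of_pos h1 _
      have hwle : t * g' t - (ℓ-1) * (t * φ t) ≤ t₀ * g' t₀ - (ℓ-1) * (t₀ * φ t₀) :=
        hw ht.1 ht₀ ht.2.le
      have key : t * g' t + (t * φ t - C) * (1 - ℓ) ≤ 0 := by nlinarith [hwle, hCalt]
      have expand : g' t * t ^ (1-ℓ) + (t * φ t - C) * ((1-ℓ) * t ^ (1-ℓ-1))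
          = t ^ (1-ℓ-1) * (t * g' t + (t * φ t - C) * (1 - ℓ)) := by
        rw [← e1]; ring
      rw [expand]
      exact mul_nonpos_of_nonneg_of_nonpos e2.le key
  set K : ℝ := F₁ t₀ with hK
  have hineq : ∀ t ∈ Set.Ioc (0:ℝ) t₀, C + K * t ^ (ℓ-1) ≤ t * φ t := by
    intro t ht
    have h1 : 0 < t := ht.1
    have h2 : K ≤ F₁ t := hanti ht ⟨ht₀, le_refl _⟩ ht.2
    have e1 : t ^ (1-ℓ) * t ^ (ℓ-1) = 1 := by
      rw [← Real.rpow_add h1]; norm_num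
    have e2 : (0:ℝ) < t ^ (ℓ-1) := Real.rpow_pos_of_pos h1 _
    have h3 : t * φ t - C = F₁ t * t ^ (ℓ-1) := by
      show t * φ t - C = ((t * φ t - C) * t ^ (1-ℓ)) * t ^ (ℓ-1)
      rw [mul_assoc, e1, mul_one]
    have := mul_le_mul_of_nonneg_right h2 e2.le
    linarith
  -- contradiction as t → 0⁺
  have htend : Tendsto (fun t : ℝ => C + K * t ^ (ℓ-1)) (nhdsWithin 0 (Set.Ioi 0)) (nhds C) := by
    have := (tendsto_rpow_zero' (by linarith : (0:ℝ) < ℓ - 1)).const_mul K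
    simpa using (tendsto_const_nhds (x := C)).add this
  have hev1 : ∀ᶠ t in nhdsWithin 0 (Set.Ioi 0), C/2 < C + K * t ^ (ℓ-1) :=
    htend.eventually_const_lt (by linarith)
  have hev2 : ∀ᶠ t in nhdsWithin 0 (Set.Ioi 0), t * φ t < C/2 :=
    hφ1₀.eventually_lt_const (by linarith)
  have hmem : Set.Ioc (0:ℝ) t₀ ∈ nhdsWithin 0 (Set.Ioi 0) :=
    Ioc_mem_nhdsGT_of_mem ⟨le_refl _, ht₀⟩
  obtain ⟨t, ⟨ht1, ht2⟩, ht3⟩ := ((hev1.and hev2).and (eventually_mem_set.2 hmem)).exists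
  exact absurd (hineq t ht3) (by push_neg; linarith [ht1, ht2])

end gLemmas3

section scaling

lemma mono_mul_rpow {F F' : ℝ → ℝ} {p : ℝ}
    (hd : ∀ t > 0, HasDerivAt F (F' t) t)
    (hsign : ∀ t > 0, 0 ≤ t * F' t - p * F t) :
    MonotoneOn (fun t => F t * t ^ (-p)) (Set.Ioi 0) := by
  apply monotoneOn_of_deriv_nonneg (convex_Ioi 0)
  · intro t ht
    exact ((hd t ht).mul
      (Real.hasDerivAt_rpow_const (Or.inl (ne_of_gt ht)))).continuousAt.continuousWithinAt
  · intro t ht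
    rw [interior_Ioi] at ht
    exact ((hd t ht).mul
      (Real.hasDerivAt_rpow_const (Or.inl (ne_of_gt ht)))).differentiableAt.differentiableWithinAt
  · intro t ht
    rw [interior_Ioi] at ht
    have h1 : (0:ℝ) < t := ht
    rw [(show HasDerivAt (fun t => F t * t ^ (-p)) _ t from (hd t ht).mul (Real.hasDerivAt_rpow_const (Or.inl (ne_of_gt h1)))).deriv]
    have e1 : t ^ (-p-1) * t = t ^ (-p) := by
      have e := Real.rpow_add h1 (-p-1) 1
      rw [Real.rpow_one] at e
      rw [← e]; ring_nf
    have e2 : (0:ℝ) < t ^ (-p-1) := Real.rpow_pos_of_pos h1 _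
    have expand : F' t * t ^ (-p) + F t * (-p * t ^ (-p-1))
        = t ^ (-p-1) * (t * F' t - p * F t) := by rw [← e1]; ring
    rw [expand]
    exact mul_nonneg e2.le (hsign t h1)

lemma anti_mul_rpow {F F' : ℝ → ℝ} {p : ℝ}
    (hd : ∀ t > 0, HasDerivAt F (F' t) t)
    (hsign : ∀ t > 0, t * F' t - p * F t ≤ 0) :
    AntitoneOn (fun t => F t * t ^ (-p)) (Set.Ioi 0) := by
  apply antitoneOn_of_deriv_nonpos (convex_Ioi 0)
  · intro t ht
    exact ((hd t ht).mul
      (Real.hasDerivAt_rpow_const (Or.inl (ne_of_gt ht)))).continuousAt.continuousWithinAt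
  · intro t ht
    rw [interior_Ioi] at ht
    exact ((hd t ht).mul
      (Real.hasDerivAt_rpow_const (Or.inl (ne_of_gt ht)))).differentiableAt.differentiableWithinAt
  · intro t ht
    rw [interior_Ioi] at ht
    have h1 : (0:ℝ) < t := ht
    rw [(show HasDerivAt (fun t => F t * t ^ (-p)) _ t from (hd t ht).mul (Real.hasDerivAt_rpow_const (Or.inl (ne_of_gt h1)))).deriv]
    have e1 : t ^ (-p-1) * t = t ^ (-p) := by
      have e := Real.rpow_add h1 (-p-1) 1
      rw [Real.rpow_one] at e
      rw [← e]; ring_nf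
    have e2 : (0:ℝ) < t ^ (-p-1) := Real.rpow_pos_of_pos h1 _
    have expand : F' t * t ^ (-p) + F t * (-p * t ^ (-p-1))
        = t ^ (-p-1) * (t * F' t - p * F t) := by rw [← e1]; ring
    rw [expand]
    exact mul_nonpos_of_nonneg_of_nonpos e2.le (hsign t h1)

lemma le_of_mono_rpow {F : ℝ → ℝ} {p : ℝ}
    (h : MonotoneOn (fun t => F t * t ^ (-p)) (Set.Ioi 0)) {a b : ℝ}
    (ha : 0 < a) (hab : a ≤ b) : F a * (b/a) ^ p ≤ F b := by
  have hb : 0 < b := lt_of_lt_of_le ha hab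
  have h1 : F a * a ^ (-p) ≤ F b * b ^ (-p) := h ha (lt_of_lt_of_le ha hab) hab
  have e1 : (b/a) ^ p = b ^ p * (a ^ p)⁻¹ := by
    rw [Real.div_rpow hb.le ha.le, div_eq_mul_inv]
  have e2 : b ^ (-p) * b ^ p = 1 := by rw [← Real.rpow_add hb]; norm_num
  have e3 : a ^ (-p) = (a ^ p)⁻¹ := by rw [Real.rpow_neg ha.le]
  have e4 : (0:ℝ) ≤ b ^ p := (Real.rpow_pos_of_pos hb p).le
  have := mul_le_mul_of_nonneg_right h1 e4
  calc F a * (b/a) ^ p = F a * a ^ (-p) * b ^ p := by rw [e1, e3]; ring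
    _ ≤ F b * b ^ (-p) * b ^ p := this
    _ = F b := by rw [mul_assoc, e2, mul_one]

lemma le_of_anti_rpow {F : ℝ → ℝ} {p : ℝ}
    (h : AntitoneOn (fun t => F t * t ^ (-p)) (Set.Ioi 0)) {a b : ℝ}
    (ha : 0 < a) (hab : a ≤ b) : F b ≤ F a * (b/a) ^ p := by
  have hb : 0 < b := lt_of_lt_of_le ha hab
  have h1 : F b * b ^ (-p) ≤ F a * a ^ (-p) := h ha (lt_of_lt_of_le ha hab) hab
  have e1 : (b/a) ^ p = b ^ p * (a ^ p)⁻¹ := by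
    rw [Real.div_rpow hb.le ha.le, div_eq_mul_inv]
  have e2 : b ^ (-p) * b ^ p = 1 := by rw [← Real.rpow_add hb]; norm_num
  have e3 : a ^ (-p) = (a ^ p)⁻¹ := by rw [Real.rpow_neg ha.le]
  have e4 : (0:ℝ) ≤ b ^ p := (Real.rpow_pos_of_pos hb p).le
  have := mul_le_mul_of_nonneg_right h1 e4
  calc F b = F b * b ^ (-p) * b ^ p := by rw [mul_assoc, e2, mul_one]
    _ ≤ F a * a ^ (-p) * b ^ p := this
    _ = F a * (b/a) ^ p := by rw [e1, e3]; ring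

end scaling

section gcomp
variable {φ : ℝ → ℝ} {ℓ m : ℝ}

/-- Growth comparisons for `g(t) = tφ(t)` and `g'`. -/
lemma gcomp_upper (hφ_pos : ∀ t > 0, 0 < φ t) (hφ_C2 : ContDiffOn ℝ 2 φ (Set.Ioi 0))
    (hm : 1 < m)
    (hφ3u : ∀ t > 0, t * deriv (deriv (fun s => s * φ s)) t ≤
      (m - 2) * deriv (fun s => s * φ s) t)
    {a b : ℝ} (ha : 0 < a) (hab : a ≤ b) :
    b * φ b ≤ (a * φ a) * (b/a) ^ (m-1) := by
  refine le_of_anti_rpow (anti_mul_rpow (fun t ht => hasDerivAt_g hφ_C2 ht) ?_) ha hab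
  intro t ht
  have := dg_upper hφ_pos hφ_C2 hm hφ3u t ht
  linarith

lemma gcomp_lower (hφ_pos : ∀ t > 0, 0 < φ t) (hφ_C2 : ContDiffOn ℝ 2 φ (Set.Ioi 0))
    (hℓ : 1 < ℓ)
    (hφ1₀ : Tendsto (fun t => t * φ t) (nhdsWithin 0 (Set.Ioi 0)) (nhds 0))
    (hφ3l : ∀ t > 0, (ℓ - 2) * deriv (fun s => s * φ s) t ≤
      t * deriv (deriv (fun s => s * φ s)) t)
    {a b : ℝ} (ha : 0 < a) (hab : a ≤ b) :
    (a * φ a) * (b/a) ^ (ℓ-1) ≤ b * φ b := by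
  refine le_of_mono_rpow (mono_mul_rpow (fun t ht => hasDerivAt_g hφ_C2 ht) ?_) ha hab
  intro t ht
  have := dg_lower hφ_pos hφ_C2 hℓ hφ1₀ hφ3l t ht
  linarith

lemma dgcomp_upper (hφ_C2 : ContDiffOn ℝ 2 φ (Set.Ioi 0))
    (hφ3u : ∀ t > 0, t * deriv (deriv (fun s => s * φ s)) t ≤
      (m - 2) * deriv (fun s => s * φ s) t)
    {a b : ℝ} (ha : 0 < a) (hab : a ≤ b) :
    deriv (fun s => s * φ s) b ≤ deriv (fun s => s * φ s) a * (b/a) ^ (m-2) := by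
  refine le_of_anti_rpow (anti_mul_rpow (fun t ht => hasDerivAt_dg hφ_C2 ht) ?_) ha hab
  intro t ht
  have := hφ3u t ht
  linarith

lemma dgcomp_lower (hφ_C2 : ContDiffOn ℝ 2 φ (Set.Ioi 0))
    (hφ3l : ∀ t > 0, (ℓ - 2) * deriv (fun s => s * φ s) t ≤
      t * deriv (deriv (fun s => s * φ s)) t)
    {a b : ℝ} (ha : 0 < a) (hab : a ≤ b) :
    deriv (fun s => s * φ s) a * (b/a) ^ (ℓ-2) ≤ deriv (fun s => s * φ s) b := by
  refine le_of_mono_rpow (mono_mul_rpow (fun t ht => hasDerivAt_dg hφ_C2 ht) ?_) ha hab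
  intro t ht
  have := hφ3l t ht
  linarith

end gcomp

section measAux

lemma meas_aux {Ω : Type*} [MeasurableSpace Ω] {h : Ω → ℝ}
    (h_meas : Measurable h) (h_nonneg : ∀ x, 0 ≤ h x) {F : ℝ → ℝ}
    (hF : ContinuousOn F (Set.Ioi 0)) {t : ℝ} (ht : 0 < t) (k : ℕ) :
    Measurable (fun x => if h x = 0 then 0 else F (t * h x) * h x ^ k) := by
  set Ft : ℝ → ℝ := fun s => if 0 < s then F s else 0 with hFt
  have hFtm : Measurable Ft := by
    apply measurable_of_continuousOn_compl_singleton (0:ℝ)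
    intro s hs
    have hs0 : s ≠ 0 := by simpa using hs
    rcases hs0.lt_or_gt with hlt | hgt
    · have hev : Ft =ᶠ[nhds s] (fun _ => (0:ℝ)) := by
        filter_upwards [Iio_mem_nhds hlt] with u hu
        have : ¬ (0:ℝ) < u := not_lt.2 (le_of_lt hu)
        simp only [hFt, if_neg this]
      exact (continuousAt_const.congr hev.symm).continuousWithinAt
    · have hev : Ft =ᶠ[nhds s] F := by
        filter_upwards [Ioi_mem_nhds hgt] with u hu
        simp only [hFt, if_pos (mem_Ioi.1 hu)]
      exact ((hF.continuousAt (Ioi_mem_nhds hgt)).congr hev.symm).continuousWithinAt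
  have heq : (fun x => if h x = 0 then 0 else F (t * h x) * h x ^ k)
      = fun x => Ft (t * h x) * h x ^ k := by
    funext x
    by_cases hx : h x = 0
    · simp [hx, hFt]
    · have hxpos : 0 < h x := lt_of_le_of_ne (h_nonneg x) (Ne.symm hx)
      simp [hx, hFt, if_pos (mul_pos ht hxpos)]
  rw [heq]
  exact (hFtm.comp (h_meas.const_mul t)).mul (h_meas.pow_const k)

end measAux

section scale2
variable {φ : ℝ → ℝ} {ℓ m : ℝ}

lemma g_scale_upper (hφ_pos : ∀ t > 0, 0 < φ t) (hφ_C2 : ContDiffOn ℝ 2 φ (Set.Ioi 0))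
    (hℓ : 1 < ℓ) (hℓm : ℓ ≤ m)
    (hφ1₀ : Tendsto (fun t => t * φ t) (nhdsWithin 0 (Set.Ioi 0)) (nhds 0))
    (hφ3l : ∀ t > 0, (ℓ - 2) * deriv (fun s => s * φ s) t ≤
      t * deriv (deriv (fun s => s * φ s)) t)
    (hφ3u : ∀ t > 0, t * deriv (deriv (fun s => s * φ s)) t ≤
      (m - 2) * deriv (fun s => s * φ s) t)
    {t s : ℝ} (ht : 0 < t) (hs : 0 < s) :
    (t*s) * φ (t*s) ≤ max (t ^ (ℓ-1)) (t ^ (m-1)) * (s * φ s) := by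
  have hm : 1 < m := lt_of_lt_of_le hℓ hℓm
  have hgs : 0 < s * φ s := mul_pos hs (hφ_pos s hs)
  rcases le_total t 1 with h1 | h1
  · have hts : t * s ≤ s := by nlinarith
    have := gcomp_lower hφ_pos hφ_C2 hℓ hφ1₀ hφ3l (mul_pos ht hs) hts
    have e : s / (t*s) = t⁻¹ := by field_simp
    rw [e, Real.inv_rpow ht.le] at this
    have hp : (0:ℝ) < t ^ (ℓ-1) := Real.rpow_pos_of_pos ht _
    have h2 : (t*s) * φ (t*s) ≤ (s * φ s) * t ^ (ℓ-1) := by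
      rw [← div_eq_mul_inv, div_le_iff₀ hp] at this
      linarith
    calc (t*s) * φ (t*s) ≤ (s * φ s) * t ^ (ℓ-1) := h2
      _ ≤ (s * φ s) * max (t ^ (ℓ-1)) (t ^ (m-1)) :=
          mul_le_mul_of_nonneg_left (le_max_left _ _) hgs.le
      _ = max (t ^ (ℓ-1)) (t ^ (m-1)) * (s * φ s) := by ring
  · have hts : s ≤ t * s := by nlinarith
    have := gcomp_upper hφ_pos hφ_C2 hm hφ3u hs hts
    have e : (t*s) / s = t := by field_simp
    rw [e] at this
    calc (t*s) * φ (t*s) ≤ (s * φ s) * t ^ (m-1) := this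
      _ ≤ (s * φ s) * max (t ^ (ℓ-1)) (t ^ (m-1)) :=
          mul_le_mul_of_nonneg_left (le_max_right _ _) hgs.le
      _ = max (t ^ (ℓ-1)) (t ^ (m-1)) * (s * φ s) := by ring

lemma g_scale_lower (hφ_pos : ∀ t > 0, 0 < φ t) (hφ_C2 : ContDiffOn ℝ 2 φ (Set.Ioi 0))
    (hℓ : 1 < ℓ) (hℓm : ℓ ≤ m)
    (hφ1₀ : Tendsto (fun t => t * φ t) (nhdsWithin 0 (Set.Ioi 0)) (nhds 0))
    (hφ3l : ∀ t > 0, (ℓ - 2) * deriv (fun s => s * φ s) t ≤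
      t * deriv (deriv (fun s => s * φ s)) t)
    (hφ3u : ∀ t > 0, t * deriv (deriv (fun s => s * φ s)) t ≤
      (m - 2) * deriv (fun s => s * φ s) t)
    {t s : ℝ} (ht : 0 < t) (hs : 0 < s) :
    min (t ^ (ℓ-1)) (t ^ (m-1)) * (s * φ s) ≤ (t*s) * φ (t*s) := by
  have hm : 1 < m := lt_of_lt_of_le hℓ hℓm
  have hgs : 0 < s * φ s := mul_pos hs (hφ_pos s hs)
  rcases le_total t 1 with h1 | h1
  · have hts : t * s ≤ s := by nlinarith
    have := gcomp_upper hφ_pos hφ_C2 hm hφ3u (mul_pos ht hs) hts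
    have e : s / (t*s) = t⁻¹ := by field_simp
    rw [e, Real.inv_rpow ht.le] at this
    have hp : (0:ℝ) < t ^ (m-1) := Real.rpow_pos_of_pos ht _
    have h2 : (s * φ s) * t ^ (m-1) ≤ (t*s) * φ (t*s) := by
      rw [← div_eq_mul_inv, le_div_iff₀ hp] at this
      linarith
    calc min (t ^ (ℓ-1)) (t ^ (m-1)) * (s * φ s)
        ≤ t ^ (m-1) * (s * φ s) :=
          mul_le_mul_of_nonneg_right (min_le_right _ _) hgs.le
      _ = (s * φ s) * t ^ (m-1) := by ring
      _ ≤ (t*s) * φ (t*s) := h2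
  · have hts : s ≤ t * s := by nlinarith
    have := gcomp_lower hφ_pos hφ_C2 hℓ hφ1₀ hφ3l hs hts
    have e : (t*s) / s = t := by field_simp
    rw [e] at this
    calc min (t ^ (ℓ-1)) (t ^ (m-1)) * (s * φ s)
        ≤ t ^ (ℓ-1) * (s * φ s) :=
          mul_le_mul_of_nonneg_right (min_le_left _ _) hgs.le
      _ = (s * φ s) * t ^ (ℓ-1) := by ring
      _ ≤ (t*s) * φ (t*s) := this

lemma dg_scale (hφ_C2 : ContDiffOn ℝ 2 φ (Set.Ioi 0))
    (hφ3u : ∀ t > 0, t * deriv (deriv (fun s => s * φ s)) t ≤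
      (m - 2) * deriv (fun s => s * φ s) t)
    {a u s : ℝ} (ha : 0 < a) (hau : a ≤ u) (hs : 0 < s) :
    deriv (fun s => s * φ s) (u*s) ≤ deriv (fun s => s * φ s) (a*s) * (u/a) ^ (m-2) := by
  have := dgcomp_upper hφ_C2 hφ3u (mul_pos ha hs) (by nlinarith : a * s ≤ u * s)
  have e : (u*s)/(a*s) = u/a := mul_div_mul_right _ _ hs.ne'
  rwa [e] at this

end scale2


lemma rpow_identity {s t : ℝ} (hs : 0 < s) (ht : 0 < t) (p q : ℝ) :
    (t/s) ^ p * t ^ q = (t/s) ^ (p+q) * s ^ q := by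
  have h1 : s ^ (p+q) = s^p * s^q := Real.rpow_add hs p q
  have h2 : t ^ (p+q) = t^p * t^q := Real.rpow_add ht p q
  rw [Real.div_rpow ht.le hs.le, Real.div_rpow ht.le hs.le, h1, h2]
  have e1 : s ^ p ≠ 0 := (Real.rpow_pos_of_pos hs p).ne'
  have e2 : s ^ q ≠ 0 := (Real.rpow_pos_of_pos hs q).ne'
  field_simp


set_option maxHeartbeats 2000000

/-- let `t̃ > 0` be the unique global maximum point of `m_h` on `(0,∞)` and
`c ∈ ℝ`.  If `c ≤ 0` then `m_h(t) = c` has exactly one solution `t₁ > 0`, and `t₁ > t̃`.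
If `0 < c < m_h(t̃)` then `m_h(t) = c` has exactly two solutions `t₁ < t₂` in `(0,∞)`,
with `t₁ < t̃ < t₂`. -/
theorem stmt_10 (φ : ℝ → ℝ) (ℓ m : ℝ)
    (hφ_pos : ∀ t > 0, 0 < φ t)
    (hφ_C2 : ContDiffOn ℝ 2 φ (Set.Ioi 0))
    (hℓ : 1 < ℓ) (hℓm : ℓ ≤ m)
    (hφ1₀ : Tendsto (fun t => t * φ t) (nhdsWithin 0 (Set.Ioi 0)) (nhds 0))
    (hφ1top : Tendsto (fun t => t * φ t) atTop atTop)
    (hφ2 : StrictMonoOn (fun t => t * φ t) (Set.Ioi 0))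
    (hφ3 : ∀ t > 0,
      (ℓ - 2) * deriv (fun s => s * φ s) t ≤ t * deriv (deriv (fun s => s * φ s)) t ∧
      t * deriv (deriv (fun s => s * φ s)) t ≤ (m - 2) * deriv (fun s => s * φ s) t)
    (lstar : ℝ) (hlstar : m < lstar)
    {Ω : Type*} [MeasurableSpace Ω] (μ : Measure Ω) (h : Ω → ℝ)
    (h_meas : Measurable h) (h_nonneg : ∀ x, 0 ≤ h x)
    (h_int : Integrable (fun x => if h x = 0 then 0 else φ (h x) * h x ^ 2) μ)
    (h_pos : 0 < ∫ x, (if h x = 0 then 0 else φ (h x) * h x ^ 2) ∂μ)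
    (B : ℝ) (hB : 0 < B)
    (ttil : ℝ) (httil : 0 < ttil)
    (hmax : ∀ t > 0, t ≠ ttil → mh φ μ h lstar B t < mh φ μ h lstar B ttil)
    (c : ℝ) :
    (c ≤ 0 →
      (∃! t₁ : ℝ, 0 < t₁ ∧ mh φ μ h lstar B t₁ = c) ∧
      (∀ t₁ > 0, mh φ μ h lstar B t₁ = c → ttil < t₁)) ∧
    (0 < c → c < mh φ μ h lstar B ttil →
      ∃ t₁ t₂ : ℝ, 0 < t₁ ∧ t₁ < ttil ∧ ttil < t₂ ∧
        mh φ μ h lstar B t₁ = c ∧ mh φ μ h lstar B t₂ = c ∧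
        (∀ t > 0, mh φ μ h lstar B t = c → t = t₁ ∨ t = t₂)) := by
  have hm : 1 < m := lt_of_lt_of_le hℓ hℓm
  have hls1 : 1 < lstar := lt_trans hm hlstar
  have hφ3l : ∀ t > 0, (ℓ - 2) * deriv (fun s => s * φ s) t ≤
      t * deriv (deriv (fun s => s * φ s)) t := fun t ht => (hφ3 t ht).1
  have hφ3u : ∀ t > 0, t * deriv (deriv (fun s => s * φ s)) t ≤
      (m - 2) * deriv (fun s => s * φ s) t := fun t ht => (hφ3 t ht).2
  set F := mh φ μ h lstar B with hF
  set A : ℝ := ∫ x, (if h x = 0 then 0 else φ (h x) * h x ^ 2) ∂μ with hA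
  -- the integrand of `G`
  set gi : ℝ → Ω → ℝ :=
    fun t x => if h x = 0 then 0 else ((t * h x) * φ (t * h x)) * h x ^ 1 with hgi
  set gdi : ℝ → Ω → ℝ :=
    fun t x => if h x = 0 then 0 else deriv (fun s => s * φ s) (t * h x) * h x ^ 2 with hgdi
  set G : ℝ → ℝ := fun t => ∫ x, gi t x ∂μ with hG
  set Gd : ℝ → ℝ := fun t => ∫ x, gdi t x ∂μ with hGd
  have g_cont : ContinuousOn (fun s : ℝ => s * φ s) (Set.Ioi 0) :=
    (g_contDiff hφ_C2).continuousOn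
  have dg_cd : ContDiffOn ℝ 1 (deriv (fun s : ℝ => s * φ s)) (Set.Ioi 0) :=
    (g_contDiff hφ_C2).deriv_of_isOpen isOpen_Ioi (by norm_num)
  have dg_cont : ContinuousOn (deriv (fun s : ℝ => s * φ s)) (Set.Ioi 0) :=
    dg_cd.continuousOn
  -- S1 : measurability
  have meas_gi : ∀ t : ℝ, 0 < t → Measurable (gi t) := by
    intro t ht
    have := meas_aux h_meas h_nonneg g_cont ht 1
    simpa [hgi] using this
  have meas_gdi : ∀ t : ℝ, 0 < t → Measurable (gdi t) := by
    intro t ht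
    have := meas_aux h_meas h_nonneg dg_cont ht 2
    simpa [hgdi] using this
  -- pointwise bounds for `gi`
  have gi_nonneg : ∀ t : ℝ, 0 < t → ∀ x, 0 ≤ gi t x := by
    intro t ht x
    by_cases hx : h x = 0
    · simp [hgi, hx]
    · have hxpos : 0 < h x := lt_of_le_of_ne (h_nonneg x) (Ne.symm hx)
      have h1 : 0 < t * h x := mul_pos ht hxpos
      simp only [hgi, if_neg hx]
      exact mul_nonneg (mul_pos h1 (hφ_pos _ h1)).le (pow_nonneg (h_nonneg x) 1)
  have base_nonneg : ∀ x, 0 ≤ (if h x = 0 then 0 else φ (h x) * h x ^ 2) := by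
    intro x
    by_cases hx : h x = 0
    · simp [hx]
    · have hxpos : 0 < h x := lt_of_le_of_ne (h_nonneg x) (Ne.symm hx)
      simp only [if_neg hx]
      exact mul_nonneg (hφ_pos _ hxpos).le (pow_nonneg (h_nonneg x) 2)
  have gi_le : ∀ t : ℝ, 0 < t → ∀ x,
      gi t x ≤ max (t ^ (ℓ-1)) (t ^ (m-1)) * (if h x = 0 then 0 else φ (h x) * h x ^ 2) := by
    intro t ht x
    by_cases hx : h x = 0
    · simp [hgi, hx]
    · have hxpos : 0 < h x := lt_of_le_of_ne (h_nonneg x) (Ne.symm hx)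
      simp only [hgi, if_neg hx, pow_one]
      have h2 := g_scale_upper hφ_pos hφ_C2 hℓ hℓm hφ1₀ hφ3l hφ3u ht hxpos
      have h3 := mul_le_mul_of_nonneg_right h2 (h_nonneg x)
      nlinarith [h3]
  have gi_ge : ∀ t : ℝ, 0 < t → ∀ x,
      min (t ^ (ℓ-1)) (t ^ (m-1)) * (if h x = 0 then 0 else φ (h x) * h x ^ 2) ≤ gi t x := by
    intro t ht x
    by_cases hx : h x = 0
    · simp [hgi, hx]
    · have hxpos : 0 < h x := lt_of_le_of_ne (h_nonneg x) (Ne.symm hx)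
      simp only [hgi, if_neg hx, pow_one]
      have h2 := g_scale_lower hφ_pos hφ_C2 hℓ hℓm hφ1₀ hφ3l hφ3u ht hxpos
      have h3 := mul_le_mul_of_nonneg_right h2 (h_nonneg x)
      nlinarith [h3]
  -- S2 : integrability of gi
  have int_gi : ∀ t : ℝ, 0 < t → Integrable (gi t) μ := by
    intro t ht
    apply Integrable.mono' (h_int.const_mul (max (t ^ (ℓ-1)) (t ^ (m-1))))
      (meas_gi t ht).aestronglyMeasurable
    filter_upwards with x
    rw [Real.norm_eq_abs, abs_of_nonneg (gi_nonneg t ht x)]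
    exact gi_le t ht x
  -- S3 : rewriting mh
  have hG_eq : ∀ t : ℝ, 0 < t → F t = G t - t ^ (lstar - 1) * B := by
    intro t ht
    have : G t = t * (∫ x, (if h x = 0 then 0 else φ (t * h x) * h x ^ 2) ∂μ) := by
      rw [hG, ← integral_const_mul]
      apply integral_congr_ae
      filter_upwards with x
      by_cases hx : h x = 0
      · simp [hgi, hx]
      · simp only [hgi, if_neg hx]
        ring
    rw [hF]
    show t * _ - t ^ (lstar - 1) * B = G t - t ^ (lstar - 1) * B
    rw [this]
  -- S4 : bounds on G
  have hG_le : ∀ t : ℝ, 0 < t → G t ≤ max (t ^ (ℓ-1)) (t ^ (m-1)) * A := by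
    intro t ht
    rw [hG, hA, ← integral_const_mul]
    exact integral_mono (int_gi t ht) (h_int.const_mul _) (gi_le t ht)
  have hG_ge : ∀ t : ℝ, 0 < t → min (t ^ (ℓ-1)) (t ^ (m-1)) * A ≤ G t := by
    intro t ht
    rw [hG, hA, ← integral_const_mul]
    exact integral_mono (h_int.const_mul _) (int_gi t ht) (gi_ge t ht)
  have hG_pos : ∀ t : ℝ, 0 < t → 0 < G t := by
    intro t ht
    refine lt_of_lt_of_le ?_ (hG_ge t ht)
    have h1 : 0 < t ^ (ℓ-1) := Real.rpow_pos_of_pos ht _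
    have h2 : 0 < t ^ (m-1) := Real.rpow_pos_of_pos ht _
    exact mul_pos (lt_min h1 h2) h_pos
    -- S5 : differentiation under the integral sign
  have dg_pos : ∀ v : ℝ, 0 < v → 0 < deriv (fun s => s * φ s) v := by
    intro v hv
    have h1 := dg_lower hφ_pos hφ_C2 hℓ hφ1₀ hφ3l v hv
    have h2 : 0 < v * φ v := mul_pos hv (hφ_pos v hv)
    nlinarith
  have gdi_nonneg : ∀ t : ℝ, 0 < t → ∀ x, 0 ≤ gdi t x := by
    intro t ht x
    by_cases hx : h x = 0
    · simp [hgdi, hx]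
    · have hxpos : 0 < h x := lt_of_le_of_ne (h_nonneg x) (Ne.symm hx)
      simp only [hgdi, if_neg hx]
      exact mul_nonneg (dg_pos _ (mul_pos ht hxpos)).le (pow_nonneg (h_nonneg x) 2)
  have hasDeriv_G : ∀ t : ℝ, 0 < t →
      Integrable (gdi t) μ ∧ HasDerivAt G (Gd t) t := by
    intro t ht
    set Mb : ℝ := max 1 ((3:ℝ) ^ (m-2)) with hMb
    have hMbpos : (0:ℝ) < Mb := lt_of_lt_of_le one_pos (le_max_left _ _)
    have ht2 : 0 < t/2 := by linarith
    have int_phia : Integrable (fun x => if h x = 0 then 0 else φ ((t/2) * h x) * h x ^ 2) μ := by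
      have hi := (int_gi (t/2) ht2).const_mul (t/2)⁻¹
      apply hi.congr
      filter_upwards with x
      by_cases hx : h x = 0
      · simp [hgi, hx]
      · simp only [hgi, if_neg hx, pow_one]
        have : h x ≠ 0 := hx
        field_simp
    have hb_int : Integrable (fun x => (Mb * (m-1)) *
        (if h x = 0 then 0 else φ ((t/2) * h x) * h x ^ 2)) μ := int_phia.const_mul _
    have key := hasDerivAt_integral_of_dominated_loc_of_deriv_le (s := Metric.ball t (t/2)) (μ := μ)
      (F := fun u x => gi u x) (F' := fun u x => gdi u x) (x₀ := t)
      (bound := fun x => (Mb * (m-1)) * (if h x = 0 then 0 else φ ((t/2) * h x) * h x ^ 2))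
      (Metric.ball_mem_nhds t ht2) ?_ (int_gi t ht) ?_ ?_ hb_int ?_
    · exact key
    · filter_upwards [Ioi_mem_nhds ht] with u hu
      exact (meas_gi u hu).aestronglyMeasurable
    · exact (meas_gdi t ht).aestronglyMeasurable
    · -- the uniform bound on the derivative
      filter_upwards with x
      intro u hu
      rw [Metric.mem_ball, Real.dist_eq] at hu
      have hu1 : t/2 < u := by
        rcases abs_lt.1 hu with ⟨hl, hr⟩; linarith
      have hu3 : u ≤ 3 * (t/2) := by
        rcases abs_lt.1 hu with ⟨hl, hr⟩; linarith
      have hupos : 0 < u := lt_trans ht2 hu1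
      by_cases hx : h x = 0
      · simp [hgdi, hx]
      · have hxpos : 0 < h x := lt_of_le_of_ne (h_nonneg x) (Ne.symm hx)
        simp only [hgdi, if_neg hx]
        set s' := h x with hs'
        have hD : 0 < deriv (fun s => s * φ s) ((t/2) * s') := dg_pos _ (mul_pos ht2 hxpos)
        have f1 := dg_scale hφ_C2 hφ3u ht2 hu1.le hxpos
        have hua1 : 1 ≤ u/(t/2) := (one_le_div ht2).2 hu1.le
        have hua3 : u/(t/2) ≤ 3 := (div_le_iff₀ ht2).2 (by linarith)
        have hMle : (u/(t/2)) ^ (m-2) ≤ Mb := by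
          rcases le_total 2 m with h2m | h2m
          · exact le_trans (Real.rpow_le_rpow (by positivity) hua3 (by linarith))
              (le_max_right _ _)
          · exact le_trans (Real.rpow_le_one_of_one_le_of_nonpos hua1 (by linarith))
              (le_max_left _ _)
        have f1' : deriv (fun s => s * φ s) (u*s') ≤ deriv (fun s => s * φ s) ((t/2)*s') * Mb :=
          f1.trans (mul_le_mul_of_nonneg_left hMle hD.le)
        have f2 := dg_upper hφ_pos hφ_C2 hm hφ3u ((t/2)*s') (mul_pos ht2 hxpos)
        have f2'' : (t/2) * (s' * deriv (fun s => s * φ s) ((t/2)*s'))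
            ≤ (t/2) * ((m-1) * (s' * φ ((t/2)*s'))) := by nlinarith [f2]
        have f2' := (mul_le_mul_iff_right₀ ht2).1 f2''
        have hnn : 0 ≤ deriv (fun s => s * φ s) (u*s') * s'^2 :=
          mul_nonneg (dg_pos _ (mul_pos hupos hxpos)).le (sq_nonneg _)
        rw [Real.norm_eq_abs, abs_of_nonneg hnn]
        nlinarith [mul_le_mul_of_nonneg_right f1' (sq_nonneg s'),
          mul_le_mul_of_nonneg_left f2' (mul_nonneg hMbpos.le (h_nonneg x)), hxpos]
    · -- a.e. differentiability in the parameter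
      filter_upwards with x
      intro u hu
      rw [Metric.mem_ball, Real.dist_eq] at hu
      have hu1 : t/2 < u := by
        rcases abs_lt.1 hu with ⟨hl, hr⟩; linarith
      have hupos : 0 < u := lt_trans ht2 hu1
      by_cases hx : h x = 0
      · simp only [hgi, hgdi, if_pos hx]
        exact hasDerivAt_const u 0
      · have hxpos : 0 < h x := lt_of_le_of_ne (h_nonneg x) (Ne.symm hx)
        simp only [hgi, hgdi, if_neg hx]
        have h1 : HasDerivAt (fun v : ℝ => v * h x) (h x) u := by
          simpa using (hasDerivAt_id u).mul_const (h x)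
        have h2 := (hasDerivAt_g hφ_C2 (mul_pos hupos hxpos)).comp u h1
        have h3 := h2.mul_const ((h x) ^ (1:ℕ))
        simp only [Function.comp] at h3
        exact h3.congr_deriv (by ring)
  have int_gdi : ∀ t : ℝ, 0 < t → Integrable (gdi t) μ := fun t ht => (hasDeriv_G t ht).1
  -- S6 : bounds on Gd and strict antitonicity of r
  have hGd_lb : ∀ t : ℝ, 0 < t → (ℓ-1) * G t ≤ t * Gd t := by
    intro t ht
    have e1 : t * Gd t = ∫ x, t * gdi t x ∂μ := (integral_const_mul t _).symm
    have e2 : (ℓ-1) * G t = ∫ x, (ℓ-1) * gi t x ∂μ := (integral_const_mul _ _).symm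
    rw [e1, e2]
    apply integral_mono ((int_gi t ht).const_mul _) ((int_gdi t ht).const_mul _)
    intro x
    by_cases hx : h x = 0
    · simp [hgi, hgdi, hx]
    · have hxpos : 0 < h x := lt_of_le_of_ne (h_nonneg x) (Ne.symm hx)
      simp only [hgi, hgdi, if_neg hx, pow_one]
      have hdl := dg_lower hφ_pos hφ_C2 hℓ hφ1₀ hφ3l (t * h x) (mul_pos ht hxpos)
      nlinarith [mul_le_mul_of_nonneg_right hdl (h_nonneg x)]
  have hGd_ub : ∀ t : ℝ, 0 < t → t * Gd t ≤ (m-1) * G t := by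
    intro t ht
    have e1 : t * Gd t = ∫ x, t * gdi t x ∂μ := (integral_const_mul t _).symm
    have e3 : (m-1) * G t = ∫ x, (m-1) * gi t x ∂μ := (integral_const_mul _ _).symm
    rw [e1, e3]
    apply integral_mono ((int_gdi t ht).const_mul _) ((int_gi t ht).const_mul _)
    intro x
    by_cases hx : h x = 0
    · simp [hgi, hgdi, hx]
    · have hxpos : 0 < h x := lt_of_le_of_ne (h_nonneg x) (Ne.symm hx)
      simp only [hgi, hgdi, if_neg hx, pow_one]
      have hdu := dg_upper hφ_pos hφ_C2 hm hφ3u (t * h x) (mul_pos ht hxpos)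
      nlinarith [mul_le_mul_of_nonneg_right hdu (h_nonneg x)]
  have hGd_pos : ∀ t : ℝ, 0 < t → 0 < Gd t := by
    intro t ht
    have h1 := hGd_lb t ht
    have h2 := hG_pos t ht
    nlinarith
  have hr_anti : ∀ s t : ℝ, 0 < s → s < t →
      Gd t * t ^ (2-lstar) < Gd s * s ^ (2-lstar) := by
    intro s t hs hst
    have ht : 0 < t := hs.trans hst
    have hpoint : ∀ x, t ^ (2-lstar) * gdi t x
        ≤ ((t/s) ^ (m-lstar) * s ^ (2-lstar)) * gdi s x := by
      intro x
      by_cases hx : h x = 0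
      · simp [hgdi, hx]
      · have hxpos : 0 < h x := lt_of_le_of_ne (h_nonneg x) (Ne.symm hx)
        simp only [hgdi, if_neg hx]
        have f1 := dg_scale hφ_C2 hφ3u hs hst.le hxpos
        have hid : (t/s) ^ (m-2) * t ^ (2-lstar) = (t/s) ^ (m-lstar) * s ^ (2-lstar) := by
          have := rpow_identity hs ht (m-2) (2-lstar)
          have he : m - 2 + (2 - lstar) = m - lstar := by ring
          rwa [he] at this
        have hDs : 0 < deriv (fun s => s * φ s) (s * h x) := dg_pos _ (mul_pos hs hxpos)
        have htp : (0:ℝ) < t ^ (2-lstar) := Real.rpow_pos_of_pos ht _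
        have step := mul_le_mul_of_nonneg_right f1
          (mul_nonneg htp.le (sq_nonneg (h x)))
        calc t ^ (2-lstar) * (deriv (fun s => s * φ s) (t * h x) * h x ^ 2)
            = deriv (fun s => s * φ s) (t * h x) * (t ^ (2-lstar) * h x ^ 2) := by ring
          _ ≤ deriv (fun s => s * φ s) (s * h x) * (t/s) ^ (m-2) * (t ^ (2-lstar) * h x ^ 2) :=
              step
          _ = ((t/s) ^ (m-2) * t ^ (2-lstar)) * (deriv (fun s => s * φ s) (s * h x) * h x ^ 2) := by
              ring
          _ = ((t/s) ^ (m-lstar) * s ^ (2-lstar)) * (deriv (fun s => s * φ s) (s * h x) * h x ^ 2) := by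
              rw [hid]
    have hint : t ^ (2-lstar) * Gd t ≤ ((t/s) ^ (m-lstar) * s ^ (2-lstar)) * Gd s := by
      have e1 : t ^ (2-lstar) * Gd t = ∫ x, t ^ (2-lstar) * gdi t x ∂μ :=
        (integral_const_mul _ _).symm
      have e2 : ((t/s) ^ (m-lstar) * s ^ (2-lstar)) * Gd s
          = ∫ x, ((t/s) ^ (m-lstar) * s ^ (2-lstar)) * gdi s x ∂μ :=
        (integral_const_mul _ _).symm
      rw [e1, e2]
      exact integral_mono ((int_gdi t ht).const_mul _) ((int_gdi s hs).const_mul _) hpoint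
    have hfac : (t/s) ^ (m-lstar) < 1 :=
      Real.rpow_lt_one_of_one_lt_of_neg ((one_lt_div hs).2 hst) (by linarith)
    have hX : 0 < Gd s * s ^ (2-lstar) :=
      mul_pos (hGd_pos s hs) (Real.rpow_pos_of_pos hs _)
    nlinarith [hint, hfac, hX]
  -- S7 : derivative of F
  set fd : ℝ → ℝ := fun t => Gd t - (lstar - 1) * t ^ (lstar - 2) * B with hfd
  have hasDeriv_F : ∀ t : ℝ, 0 < t → HasDerivAt F (fd t) t := by
    intro t ht
    have h1 : HasDerivAt (fun u : ℝ => G u - u ^ (lstar-1) * B)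
        (Gd t - (lstar-1) * t ^ (lstar-1-1) * B) t :=
      (hasDeriv_G t ht).2.sub ((Real.hasDerivAt_rpow_const (Or.inl ht.ne')).mul_const B)
    have h2 : F =ᶠ[nhds t] (fun u => G u - u ^ (lstar-1) * B) := by
      filter_upwards [Ioi_mem_nhds ht] with u hu using hG_eq u hu
    have h3 := h1.congr_of_eventuallyEq h2
    have he : lstar - 1 - 1 = lstar - 2 := by ring
    rwa [he] at h3
  -- relation between sign of fd and r
  set r : ℝ → ℝ := fun t => Gd t * t ^ (2 - lstar) with hrdef
  have hGd_r : ∀ t : ℝ, 0 < t → Gd t = r t * t ^ (lstar - 2) := by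
    intro t ht
    rw [hrdef]
    have e : t ^ (2-lstar) * t ^ (lstar-2) = 1 := by
      rw [← Real.rpow_add ht]; norm_num
    calc Gd t = Gd t * (t ^ (2-lstar) * t ^ (lstar-2)) := by rw [e, mul_one]
      _ = Gd t * t ^ (2-lstar) * t ^ (lstar-2) := by ring
  have hfd_eq : ∀ t : ℝ, 0 < t → fd t = (r t - (lstar-1) * B) * t ^ (lstar-2) := by
    intro t ht
    rw [hfd]
    simp only []
    rw [hGd_r t ht]
    ring
  have hfd_pos : ∀ t : ℝ, 0 < t → (lstar-1) * B < r t → 0 < fd t := by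
    intro t ht hrt
    rw [hfd_eq t ht]
    exact mul_pos (by linarith) (Real.rpow_pos_of_pos ht _)
  have hfd_neg : ∀ t : ℝ, 0 < t → r t < (lstar-1) * B → fd t < 0 := by
    intro t ht hrt
    rw [hfd_eq t ht]
    exact mul_neg_of_neg_of_pos (by linarith) (Real.rpow_pos_of_pos ht _)
  have hr_of_fd_nonpos : ∀ t : ℝ, 0 < t → fd t ≤ 0 → r t ≤ (lstar-1) * B := by
    intro t ht hle
    by_contra hcon
    push_neg at hcon
    exact absurd (hfd_pos t ht hcon) (not_lt.2 hle)
  have hr_of_fd_nonneg : ∀ t : ℝ, 0 < t → 0 ≤ fd t → (lstar-1) * B ≤ r t := by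
    intro t ht hle
    by_contra hcon
    push_neg at hcon
    exact absurd (hfd_neg t ht hcon) (not_lt.2 hle)
  -- S8 : monotonicity structure
  have lemA : ∀ t₀ : ℝ, 0 < t₀ → fd t₀ ≤ 0 → StrictAntiOn F (Set.Ici t₀) := by
    intro t₀ ht₀ hfd0
    apply strictAntiOn_of_deriv_neg (convex_Ici t₀)
    · intro u hu
      have hupos : 0 < u := lt_of_lt_of_le ht₀ hu
      exact (hasDeriv_F u hupos).continuousAt.continuousWithinAt
    · intro u hu
      rw [interior_Ici] at hu
      have hupos : 0 < u := lt_trans ht₀ hu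
      rw [(hasDeriv_F u hupos).deriv]
      exact hfd_neg u hupos
        (lt_of_lt_of_le (hr_anti t₀ u ht₀ hu) (hr_of_fd_nonpos t₀ ht₀ hfd0))
  have lemB : ∀ t₀ : ℝ, 0 < t₀ → 0 ≤ fd t₀ → StrictMonoOn F (Set.Ioc 0 t₀) := by
    intro t₀ ht₀ hfd0
    apply strictMonoOn_of_deriv_pos (convex_Ioc 0 t₀)
    · intro u hu
      exact (hasDeriv_F u hu.1).continuousAt.continuousWithinAt
    · intro u hu
      rw [interior_Ioc] at hu
      rw [(hasDeriv_F u hu.1).deriv]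
      exact hfd_pos u hu.1
        (lt_of_le_of_lt (hr_of_fd_nonneg t₀ ht₀ hfd0) (hr_anti u t₀ hu.1 hu.2))
  have hmono : StrictMonoOn F (Set.Ioc 0 ttil) := by
    apply strictMonoOn_of_deriv_pos (convex_Ioc 0 ttil)
    · intro u hu
      exact (hasDeriv_F u hu.1).continuousAt.continuousWithinAt
    · intro u hu
      rw [interior_Ioc] at hu
      rw [(hasDeriv_F u hu.1).deriv]
      by_contra hcon
      push_neg at hcon
      have hanti := lemA u hu.1 hcon
      have := hanti (le_refl u : u ∈ Set.Ici u) (le_of_lt hu.2 : ttil ∈ Set.Ici u) hu.2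
      exact absurd this (not_lt.2 (hmax u hu.1 (ne_of_lt hu.2)).le)
  have hanti : StrictAntiOn F (Set.Ici ttil) := by
    apply strictAntiOn_of_deriv_neg (convex_Ici ttil)
    · intro u hu
      have hupos : 0 < u := lt_of_lt_of_le httil hu
      exact (hasDeriv_F u hupos).continuousAt.continuousWithinAt
    · intro u hu
      rw [interior_Ici] at hu
      have hupos : 0 < u := lt_trans httil hu
      rw [(hasDeriv_F u hupos).deriv]
      by_contra hcon
      push_neg at hcon
      have hmono' := lemB u hupos hcon
      have := hmono' (⟨httil, hu.le⟩ : ttil ∈ Set.Ioc 0 u)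
        (⟨hupos, le_refl u⟩ : u ∈ Set.Ioc 0 u) hu
      exact absurd this (not_lt.2 (hmax u hupos (ne_of_gt hu)).le)
  -- S9 : values of F near 0 and at infinity
  have hub : ∀ t : ℝ, 0 < t → t ≤ 1 → F t ≤ t ^ (ℓ-1) * A := by
    intro t ht ht1
    have h1 := hG_le t ht
    have h2 : t ^ (m-1) ≤ t ^ (ℓ-1) :=
      Real.rpow_le_rpow_of_exponent_ge ht ht1 (by linarith)
    have h3 : max (t ^ (ℓ-1)) (t ^ (m-1)) = t ^ (ℓ-1) := max_eq_left h2
    have h4 : 0 < t ^ (lstar-1) * B := mul_pos (Real.rpow_pos_of_pos ht _) hB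
    rw [hG_eq t ht]
    rw [h3] at h1
    linarith
  have hlb : ∀ t : ℝ, 0 < t → t ≤ 1 → t ^ (m-1) * A - t ^ (lstar-1) * B ≤ F t := by
    intro t ht ht1
    have h1 := hG_ge t ht
    have h2 : t ^ (m-1) ≤ t ^ (ℓ-1) :=
      Real.rpow_le_rpow_of_exponent_ge ht ht1 (by linarith)
    have h3 : min (t ^ (ℓ-1)) (t ^ (m-1)) = t ^ (m-1) := min_eq_right h2
    rw [hG_eq t ht]
    rw [h3] at h1
    linarith
  have hev_pos : ∀ᶠ t in nhdsWithin 0 (Set.Ioi 0), 0 < F t := by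
    have htend : Tendsto (fun t : ℝ => t ^ (lstar-m)) (nhdsWithin 0 (Set.Ioi 0)) (nhds 0) :=
      tendsto_rpow_zero' (by linarith)
    have hev1 : ∀ᶠ t in nhdsWithin 0 (Set.Ioi 0), t ^ (lstar-m) < A / B :=
      htend.eventually_lt_const (div_pos h_pos hB)
    have hmem : Set.Ioc (0:ℝ) 1 ∈ nhdsWithin 0 (Set.Ioi 0) :=
      Ioc_mem_nhdsGT_of_mem ⟨le_refl _, one_pos⟩
    filter_upwards [hev1, eventually_mem_set.2 hmem] with t h1 h2
    have ht : 0 < t := h2.1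
    have hp : 0 < t ^ (m-1) := Real.rpow_pos_of_pos ht _
    have e : t ^ (m-1) * t ^ (lstar-m) = t ^ (lstar-1) := by
      have e' := (Real.rpow_add ht (m-1) (lstar-m)).symm
      rw [show m-1+(lstar-m) = lstar-1 from by ring] at e'
      exact e'
    have h1' : t ^ (lstar-m) * B < A := (lt_div_iff₀ hB).1 h1
    have key : t ^ (lstar-1) * B < t ^ (m-1) * A := by
      have h5 := mul_lt_mul_of_pos_left h1' hp
      calc t ^ (lstar-1) * B = t ^ (m-1) * (t ^ (lstar-m) * B) := by rw [← e]; ring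
        _ < t ^ (m-1) * A := h5
    have := hlb t ht h2.2
    linarith
  have hFpos : ∀ t : ℝ, 0 < t → t ≤ ttil → 0 < F t := by
    intro t ht htt
    obtain ⟨s, hs1, hs2⟩ := (hev_pos.and (eventually_mem_set.2
      (Ioo_mem_nhdsGT_of_mem ⟨le_refl (0:ℝ), ht⟩))).exists
    exact lt_trans hs1 (hmono ⟨hs2.1, le_trans hs2.2.le htt⟩ ⟨ht, htt⟩ hs2.2)
  have hFttil : 0 < F ttil := hFpos ttil httil le_rfl
  have hlarge : ∀ c' : ℝ, ∃ T : ℝ, ttil < T ∧ F T < c' := by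
    intro c'
    have h1 : Tendsto (fun T : ℝ => T ^ (m-1)) atTop atTop :=
      tendsto_rpow_atTop (by linarith)
    have h3 : Tendsto (fun T : ℝ => B * T ^ (lstar-m)) atTop atTop :=
      (tendsto_rpow_atTop (by linarith)).const_mul_atTop hB
    have h2 : Tendsto (fun T : ℝ => A - B * T ^ (lstar-m)) atTop atBot := by
      have h2' := tendsto_atBot_add_const_left atTop A (tendsto_neg_atTop_atBot.comp h3)
      simpa [sub_eq_add_neg, Function.comp] using h2'
    have h4 : Tendsto (fun T : ℝ => T ^ (m-1) * (A - B * T ^ (lstar-m))) atTop atBot :=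
      h1.atTop_mul_atBot₀ h2
    have h5 : ∀ᶠ T in atTop, T ^ (m-1) * (A - B * T ^ (lstar-m)) < c' :=
      h4.eventually_lt_atBot c'
    have h6 : ∀ᶠ T : ℝ in atTop, max 1 (ttil+1) ≤ T := eventually_ge_atTop _
    obtain ⟨T, hT1, hT2⟩ := (h5.and h6).exists
    have hTpos : (0:ℝ) < T := lt_of_lt_of_le one_pos (le_trans (le_max_left _ _) hT2)
    have hT1' : (1:ℝ) ≤ T := le_trans (le_max_left _ _) hT2
    refine ⟨T, ?_, ?_⟩
    · have := le_trans (le_max_right 1 (ttil+1)) hT2; linarith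
    · have hG1 := hG_le T hTpos
      have hmax' : max (T ^ (ℓ-1)) (T ^ (m-1)) = T ^ (m-1) :=
        max_eq_right (Real.rpow_le_rpow_of_exponent_le hT1' (by linarith))
      have e : T ^ (m-1) * T ^ (lstar-m) = T ^ (lstar-1) := by
        have e' := (Real.rpow_add hTpos (m-1) (lstar-m)).symm
        rw [show m-1+(lstar-m) = lstar-1 from by ring] at e'
        exact e'
      rw [hG_eq T hTpos]
      rw [hmax'] at hG1
      calc G T - T ^ (lstar-1) * B ≤ T ^ (m-1) * A - T ^ (lstar-1) * B := by linarith
        _ = T ^ (m-1) * (A - B * T ^ (lstar-m)) := by rw [← e]; ring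
        _ < c' := hT1
  have hsmall : ∀ c' : ℝ, 0 < c' → ∃ ε : ℝ, 0 < ε ∧ ε < ttil ∧ F ε < c' := by
    intro c' hc'
    have htend : Tendsto (fun t : ℝ => t ^ (ℓ-1) * A) (nhdsWithin 0 (Set.Ioi 0)) (nhds 0) := by
      have := (tendsto_rpow_zero' (by linarith : (0:ℝ) < ℓ-1)).mul_const A
      simpa using this
    have hev1 := htend.eventually_lt_const hc'
    obtain ⟨ε, hε1, hε2⟩ := (hev1.and (eventually_mem_set.2
      (Ioo_mem_nhdsGT_of_mem ⟨le_refl (0:ℝ), lt_min httil one_pos⟩))).exists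
    refine ⟨ε, hε2.1, lt_of_lt_of_le hε2.2 (min_le_left _ _), ?_⟩
    have := hub ε hε2.1 (le_of_lt (lt_of_lt_of_le hε2.2 (min_le_right _ _)))
    linarith
  -- S10 : conclusion
  constructor
  · intro hc
    obtain ⟨T, hT, hFT⟩ := hlarge c
    have hcont : ContinuousOn F (Set.Icc ttil T) := fun u hu =>
      (hasDeriv_F u (lt_of_lt_of_le httil hu.1)).continuousAt.continuousWithinAt
    obtain ⟨t₁, ht₁mem, ht₁⟩ := intermediate_value_Icc' hT.le hcont
      (⟨hFT.le, le_trans hc hFttil.le⟩ : c ∈ Set.Icc (F T) (F ttil))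
    have ht₁pos : 0 < t₁ := lt_of_lt_of_le httil ht₁mem.1
    have ht₁gt : ttil < t₁ := by
      rcases eq_or_lt_of_le ht₁mem.1 with he | hlt
      · exfalso; rw [← he] at ht₁; linarith
      · exact hlt
    have huniq : ∀ t : ℝ, 0 < t → F t = c → t = t₁ := by
      intro t ht hFt
      have htgt : ttil < t := by
        by_contra hcon
        push_neg at hcon
        have := hFpos t ht hcon
        linarith
      exact hanti.injOn (mem_Ici.2 htgt.le) (mem_Ici.2 ht₁gt.le) (hFt.trans ht₁.symm)
    refine ⟨⟨t₁, ⟨ht₁pos, ht₁⟩, fun y hy => huniq y hy.1 hy.2⟩, fun t ht hFt => ?_⟩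
    by_contra hcon
    push_neg at hcon
    have := hFpos t ht hcon
    linarith
  · intro hc hclt
    obtain ⟨ε, hεpos, hεlt, hFε⟩ := hsmall c hc
    have hcont1 : ContinuousOn F (Set.Icc ε ttil) := fun u hu =>
      (hasDeriv_F u (lt_of_lt_of_le hεpos hu.1)).continuousAt.continuousWithinAt
    obtain ⟨t₁, ht₁mem, ht₁⟩ := intermediate_value_Icc hεlt.le hcont1
      (⟨hFε.le, hclt.le⟩ : c ∈ Set.Icc (F ε) (F ttil))
    obtain ⟨T, hT, hFT⟩ := hlarge c
    have hcont2 : ContinuousOn F (Set.Icc ttil T) := fun u hu =>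
      (hasDeriv_F u (lt_of_lt_of_le httil hu.1)).continuousAt.continuousWithinAt
    obtain ⟨t₂, ht₂mem, ht₂⟩ := intermediate_value_Icc' hT.le hcont2
      (⟨hFT.le, hclt.le⟩ : c ∈ Set.Icc (F T) (F ttil))
    have ht₁pos : 0 < t₁ := lt_of_lt_of_le hεpos ht₁mem.1
    have ht₁lt : t₁ < ttil := by
      rcases eq_or_lt_of_le ht₁mem.2 with he | hlt
      · exfalso; rw [he] at ht₁; linarith
      · exact hlt
    have ht₂gt : ttil < t₂ := by
      rcases eq_or_lt_of_le ht₂mem.1 with he | hlt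
      · exfalso; rw [← he] at ht₂; linarith
      · exact hlt
    refine ⟨t₁, t₂, ht₁pos, ht₁lt, ht₂gt, ht₁, ht₂, ?_⟩
    intro t ht hFt
    rcases lt_trichotomy t ttil with hlt | heq | hgt
    · left
      exact hmono.injOn (⟨ht, hlt.le⟩ : t ∈ Set.Ioc 0 ttil)
        (⟨ht₁pos, ht₁lt.le⟩ : t₁ ∈ Set.Ioc 0 ttil) (hFt.trans ht₁.symm)
    · exfalso; rw [heq] at hFt; linarith
    · right
      exact hanti.injOn (mem_Ici.2 hgt.le) (mem_Ici.2 ht₂gt.le) (hFt.trans ht₂.symm)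
end

section
/- For every t > 0 the integrals ∫_Ω φ(t h) h² dμ and ∫_Ω φ′(t h) h³ dμ are absolutely convergent, and the function η(t) = t^{2−ℓ*}·∫_Ω φ(t h) h² dμ + t^{3−ℓ*}·∫_Ω φ′(t h) h³ dμ is strictly decreasing on (0,∞), with η(t) → +∞ as t → 0⁺ and η(t) → 0 as t → ∞. -/
open Filter Set MeasureTheory

set_option maxHeartbeats 2000000 in
/-- for every `t > 0` the integrals `∫_Ω φ(t h) h² dμ` and `∫_Ω φ′(t h) h³ dμ`
are absolutely convergent, and
`η(t) = t^{2−ℓ*}·∫_Ω φ(t h) h² dμ + t^{3−ℓ*}·∫_Ω φ′(t h) h³ dμ` is strictly decreasing on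
`(0,∞)`, with `η(t) → +∞` as `t → 0⁺` and `η(t) → 0` as `t → ∞`. -/
theorem stmt_11 (φ : ℝ → ℝ) (ℓ m : ℝ)
    (hφ_pos : ∀ t > 0, 0 < φ t)
    (hφ_C2 : ContDiffOn ℝ 2 φ (Set.Ioi 0))
    (hℓ : 1 < ℓ) (hℓm : ℓ ≤ m)
    (hφ1₀ : Tendsto (fun t => t * φ t) (nhdsWithin 0 (Set.Ioi 0)) (nhds 0))
    (hφ1top : Tendsto (fun t => t * φ t) atTop atTop)
    (hφ2 : StrictMonoOn (fun t => t * φ t) (Set.Ioi 0))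
    (hφ3 : ∀ t > 0,
      (ℓ - 2) * deriv (fun s => s * φ s) t ≤ t * deriv (deriv (fun s => s * φ s)) t ∧
      t * deriv (deriv (fun s => s * φ s)) t ≤ (m - 2) * deriv (fun s => s * φ s) t)
    (lstar : ℝ) (hlstar : m < lstar)
    {Ω : Type*} [MeasurableSpace Ω] (μ : Measure Ω) (h : Ω → ℝ)
    (h_meas : Measurable h) (h_nonneg : ∀ x, 0 ≤ h x)
    (h_int : Integrable (fun x => if h x = 0 then 0 else φ (h x) * h x ^ 2) μ)
    (h_pos : 0 < ∫ x, (if h x = 0 then 0 else φ (h x) * h x ^ 2) ∂μ)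
    (η : ℝ → ℝ)
    (hη : ∀ t, η t =
      t ^ ((2:ℝ) - lstar) * (∫ x, (if h x = 0 then 0 else φ (t * h x) * h x ^ 2) ∂μ) +
      t ^ ((3:ℝ) - lstar) * (∫ x, (if h x = 0 then 0 else deriv φ (t * h x) * h x ^ 3) ∂μ)) :
    (∀ t > 0,
      Integrable (fun x => if h x = 0 then 0 else φ (t * h x) * h x ^ 2) μ ∧
      Integrable (fun x => if h x = 0 then 0 else deriv φ (t * h x) * h x ^ 3) μ) ∧
    StrictAntiOn η (Set.Ioi 0) ∧
    Tendsto η (nhdsWithin 0 (Set.Ioi 0)) atTop ∧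
    Tendsto η atTop (nhds 0) := by
  set g : ℝ → ℝ := fun s => s * φ s with hg_def
  -- basic smoothness
  have hφd : ∀ t ∈ Ioi (0:ℝ), HasDerivAt φ (deriv φ t) t := fun t ht =>
    ((hφ_C2.contDiffAt (isOpen_Ioi.mem_nhds ht)).differentiableAt (by norm_num)).hasDerivAt
  have hgC2 : ContDiffOn ℝ 2 g (Ioi 0) := contDiffOn_id.mul hφ_C2
  have hg'at : ∀ t ∈ Ioi (0:ℝ), HasDerivAt g (deriv g t) t := fun t ht =>
    ((hgC2.contDiffAt (isOpen_Ioi.mem_nhds ht)).differentiableAt (by norm_num)).hasDerivAt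
  have hgderiv : ∀ t ∈ Ioi (0:ℝ), deriv g t = φ t + t * deriv φ t := by
    intro t ht
    have h1 : HasDerivAt g (1 * φ t + t * deriv φ t) t := (hasDerivAt_id t).mul (hφd t ht)
    rw [h1.deriv]; ring
  have hgC1' : ContDiffOn ℝ 1 (deriv g) (Ioi 0) :=
    hgC2.deriv_of_isOpen isOpen_Ioi (by norm_num)
  have hg''at : ∀ t ∈ Ioi (0:ℝ), HasDerivAt (deriv g) (deriv (deriv g) t) t := fun t ht =>
    ((hgC1'.contDiffAt (isOpen_Ioi.mem_nhds ht)).differentiableAt (by norm_num)).hasDerivAt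
  have hg'cont : ContinuousOn (deriv g) (Ioi 0) := hgC1'.continuousOn
  have hgpos : ∀ t ∈ Ioi (0:ℝ), 0 < g t := fun t ht => mul_pos ht (hφ_pos t ht)
  -- g' ≥ 0
  have hg'nonneg : ∀ t ∈ Ioi (0:ℝ), 0 ≤ deriv g t := by
    intro t ht
    have hd : HasDerivWithinAt g (deriv g t) (Ioi t) t := (hg'at t ht).hasDerivWithinAt
    rw [hasDerivWithinAt_iff_tendsto_slope' (by simp : t ∉ Ioi t)] at hd
    refine ge_of_tendsto hd ?_
    filter_upwards [self_mem_nhdsWithin] with s hs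
    have hs' : t < s := hs
    have hgs : g t ≤ g s := (hφ2 ht (lt_trans ht hs') hs').le
    rw [slope_def_field]
    have : (0:ℝ) < s - t := by linarith
    exact div_nonneg (by linarith) this.le
  -- A monotone, B antitone
  have hrpow_cont : ∀ c : ℝ, ContinuousOn (fun t : ℝ => t ^ c) (Ioi 0) := fun c t ht =>
    (Real.continuousAt_rpow_const t c (Or.inl (ne_of_gt ht))).continuousWithinAt
  have hABderiv : ∀ c : ℝ, ∀ t ∈ Ioi (0:ℝ),
      HasDerivAt (fun t => deriv g t * t ^ c)
        (deriv (deriv g) t * t ^ c + deriv g t * (c * t ^ (c - 1))) t := fun c t ht =>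
    (hg''at t ht).mul (Real.hasDerivAt_rpow_const (Or.inl (ne_of_gt ht)))
  have hsplit : ∀ c : ℝ, ∀ t : ℝ, 0 < t →
      deriv (deriv g) t * t ^ c + deriv g t * (c * t ^ (c - 1))
        = (t * deriv (deriv g) t + c * deriv g t) * t ^ (c - 1) := by
    intro c t ht
    have h1 : t ^ c = t * t ^ (c - 1) := by
      rw [show c = 1 + (c - 1) by ring, Real.rpow_add ht, Real.rpow_one]; ring_nf
    rw [h1]; ring
  have hAmono : MonotoneOn (fun t => deriv g t * t ^ ((2:ℝ) - ℓ)) (Ioi 0) := by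
    apply monotoneOn_of_deriv_nonneg (convex_Ioi 0) (hg'cont.mul (hrpow_cont _))
    · rw [interior_Ioi]
      exact fun t ht => (hABderiv _ t ht).differentiableAt.differentiableWithinAt
    · rw [interior_Ioi]
      intro t ht
      change 0 ≤ deriv (fun t => deriv g t * t ^ ((2:ℝ) - ℓ)) t
      rw [(hABderiv _ t ht).deriv, hsplit _ t ht]
      have h2 := (hφ3 t ht).1
      have h3 : (0:ℝ) < t ^ ((2:ℝ) - ℓ - 1) := Real.rpow_pos_of_pos ht _
      have h4 : 0 ≤ t * deriv (deriv g) t + ((2:ℝ) - ℓ) * deriv g t := by linarith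
      positivity
  have hBanti : AntitoneOn (fun t => deriv g t * t ^ ((2:ℝ) - m)) (Ioi 0) := by
    apply antitoneOn_of_deriv_nonpos (convex_Ioi 0) (hg'cont.mul (hrpow_cont _))
    · rw [interior_Ioi]
      exact fun t ht => (hABderiv _ t ht).differentiableAt.differentiableWithinAt
    · rw [interior_Ioi]
      intro t ht
      change deriv (fun t => deriv g t * t ^ ((2:ℝ) - m)) t ≤ 0
      rw [(hABderiv _ t ht).deriv, hsplit _ t ht]
      have h2 := (hφ3 t ht).2
      have h3 : (0:ℝ) < t ^ ((2:ℝ) - m - 1) := Real.rpow_pos_of_pos ht _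
      have h4 : t * deriv (deriv g) t + ((2:ℝ) - m) * deriv g t ≤ 0 := by linarith
      exact mul_nonpos_of_nonpos_of_nonneg h4 h3.le
  -- u ≥ 0 : (ℓ-1) g ≤ t g'
  have hu_mono : MonotoneOn (fun t => t * deriv g t - (ℓ - 1) * g t) (Ioi 0) := by
    apply monotoneOn_of_deriv_nonneg (convex_Ioi 0)
    · exact (continuousOn_id.mul hg'cont).sub (continuousOn_const.mul hgC2.continuousOn)
    · rw [interior_Ioi]
      intro t ht
      exact (((hasDerivAt_id t).mul (hg''at t ht)).sub
        ((hg'at t ht).const_mul (ℓ - 1))).differentiableAt.differentiableWithinAt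
    · rw [interior_Ioi]
      intro t ht
      have hD : HasDerivAt (fun t => t * deriv g t - (ℓ - 1) * g t)
          (1 * deriv g t + t * deriv (deriv g) t - (ℓ - 1) * deriv g t) t :=
        ((hasDerivAt_id t).mul (hg''at t ht)).sub ((hg'at t ht).const_mul (ℓ - 1))
      rw [hD.deriv]
      have h2 := (hφ3 t ht).1
      linarith
  have hu_nonneg : ∀ t ∈ Ioi (0:ℝ), (ℓ - 1) * g t ≤ t * deriv g t := by
    intro t ht
    have hlim : Tendsto (fun s => -((ℓ - 1) * g s)) (nhdsWithin 0 (Ioi 0)) (nhds 0) := by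
      have := (hφ1₀.const_mul (ℓ - 1)).neg
      simpa using this
    have hle : ∀ᶠ s in nhdsWithin 0 (Ioi 0),
        -((ℓ - 1) * g s) ≤ t * deriv g t - (ℓ - 1) * g t := by
      filter_upwards [Ioo_mem_nhdsGT_of_mem ⟨le_refl (0:ℝ), ht⟩] with s hs
      have h1 := hu_mono hs.1 ht hs.2.le
      have h2 : 0 ≤ s * deriv g s := mul_nonneg hs.1.le (hg'nonneg s hs.1)
      dsimp at h1 ⊢
      linarith
    have := le_of_tendsto hlim hle
    linarith
  have hg'pos : ∀ t ∈ Ioi (0:ℝ), 0 < deriv g t := by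
    intro t ht
    have h1 := hu_nonneg t ht
    have h2 : 0 < (ℓ - 1) * g t := mul_pos (by linarith) (hgpos t ht)
    have h3 : 0 < t * deriv g t := lt_of_lt_of_le h2 h1
    rcases mul_pos_iff.mp h3 with h4 | h4
    · exact h4.2
    · exact absurd h4.1 (not_lt.mpr ht.le)
  -- s * g' s → 0 at 0⁺
  have hsg'0 : Tendsto (fun s => s * deriv g s) (nhdsWithin 0 (Ioi 0)) (nhds 0) := by
    have hupper : ∀ s ∈ Ioc (0:ℝ) 1, s * deriv g s ≤ deriv g 1 * s ^ (ℓ - 1) := by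
      intro s hs
      have h1 := hAmono hs.1 (mem_Ioi.mpr one_pos) hs.2
      dsimp at h1
      rw [Real.one_rpow, mul_one] at h1
      have h2 : s * deriv g s = (deriv g s * s ^ ((2:ℝ) - ℓ)) * s ^ (ℓ - 1) := by
        rw [mul_assoc, ← Real.rpow_add hs.1]
        norm_num [Real.rpow_one, mul_comm]
      rw [h2]
      exact mul_le_mul_of_nonneg_right h1 (Real.rpow_pos_of_pos hs.1 _).le
    have htend : Tendsto (fun s : ℝ => deriv g 1 * s ^ (ℓ - 1)) (nhdsWithin 0 (Ioi 0)) (nhds 0) := by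
      have h1 : Tendsto (fun s : ℝ => s ^ (ℓ - 1)) (nhds 0) (nhds ((0:ℝ) ^ (ℓ - 1))) :=
        (Real.continuousAt_rpow_const 0 (ℓ - 1) (Or.inr (by linarith))).tendsto
      rw [Real.zero_rpow (by intro hc; rw [sub_eq_zero] at hc; linarith)] at h1
      have h2 := (h1.mono_left (nhdsWithin_le_nhds (s := Ioi (0:ℝ)))).const_mul (deriv g 1)
      rw [mul_zero] at h2
      exact h2
    refine tendsto_of_tendsto_of_tendsto_of_le_of_le' tendsto_const_nhds htend ?_ ?_
    · filter_upwards [self_mem_nhdsWithin] with s hs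
      exact mul_nonneg (le_of_lt hs) (hg'nonneg s hs)
    · filter_upwards [Ioc_mem_nhdsGT_of_mem ⟨le_refl (0:ℝ), one_pos⟩] with s hs
      exact hupper s hs
  -- v ≥ 0 : t g' ≤ (m-1) g
  have hv_mono : MonotoneOn (fun t => (m - 1) * g t - t * deriv g t) (Ioi 0) := by
    apply monotoneOn_of_deriv_nonneg (convex_Ioi 0)
    · exact (continuousOn_const.mul hgC2.continuousOn).sub (continuousOn_id.mul hg'cont)
    · rw [interior_Ioi]
      intro t ht
      exact (((hg'at t ht).const_mul (m - 1)).sub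
        ((hasDerivAt_id t).mul (hg''at t ht))).differentiableAt.differentiableWithinAt
    · rw [interior_Ioi]
      intro t ht
      have hD : HasDerivAt (fun t => (m - 1) * g t - t * deriv g t)
          ((m - 1) * deriv g t - (1 * deriv g t + t * deriv (deriv g) t)) t :=
        ((hg'at t ht).const_mul (m - 1)).sub ((hasDerivAt_id t).mul (hg''at t ht))
      rw [hD.deriv]
      have h2 := (hφ3 t ht).2
      linarith
  have hv_nonneg : ∀ t ∈ Ioi (0:ℝ), t * deriv g t ≤ (m - 1) * g t := by
    intro t ht
    have hlim : Tendsto (fun s => (m - 1) * g s - s * deriv g s) (nhdsWithin 0 (Ioi 0)) (nhds 0) := by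
      have := (hφ1₀.const_mul (m - 1)).sub hsg'0
      simpa using this
    have hle : ∀ᶠ s in nhdsWithin 0 (Ioi 0),
        (m - 1) * g s - s * deriv g s ≤ (m - 1) * g t - t * deriv g t := by
      filter_upwards [Ioo_mem_nhdsGT_of_mem ⟨le_refl (0:ℝ), ht⟩] with s hs
      exact hv_mono hs.1 ht hs.2.le
    have := le_of_tendsto hlim hle
    linarith
  -- the two-point comparison lemmas
  have L9m : ∀ a b : ℝ, 0 < a → a ≤ b → deriv g b ≤ deriv g a * (b / a) ^ (m - 2) := by
    intro a b ha hab
    have hb : 0 < b := lt_of_lt_of_le ha hab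
    have hB := hBanti (mem_Ioi.mpr ha) (mem_Ioi.mpr hb) hab
    dsimp at hB
    have hid : deriv g b * b ^ ((2:ℝ) - m) * b ^ (m - 2) = deriv g b := by
      rw [mul_assoc, ← Real.rpow_add hb]
      norm_num
    have h2 : deriv g a * a ^ ((2:ℝ) - m) * b ^ (m - 2) = deriv g a * (b / a) ^ (m - 2) := by
      rw [Real.div_rpow hb.le ha.le, show (2:ℝ) - m = -(m - 2) by ring, Real.rpow_neg ha.le]
      field_simp
    calc deriv g b = deriv g b * b ^ ((2:ℝ) - m) * b ^ (m - 2) := hid.symm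
      _ ≤ deriv g a * a ^ ((2:ℝ) - m) * b ^ (m - 2) :=
          mul_le_mul_of_nonneg_right hB (Real.rpow_pos_of_pos hb _).le
      _ = _ := h2
  have L9l : ∀ a b : ℝ, 0 < a → a ≤ b → deriv g a * (b / a) ^ (ℓ - 2) ≤ deriv g b := by
    intro a b ha hab
    have hb : 0 < b := lt_of_lt_of_le ha hab
    have hA := hAmono (mem_Ioi.mpr ha) (mem_Ioi.mpr hb) hab
    dsimp at hA
    have hid : deriv g b * b ^ ((2:ℝ) - ℓ) * b ^ (ℓ - 2) = deriv g b := by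
      rw [mul_assoc, ← Real.rpow_add hb]
      norm_num
    have h2 : deriv g a * a ^ ((2:ℝ) - ℓ) * b ^ (ℓ - 2) = deriv g a * (b / a) ^ (ℓ - 2) := by
      rw [Real.div_rpow hb.le ha.le, show (2:ℝ) - ℓ = -(ℓ - 2) by ring, Real.rpow_neg ha.le]
      field_simp
    calc deriv g a * (b / a) ^ (ℓ - 2) = deriv g a * a ^ ((2:ℝ) - ℓ) * b ^ (ℓ - 2) := h2.symm
      _ ≤ deriv g b * b ^ ((2:ℝ) - ℓ) * b ^ (ℓ - 2) :=
          mul_le_mul_of_nonneg_right hA (Real.rpow_pos_of_pos hb _).le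
      _ = deriv g b := hid

  -- measure-theoretic part
  have hx_pos : ∀ x : Ω, h x ≠ 0 → 0 < h x := fun x hx => lt_of_le_of_ne (h_nonneg x) (Ne.symm hx)
  set F : ℝ → Ω → ℝ := fun t x => if h x = 0 then 0 else deriv g (t * h x) * h x ^ 2 with hF_def
  have hF_meas : ∀ t : ℝ, AEStronglyMeasurable (F t) μ := by
    intro t
    have : Measurable (F t) := by
      rw [hF_def]
      apply Measurable.ite (measurableSet_eq_fun h_meas measurable_const) measurable_const
      exact ((measurable_deriv g).comp (measurable_const.mul h_meas)).mul (h_meas.pow_const 2)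
    exact this.aestronglyMeasurable
  have hF_nonneg : ∀ t : ℝ, 0 < t → ∀ x, 0 ≤ F t x := by
    intro t ht x
    simp only [hF_def]
    by_cases hx : h x = 0
    · simp [hx]
    · rw [if_neg hx]
      exact mul_nonneg (hg'pos _ (mem_Ioi.mpr (mul_pos ht (hx_pos x hx)))).le
        (pow_nonneg (h_nonneg x) 2)
  have hF1_int : Integrable (F 1) μ := by
    refine Integrable.mono' (h_int.const_mul (m - 1)) (hF_meas 1) ?_
    filter_upwards with x
    rw [Real.norm_eq_abs, abs_of_nonneg (hF_nonneg 1 one_pos x)]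
    by_cases hx : h x = 0
    · simp [hF_def, hx]
    · have hxp := hx_pos x hx
      simp only [hF_def, if_neg hx, one_mul]
      have hv := hv_nonneg (h x) (mem_Ioi.mpr hxp)
      have hg_eq : g (h x) = h x * φ (h x) := rfl
      rw [hg_eq] at hv
      nlinarith [mul_le_mul_of_nonneg_left hv (h_nonneg x)]
  have hFt_le : ∀ t : ℝ, 0 < t → ∀ x, F t x ≤ max (t ^ (m - 2)) (t ^ (ℓ - 2)) * F 1 x := by
    intro t ht x
    by_cases hx : h x = 0
    · simp [hF_def, hx]
    · have hxp := hx_pos x hx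
      simp only [hF_def, if_neg hx, one_mul]
      have h2 : (0:ℝ) ≤ h x ^ 2 := pow_nonneg (h_nonneg x) 2
      have hd1 : 0 ≤ deriv g (h x) := (hg'pos _ (mem_Ioi.mpr hxp)).le
      have key : deriv g (t * h x) ≤ max (t ^ (m - 2)) (t ^ (ℓ - 2)) * deriv g (h x) := by
        rcases le_or_gt 1 t with h1t | h1t
        · have hle := L9m (h x) (t * h x) hxp (le_mul_of_one_le_left (h_nonneg x) h1t)
          have hdiv : t * h x / h x = t := by field_simp
          rw [hdiv] at hle
          calc deriv g (t * h x) ≤ deriv g (h x) * t ^ (m - 2) := hle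
            _ ≤ max (t ^ (m - 2)) (t ^ (ℓ - 2)) * deriv g (h x) := by
                rw [mul_comm]
                exact mul_le_mul_of_nonneg_right (le_max_left _ _) hd1
        · have hle := L9l (t * h x) (h x) (mul_pos ht hxp)
            (mul_le_of_le_one_left (h_nonneg x) h1t.le)
          have hdiv : h x / (t * h x) = t⁻¹ := by
            rw [div_mul_eq_div_div_swap, div_self hx, one_div]
          rw [hdiv, Real.inv_rpow ht.le] at hle
          have hp : (0:ℝ) < t ^ (ℓ - 2) := Real.rpow_pos_of_pos ht _
          have hle2 : deriv g (t * h x) ≤ deriv g (h x) * t ^ (ℓ - 2) := by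
            have h3 := mul_le_mul_of_nonneg_right hle hp.le
            rw [mul_assoc, inv_mul_cancel₀ (ne_of_gt hp), mul_one] at h3
            exact h3
          calc deriv g (t * h x) ≤ deriv g (h x) * t ^ (ℓ - 2) := hle2
            _ ≤ max (t ^ (m - 2)) (t ^ (ℓ - 2)) * deriv g (h x) := by
                rw [mul_comm]
                exact mul_le_mul_of_nonneg_right (le_max_right _ _) hd1
      calc deriv g (t * h x) * h x ^ 2
          ≤ (max (t ^ (m - 2)) (t ^ (ℓ - 2)) * deriv g (h x)) * h x ^ 2 :=
            mul_le_mul_of_nonneg_right key h2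
        _ = max (t ^ (m - 2)) (t ^ (ℓ - 2)) * (deriv g (h x) * h x ^ 2) := by ring
  have hFt_int : ∀ t : ℝ, 0 < t → Integrable (F t) μ := by
    intro t ht
    refine Integrable.mono' (hF1_int.const_mul (max (t ^ (m - 2)) (t ^ (ℓ - 2)))) (hF_meas t) ?_
    filter_upwards with x
    rw [Real.norm_eq_abs, abs_of_nonneg (hF_nonneg t ht x)]
    exact hFt_le t ht x
  have hφ_le_g' : ∀ s : ℝ, 0 < s → (ℓ - 1) * φ s ≤ deriv g s := by
    intro s hs
    have h1 := hu_nonneg s (mem_Ioi.mpr hs)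
    have h2 : g s = s * φ s := rfl
    rw [h2] at h1
    have h3 : s * ((ℓ - 1) * φ s) ≤ s * deriv g s := by
      calc s * ((ℓ - 1) * φ s) = (ℓ - 1) * (s * φ s) := by ring
        _ ≤ s * deriv g s := h1
    exact le_of_mul_le_mul_left h3 hs
  have hP_meas : ∀ t : ℝ, 0 < t →
      AEStronglyMeasurable (fun x => if h x = 0 then 0 else φ (t * h x) * h x ^ 2) μ := by
    intro t ht
    have heq : (fun x => if h x = 0 then 0 else φ (t * h x) * h x ^ 2)
        = fun x => if h x = 0 then 0
            else (deriv g (t * h x) - t * h x * deriv φ (t * h x)) * h x ^ 2 := by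
      funext x
      by_cases hx : h x = 0
      · simp [hx]
      · rw [if_neg hx, if_neg hx,
          hgderiv (t * h x) (mem_Ioi.mpr (mul_pos ht (hx_pos x hx)))]
        ring
    rw [heq]
    refine Measurable.aestronglyMeasurable ?_
    apply Measurable.ite (measurableSet_eq_fun h_meas measurable_const) measurable_const
    exact (((measurable_deriv g).comp (measurable_const.mul h_meas)).sub
      ((measurable_const.mul h_meas).mul
        ((measurable_deriv φ).comp (measurable_const.mul h_meas)))).mul (h_meas.pow_const 2)
  have hP_int : ∀ t : ℝ, 0 < t →
      Integrable (fun x => if h x = 0 then 0 else φ (t * h x) * h x ^ 2) μ := by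
    intro t ht
    refine Integrable.mono' ((hFt_int t ht).const_mul (ℓ - 1)⁻¹) (hP_meas t ht) ?_
    filter_upwards with x
    by_cases hx : h x = 0
    · simp [hx, hF_def]
    · have hxp := hx_pos x hx
      have hs : 0 < t * h x := mul_pos ht hxp
      rw [Real.norm_eq_abs, if_neg hx,
        abs_of_nonneg (mul_nonneg (hφ_pos _ hs).le (pow_nonneg (h_nonneg x) 2))]
      simp only [hF_def, if_neg hx]
      have h1 := hφ_le_g' (t * h x) hs
      have h2 : (0:ℝ) ≤ h x ^ 2 := pow_nonneg (h_nonneg x) 2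
      have h3 : (0:ℝ) < ℓ - 1 := by linarith
      rw [← sub_nonneg]
      have heq2 : (ℓ - 1)⁻¹ * (deriv g (t * h x) * h x ^ 2) - φ (t * h x) * h x ^ 2
          = ((deriv g (t * h x) - (ℓ - 1) * φ (t * h x)) * h x ^ 2) * (ℓ - 1)⁻¹ := by
        field_simp
      rw [heq2]
      exact mul_nonneg (mul_nonneg (by linarith) h2) (inv_nonneg.mpr h3.le)
  have hQ_int : ∀ t : ℝ, 0 < t →
      Integrable (fun x => if h x = 0 then 0 else deriv φ (t * h x) * h x ^ 3) μ := by
    intro t ht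
    have hmeas : AEStronglyMeasurable
        (fun x => if h x = 0 then 0 else deriv φ (t * h x) * h x ^ 3) μ := by
      refine Measurable.aestronglyMeasurable ?_
      apply Measurable.ite (measurableSet_eq_fun h_meas measurable_const) measurable_const
      exact ((measurable_deriv φ).comp (measurable_const.mul h_meas)).mul (h_meas.pow_const 3)
    refine Integrable.mono' ((hFt_int t ht).const_mul ((1 + (ℓ - 1)⁻¹) / t)) hmeas ?_
    filter_upwards with x
    by_cases hx : h x = 0
    · simp [hx, hF_def]
    · have hxp := hx_pos x hx
      have hs : 0 < t * h x := mul_pos ht hxp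
      have hd := hgderiv (t * h x) (mem_Ioi.mpr hs)
      have hφ' : deriv φ (t * h x) = (deriv g (t * h x) - φ (t * h x)) / (t * h x) := by
        rw [hd]
        field_simp
        ring
      rw [Real.norm_eq_abs, if_neg hx, hφ']
      simp only [hF_def, if_neg hx]
      have hP := hφ_pos _ hs
      have hD := hg'pos _ (mem_Ioi.mpr hs)
      have h3 : (0:ℝ) < ℓ - 1 := by linarith
      have hPle : (ℓ - 1) * φ (t * h x) ≤ deriv g (t * h x) := hφ_le_g' _ hs
      have hinv : (ℓ - 1)⁻¹ * (ℓ - 1) = 1 := inv_mul_cancel₀ (ne_of_gt h3)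
      have h1 : |deriv g (t * h x) - φ (t * h x)| ≤ (1 + (ℓ - 1)⁻¹) * deriv g (t * h x) := by
        have hc : (0:ℝ) ≤ (ℓ - 1)⁻¹ := inv_nonneg.mpr h3.le
        rw [abs_le]
        constructor
        · nlinarith [mul_le_mul_of_nonneg_left hPle hc]
        · nlinarith [mul_le_mul_of_nonneg_left hPle hc]
      have habs : |(deriv g (t * h x) - φ (t * h x)) / (t * h x) * h x ^ 3|
          = |deriv g (t * h x) - φ (t * h x)| * h x ^ 3 / (t * h x) := by
        rw [abs_mul, abs_div, abs_of_pos hs, abs_of_nonneg (pow_nonneg (h_nonneg x) 3)]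
        ring
      rw [habs]
      have h5 : |deriv g (t * h x) - φ (t * h x)| * h x ^ 3 / (t * h x)
          ≤ ((1 + (ℓ - 1)⁻¹) * deriv g (t * h x)) * h x ^ 3 / (t * h x) := by
        gcongr
      refine h5.trans (le_of_eq ?_)
      field_simp

  -- η in terms of F
  have hFt_eq : ∀ t : ℝ, 0 < t → ∀ x : Ω,
      (if h x = 0 then 0 else φ (t * h x) * h x ^ 2)
        + t * (if h x = 0 then 0 else deriv φ (t * h x) * h x ^ 3) = F t x := by
    intro t ht x
    by_cases hx : h x = 0
    · simp [hF_def, hx]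
    · have hs : 0 < t * h x := mul_pos ht (hx_pos x hx)
      simp only [hF_def, if_neg hx]
      rw [hgderiv (t * h x) (mem_Ioi.mpr hs)]
      ring
  have hη' : ∀ t : ℝ, 0 < t → η t = t ^ ((2:ℝ) - lstar) * ∫ x, F t x ∂μ := by
    intro t ht
    rw [hη t]
    have h3 : t ^ ((3:ℝ) - lstar) = t ^ ((2:ℝ) - lstar) * t := by
      rw [show (3:ℝ) - lstar = ((2:ℝ) - lstar) + 1 by ring, Real.rpow_add ht, Real.rpow_one]
    rw [h3, mul_assoc, ← mul_add]
    congr 1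
    rw [← integral_const_mul, ← integral_add (hP_int t ht) ((hQ_int t ht).const_mul t)]
    exact integral_congr_ae (Eventually.of_forall (hFt_eq t ht))
  have hμpos : 0 < μ {x | h x ≠ 0} := by
    rw [pos_iff_ne_zero]
    intro h0
    have hae : ∀ᵐ x ∂μ, h x = 0 := by
      rw [ae_iff]
      simpa using h0
    have hz : (fun x => if h x = 0 then 0 else φ (h x) * h x ^ 2) =ᵐ[μ] (fun _ => (0:ℝ)) := by
      filter_upwards [hae] with x hx
      simp [hx]
    rw [integral_congr_ae hz, integral_zero] at h_pos
    exact lt_irrefl 0 h_pos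
  have hintF_pos : ∀ t : ℝ, 0 < t → 0 < ∫ x, F t x ∂μ := by
    intro t ht
    rw [integral_pos_iff_support_of_nonneg (hF_nonneg t ht) (hFt_int t ht)]
    have hsupp : Function.support (F t) = {x | h x ≠ 0} := by
      ext x
      simp only [Function.mem_support, hF_def, mem_setOf_eq]
      by_cases hx : h x = 0
      · simp [hx]
      · simp only [if_neg hx]
        constructor
        · intro _; exact hx
        · intro _
          exact ne_of_gt (mul_pos (hg'pos _ (mem_Ioi.mpr (mul_pos ht (hx_pos x hx))))
            (pow_pos (hx_pos x hx) 2))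
    rw [hsupp]
    exact hμpos
  -- strict antitonicity
  have hstrict : StrictAntiOn η (Ioi 0) := by
    intro s hs t ht hst
    rw [mem_Ioi] at hs ht
    have hcs : (0:ℝ) < s ^ ((2:ℝ) - lstar) := Real.rpow_pos_of_pos hs _
    have hratio : (1:ℝ) < t / s := (one_lt_div hs).mpr hst
    have hts0 : (0:ℝ) < t / s := by positivity
    have hfac : (t / s) ^ (m - lstar) < 1 :=
      Real.rpow_lt_one_of_one_lt_of_neg hratio (by linarith)
    have hkey : t ^ ((2:ℝ) - lstar) * (t / s) ^ (m - 2) < s ^ ((2:ℝ) - lstar) := by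
      have hts : s * (t / s) = t := by field_simp
      have ht2 : s ^ ((2:ℝ) - lstar) * (t / s) ^ ((2:ℝ) - lstar) = t ^ ((2:ℝ) - lstar) := by
        rw [← Real.mul_rpow hs.le hts0.le, hts]
      have hcomb : (t / s) ^ ((2:ℝ) - lstar) * (t / s) ^ (m - 2) = (t / s) ^ (m - lstar) := by
        rw [← Real.rpow_add hts0, show (2:ℝ) - lstar + (m - 2) = m - lstar by ring]
      calc t ^ ((2:ℝ) - lstar) * (t / s) ^ (m - 2)
          = s ^ ((2:ℝ) - lstar) * ((t / s) ^ ((2:ℝ) - lstar) * (t / s) ^ (m - 2)) := by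
            rw [← ht2]; ring
        _ = s ^ ((2:ℝ) - lstar) * (t / s) ^ (m - lstar) := by rw [hcomb]
        _ < s ^ ((2:ℝ) - lstar) * 1 := mul_lt_mul_of_pos_left hfac hcs
        _ = s ^ ((2:ℝ) - lstar) := mul_one _
    have hptlt : ∀ x : Ω, h x ≠ 0 →
        t ^ ((2:ℝ) - lstar) * F t x < s ^ ((2:ℝ) - lstar) * F s x := by
      intro x hx
      have hxp := hx_pos x hx
      simp only [hF_def, if_neg hx]
      have hle := L9m (s * h x) (t * h x) (mul_pos hs hxp)
        (by nlinarith)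
      have hdiv : t * h x / (s * h x) = t / s := by
        field_simp
      rw [hdiv] at hle
      have hD : 0 < deriv g (s * h x) := hg'pos _ (mem_Ioi.mpr (mul_pos hs hxp))
      have h2 : (0:ℝ) < h x ^ 2 := pow_pos hxp 2
      calc t ^ ((2:ℝ) - lstar) * (deriv g (t * h x) * h x ^ 2)
          ≤ t ^ ((2:ℝ) - lstar) * ((deriv g (s * h x) * (t / s) ^ (m - 2)) * h x ^ 2) :=
            mul_le_mul_of_nonneg_left (mul_le_mul_of_nonneg_right hle h2.le)
              (Real.rpow_pos_of_pos ht _).le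
        _ = (t ^ ((2:ℝ) - lstar) * (t / s) ^ (m - 2)) * (deriv g (s * h x) * h x ^ 2) := by
            ring
        _ < s ^ ((2:ℝ) - lstar) * (deriv g (s * h x) * h x ^ 2) :=
            mul_lt_mul_of_pos_right hkey (mul_pos hD h2)
    have hpt : ∀ x : Ω, t ^ ((2:ℝ) - lstar) * F t x ≤ s ^ ((2:ℝ) - lstar) * F s x := by
      intro x
      by_cases hx : h x = 0
      · simp [hF_def, hx]
      · exact (hptlt x hx).le
    have hdiff_int : Integrable
        (fun x => s ^ ((2:ℝ) - lstar) * F s x - t ^ ((2:ℝ) - lstar) * F t x) μ :=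
      ((hFt_int s hs).const_mul _).sub ((hFt_int t ht).const_mul _)
    have hdiff_pos : 0 < ∫ x,
        (s ^ ((2:ℝ) - lstar) * F s x - t ^ ((2:ℝ) - lstar) * F t x) ∂μ := by
      rw [integral_pos_iff_support_of_nonneg (fun x => sub_nonneg.mpr (hpt x)) hdiff_int]
      refine lt_of_lt_of_le hμpos (measure_mono ?_)
      intro x hx
      rw [mem_setOf_eq] at hx
      rw [Function.mem_support]
      exact ne_of_gt (sub_pos.mpr (hptlt x hx))
    have hsub : ∫ x, (s ^ ((2:ℝ) - lstar) * F s x - t ^ ((2:ℝ) - lstar) * F t x) ∂μ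
        = s ^ ((2:ℝ) - lstar) * ∫ x, F s x ∂μ - t ^ ((2:ℝ) - lstar) * ∫ x, F t x ∂μ := by
      rw [integral_sub ((hFt_int s hs).const_mul _) ((hFt_int t ht).const_mul _),
        integral_const_mul, integral_const_mul]
    rw [hsub] at hdiff_pos
    rw [hη' s hs, hη' t ht]
    linarith
  -- upper bound for t ≥ 1
  have hC := hintF_pos 1 one_pos
  have hup : ∀ t : ℝ, 1 ≤ t → η t ≤ t ^ (m - lstar) * ∫ x, F 1 x ∂μ := by
    intro t h1t
    have ht : (0:ℝ) < t := lt_of_lt_of_le one_pos h1t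
    have hpt : ∀ x : Ω, F t x ≤ t ^ (m - 2) * F 1 x := by
      intro x
      by_cases hx : h x = 0
      · simp [hF_def, hx]
      · have hxp := hx_pos x hx
        simp only [hF_def, if_neg hx, one_mul]
        have hle := L9m (h x) (t * h x) hxp (le_mul_of_one_le_left (h_nonneg x) h1t)
        have hdiv : t * h x / h x = t := by field_simp
        rw [hdiv] at hle
        calc deriv g (t * h x) * h x ^ 2
            ≤ (deriv g (h x) * t ^ (m - 2)) * h x ^ 2 :=
              mul_le_mul_of_nonneg_right hle (pow_nonneg (h_nonneg x) 2)
          _ = t ^ (m - 2) * (deriv g (h x) * h x ^ 2) := by ring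
    have hint := integral_mono (hFt_int t ht) (hF1_int.const_mul (t ^ (m - 2))) hpt
    rw [integral_const_mul] at hint
    rw [hη' t ht]
    calc t ^ ((2:ℝ) - lstar) * ∫ x, F t x ∂μ
        ≤ t ^ ((2:ℝ) - lstar) * (t ^ (m - 2) * ∫ x, F 1 x ∂μ) :=
          mul_le_mul_of_nonneg_left hint (Real.rpow_pos_of_pos ht _).le
      _ = t ^ (m - lstar) * ∫ x, F 1 x ∂μ := by
          rw [← mul_assoc, ← Real.rpow_add ht,
            show (2:ℝ) - lstar + (m - 2) = m - lstar by ring]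
  -- lower bound for 0 < t ≤ 1
  have hlow : ∀ t : ℝ, 0 < t → t ≤ 1 → t ^ (m - lstar) * ∫ x, F 1 x ∂μ ≤ η t := by
    intro t ht h1t
    have hpt : ∀ x : Ω, t ^ (m - 2) * F 1 x ≤ F t x := by
      intro x
      by_cases hx : h x = 0
      · simp [hF_def, hx]
      · have hxp := hx_pos x hx
        simp only [hF_def, if_neg hx, one_mul]
        have hle := L9m (t * h x) (h x) (mul_pos ht hxp)
          (mul_le_of_le_one_left (h_nonneg x) h1t)
        have hdiv : h x / (t * h x) = t⁻¹ := by
          rw [div_mul_eq_div_div_swap, div_self hx, one_div]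
        rw [hdiv, Real.inv_rpow ht.le] at hle
        have hp : (0:ℝ) < t ^ (m - 2) := Real.rpow_pos_of_pos ht _
        have hle2 : t ^ (m - 2) * deriv g (h x) ≤ deriv g (t * h x) := by
          have h3 := mul_le_mul_of_nonneg_left hle hp.le
          rw [mul_comm (t ^ (m - 2)) (deriv g (t * h x) * (t ^ (m - 2))⁻¹), mul_assoc,
            inv_mul_cancel₀ (ne_of_gt hp), mul_one] at h3
          exact h3
        calc t ^ (m - 2) * (deriv g (h x) * h x ^ 2)
            = (t ^ (m - 2) * deriv g (h x)) * h x ^ 2 := by ring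
          _ ≤ deriv g (t * h x) * h x ^ 2 :=
              mul_le_mul_of_nonneg_right hle2 (pow_nonneg (h_nonneg x) 2)
    have hint := integral_mono (hF1_int.const_mul (t ^ (m - 2))) (hFt_int t ht) hpt
    rw [integral_const_mul] at hint
    rw [hη' t ht]
    calc t ^ (m - lstar) * ∫ x, F 1 x ∂μ
        = t ^ ((2:ℝ) - lstar) * (t ^ (m - 2) * ∫ x, F 1 x ∂μ) := by
          rw [← mul_assoc, ← Real.rpow_add ht,
            show (2:ℝ) - lstar + (m - 2) = m - lstar by ring]
      _ ≤ t ^ ((2:ℝ) - lstar) * ∫ x, F t x ∂μ :=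
          mul_le_mul_of_nonneg_left hint (Real.rpow_pos_of_pos ht _).le
  -- limit at infinity
  have htend0 : Tendsto η atTop (nhds 0) := by
    have h2 : Tendsto (fun t : ℝ => t ^ (-(lstar - m))) atTop (nhds 0) :=
      tendsto_rpow_neg_atTop (by linarith)
    have h1 : Tendsto (fun t : ℝ => t ^ (m - lstar) * ∫ x, F 1 x ∂μ) atTop (nhds 0) := by
      have h4 := h2.mul_const (∫ x, F 1 x ∂μ)
      rw [zero_mul] at h4
      exact h4.congr (fun t => by rw [neg_sub])
    refine tendsto_of_tendsto_of_tendsto_of_le_of_le' tendsto_const_nhds h1 ?_ ?_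
    · filter_upwards [eventually_ge_atTop (1:ℝ)] with t h1t
      have ht : (0:ℝ) < t := lt_of_lt_of_le one_pos h1t
      rw [hη' t ht]
      exact mul_nonneg (Real.rpow_pos_of_pos ht _).le (integral_nonneg (hF_nonneg t ht))
    · filter_upwards [eventually_ge_atTop (1:ℝ)] with t h1t
      exact hup t h1t
  -- limit at zero
  have htendtop : Tendsto η (nhdsWithin 0 (Ioi 0)) atTop := by
    have h1 : Tendsto (fun t : ℝ => t ^ (m - lstar)) (nhdsWithin 0 (Ioi 0)) atTop := by
      have h2 : Tendsto (fun t : ℝ => (t⁻¹) ^ (lstar - m)) (nhdsWithin 0 (Ioi 0)) atTop :=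
        (tendsto_rpow_atTop (by linarith)).comp tendsto_inv_nhdsGT_zero
      refine h2.congr' ?_
      filter_upwards [self_mem_nhdsWithin] with t ht
      rw [Real.inv_rpow (le_of_lt ht), ← Real.rpow_neg (le_of_lt ht), neg_sub]
    have h2 := h1.atTop_mul_const hC
    refine tendsto_atTop_mono' _ ?_ h2
    filter_upwards [Ioc_mem_nhdsGT_of_mem ⟨le_refl (0:ℝ), one_pos⟩] with t ht
    exact hlow t ht.1 ht.2
  exact ⟨fun t ht => ⟨hP_int t ht, hQ_int t ht⟩, hstrict, htendtop, htend0⟩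
end
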